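/- arXiv:1904.09888 — 10 statements merged into one kernel-verified Lean document; each statement's English description precedes it below -/
import Mathlib

section
/- In a sequence of independent fair coin flips, the probability that the pattern HTH occurs (as a block of three consecutive flips) strictly before the pattern TTH occurs is 3/8. -/
open MeasureTheory ProbabilityTheory
open scoped ENNReal

/-- The pattern `P` occurs at time `n` (i.e. within the first `n` draws
`x 0, …, x (n-1)`, as the final block of `P.length` consecutive draws). -/
def occursAt {α : Type*} (P : List α) (x : ℕ → α) (n : ℕ) : Prop :=
  P.length ≤ n ∧ ∀ i (h : i < P.length), x (n - P.length + i) = P.get ⟨i, h⟩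

/-- The first time at which the pattern `P` occurs (`∞` if it never occurs). -/
noncomputable def hitTime {α : Type*} (P : List α) (x : ℕ → α) : ℝ≥0∞ :=
  sInf ((fun n : ℕ => (n : ℝ≥0∞)) '' {n | occursAt P x n})

/-- The fair-coin distribution on `Bool` (`true` = heads `H`, `false` = tails `T`). -/
noncomputable def fairCoin : Measure Bool := (PMF.bernoulli (1/2) (by norm_num)).toMeasure

lemma occursAt_three (b0 b1 b2 : Bool) (x : ℕ → Bool) (n : ℕ) :
    occursAt [b0, b1, b2] x n ↔ 3 ≤ n ∧ x (n-3) = b0 ∧ x (n-2) = b1 ∧ x (n-1) = b2 := by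
  constructor
  · rintro ⟨h3, h⟩
    simp only [List.length] at h3 h
    have h0 := h 0 (by norm_num)
    have h1 := h 1 (by norm_num)
    have h2 := h 2 (by norm_num)
    refine ⟨h3, ?_, ?_, ?_⟩
    · simpa using h0
    · rw [show n - 2 = n - 3 + 1 by omega]; simpa using h1
    · rw [show n - 1 = n - 3 + 2 by omega]; simpa using h2
  · rintro ⟨h3, h0, h1, h2⟩
    refine ⟨by simpa using h3, ?_⟩
    intro i hi
    simp only [List.length] at hi
    interval_cases i
    · simpa using h0
    · simp only [List.length]
      rw [show n - 3 + 1 = n - 2 by omega]; simpa using h1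
    · simp only [List.length]
      rw [show n - 3 + 2 = n - 1 by omega]; simpa using h2

lemma exists_of_hitTime_lt {P Q : List Bool} {x : ℕ → Bool}
    (h : hitTime P x < hitTime Q x) :
    ∃ n, occursAt P x n ∧ (∀ m, occursAt P x m → n ≤ m) ∧
      (∀ m, occursAt Q x m → n < m) := by
  have hne : {n | occursAt P x n}.Nonempty := by
    by_contra hemp
    rw [Set.not_nonempty_iff_eq_empty] at hemp
    have : hitTime P x = ⊤ := by simp [hitTime, hemp]
    exact absurd (this ▸ h) (by simp)
  set n := sInf {n | occursAt P x n} with hn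
  have hmem : occursAt P x n := Nat.sInf_mem hne
  have hle : ∀ m, occursAt P x m → n ≤ m := fun m hm => Nat.sInf_le hm
  refine ⟨n, hmem, hle, ?_⟩
  intro m hm
  have h1 : (n : ℝ≥0∞) ≤ hitTime P x := by
    apply le_sInf
    rintro b ⟨k, hk, rfl⟩
    simp only []
    exact_mod_cast hle k hk
  have h2 : hitTime Q x ≤ (m : ℝ≥0∞) := sInf_le ⟨m, hm, rfl⟩
  have := lt_of_le_of_lt h1 (lt_of_lt_of_le h h2)
  exact_mod_cast this

lemma hitTime_lt_of {P Q : List Bool} {x : ℕ → Bool} {n : ℕ}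
    (hn : occursAt P x n) (hQ : ∀ m, occursAt Q x m → n < m) :
    hitTime P x < hitTime Q x := by
  have h1 : hitTime P x ≤ (n : ℝ≥0∞) := sInf_le ⟨n, hn, rfl⟩
  have h2 : ((n : ℝ≥0∞) + 1) ≤ hitTime Q x := by
    apply le_sInf
    rintro b ⟨m, hm, rfl⟩
    have := hQ m hm
    simp only []
    exact_mod_cast this
  calc hitTime P x ≤ (n : ℝ≥0∞) := h1
    _ < (n : ℝ≥0∞) + 1 := ENNReal.lt_add_right (by simp) one_ne_zero
    _ ≤ hitTime Q x := h2

/-- Index sets of the decisive cylinder events. -/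
def hthIdx : ℕ → Finset ℕ
  | 0 => Finset.Icc 0 2
  | (j+1) => Finset.Icc 1 (j+3)

lemma hthIdx_zero : hthIdx 0 = Finset.Icc 0 2 := rfl

lemma hthIdx_succ (j : ℕ) : hthIdx (j+1) = Finset.Icc 1 (j+3) := rfl

lemma fairCoin_singleton (b : Bool) : fairCoin {b} = 2⁻¹ := by
  have h := PMF.toMeasure_apply_singleton (PMF.bernoulli (1/2) (by norm_num)) b
    (measurableSet_singleton b)
  rw [fairCoin, h, PMF.bernoulli_apply]
  cases b
  · simp only [Bool.cond_false]
    rw [one_div, ENNReal.coe_sub, ENNReal.coe_one, ENNReal.coe_inv two_ne_zero, ENNReal.coe_ofNat,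
      ENNReal.one_sub_inv_two]
  · simp [one_div]

/-- In i.i.d. fair coin flips, P(HTH occurs strictly before TTH) = 3/8. -/
theorem stmt_0 {Ω : Type*} [MeasurableSpace Ω] (μ : Measure Ω) [IsProbabilityMeasure μ]
    (X : ℕ → Ω → Bool) (hmeas : ∀ n, Measurable (X n))
    (hindep : iIndepFun X μ)
    (hfair : ∀ n, μ.map (X n) = fairCoin) :
    μ {ω | hitTime [true, false, true] (fun n => X n ω)
         < hitTime [false, false, true] (fun n => X n ω)} = 3/8 := by
  -- the decisive cylinder events
  set S : ℕ → Set Ω := fun j => ⋂ i ∈ hthIdx j, X i ⁻¹' {decide (i ≠ j+1)} with hS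
  have hmemS : ∀ j ω, ω ∈ S j ↔ ∀ i ∈ hthIdx j, X i ω = decide (i ≠ j+1) := by
    intro j ω
    simp [hS, Set.mem_iInter]
  -- Step 1 : event decomposition
  have hE : {ω | hitTime [true, false, true] (fun n => X n ω)
       < hitTime [false, false, true] (fun n => X n ω)} = ⋃ j, S j := by
    ext ω
    simp only [Set.mem_setOf_eq, Set.mem_iUnion]
    constructor
    · intro h
      obtain ⟨n, hP, hmin, hQ⟩ := exists_of_hitTime_lt h
      rw [occursAt_three] at hP
      obtain ⟨h3, hx0, hx1, hx2⟩ := hP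
      -- intermediate coordinates are heads
      have step : ∀ j, 1 ≤ j → j + 1 ≤ n - 3 → X (j+1) ω = true → X j ω = true := by
        intro j hj hj2 hnext
        by_contra hf
        rw [Bool.not_eq_true] at hf
        rcases Bool.eq_false_or_eq_true (X (j-1) ω) with hprev | hprev
        · have hocc : occursAt [true, false, true] (fun i => X i ω) (j+2) := by
            rw [occursAt_three]
            refine ⟨by omega, ?_, ?_, ?_⟩
            · rw [show j + 2 - 3 = j - 1 by omega]; exact hprev
            · rw [show j + 2 - 2 = j by omega]; exact hf
            · rw [show j + 2 - 1 = j + 1 by omega]; exact hnext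
          have := hmin _ hocc; omega
        · have hocc : occursAt [false, false, true] (fun i => X i ω) (j+2) := by
            rw [occursAt_three]
            refine ⟨by omega, ?_, ?_, ?_⟩
            · rw [show j + 2 - 3 = j - 1 by omega]; exact hprev
            · rw [show j + 2 - 2 = j by omega]; exact hf
            · rw [show j + 2 - 1 = j + 1 by omega]; exact hnext
          have := hQ _ hocc; omega
      have hmid : ∀ d, 1 ≤ n - 3 - d → X (n - 3 - d) ω = true := by
        intro d
        induction d with
        | zero => intro _; simpa using hx0
        | succ d ih =>
          intro hd
          have h1 : n - 3 - (d+1) + 1 = n - 3 - d := by omega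
          exact step (n-3-(d+1)) (by omega) (by omega)
            (by rw [h1]; exact ih (by omega))
      have hmid' : ∀ i, 1 ≤ i → i ≤ n - 3 → X i ω = true := by
        intro i hi1 hi2
        have := hmid (n - 3 - i) (by omega)
        rwa [show n - 3 - (n - 3 - i) = i by omega] at this
      by_cases hn3 : n = 3
      · refine ⟨0, (hmemS 0 ω).2 ?_⟩
        intro i hi
        subst hn3
        rw [hthIdx_zero, Finset.mem_Icc] at hi
        obtain ⟨-, hi2⟩ := hi
        interval_cases i
        · simpa using hx0
        · simpa using hx1
        · simpa using hx2
      · refine ⟨n - 3, (hmemS (n-3) ω).2 ?_⟩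
        have h4 : 4 ≤ n := by omega
        intro i hi
        rw [show n - 3 = (n - 4) + 1 by omega, hthIdx_succ, Finset.mem_Icc] at hi
        obtain ⟨hi1, hi2⟩ := hi
        rcases lt_trichotomy i (n - 2) with hlt | heq | hgt
        · have : X i ω = true := hmid' i hi1 (by omega)
          rw [this]
          symm
          rw [decide_eq_true_eq]
          omega
        · subst heq
          rw [hx1]
          symm
          rw [decide_eq_false_iff_not]
          omega
        · have hieq : i = n - 1 := by omega
          subst hieq
          rw [hx2]
          symm
          rw [decide_eq_true_eq]
          omega
    · rintro ⟨j, hj⟩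
      rw [hmemS] at hj
      apply hitTime_lt_of (n := j + 3)
      · rw [occursAt_three]
        refine ⟨by omega, ?_, ?_, ?_⟩
        · rw [show j + 3 - 3 = j by omega]
          rcases Nat.eq_zero_or_pos j with rfl | hj1
          · have := hj 0 (by rw [hthIdx_zero, Finset.mem_Icc]; omega)
            simpa using this
          · obtain ⟨u, rfl⟩ : ∃ u, j = u + 1 := ⟨j - 1, by omega⟩
            have := hj (u+1) (by rw [hthIdx_succ, Finset.mem_Icc]; omega)
            simp only [ne_eq, Nat.succ_ne_self, not_false_eq_true, decide_true] at this
            rw [this]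
            simp
        · rw [show j + 3 - 2 = j + 1 by omega]
          rcases Nat.eq_zero_or_pos j with rfl | hj1
          · have := hj 1 (by rw [hthIdx_zero, Finset.mem_Icc]; omega)
            simpa using this
          · obtain ⟨u, rfl⟩ : ∃ u, j = u + 1 := ⟨j - 1, by omega⟩
            have := hj (u+2) (by rw [hthIdx_succ, Finset.mem_Icc]; omega)
            simpa using this
        · rw [show j + 3 - 1 = j + 2 by omega]
          rcases Nat.eq_zero_or_pos j with rfl | hj1
          · have := hj 2 (by rw [hthIdx_zero, Finset.mem_Icc]; omega)
            simpa using this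
          · obtain ⟨u, rfl⟩ : ∃ u, j = u + 1 := ⟨j - 1, by omega⟩
            have := hj (u+3) (by rw [hthIdx_succ, Finset.mem_Icc]; omega)
            rw [this]
            simp
      · intro m hm
        rw [occursAt_three] at hm
        obtain ⟨hm3, hz0, hz1, _⟩ := hm
        by_contra hcon
        push_neg at hcon
        rcases Nat.eq_zero_or_pos j with rfl | hj1
        · -- j = 0 : m ≤ 3, so m = 3, but X 0 ω = true
          have hm0 : m = 3 := by omega
          subst hm0
          have := hj 0 (by rw [hthIdx_zero, Finset.mem_Icc]; omega)
          simp at this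
          rw [show (3:ℕ) - 3 = 0 by omega] at hz0
          simp [this] at hz0
        · obtain ⟨u, rfl⟩ : ∃ u, j = u + 1 := ⟨j - 1, by omega⟩
          -- m ≤ u + 4, m ≥ 3; X (m-3) = X (m-2) = false
          rcases lt_or_ge (m - 2) (u + 2) with hlt | hge
          · have := hj (m-2) (by rw [hthIdx_succ, Finset.mem_Icc]; omega)
            have hne : (m - 2) ≠ (u + 1) + 1 := by omega
            simp [hne] at this
            rw [this] at hz1
            simp at hz1
          · have hmeq : m - 2 = u + 2 := by omega
            have := hj (m-3) (by rw [hthIdx_succ, Finset.mem_Icc]; omega)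
            have hne : (m - 3) ≠ (u + 1) + 1 := by omega
            simp [hne] at this
            rw [this] at hz0
            simp at hz0
  -- Step 2 : measurability
  have hmeasS : ∀ j, MeasurableSet (S j) := by
    intro j
    apply MeasurableSet.biInter (Set.to_countable _)
    intro i _
    exact (hmeas i) (measurableSet_singleton _)
  -- Step 3 : disjointness
  have hdisj : Pairwise (Function.onFun Disjoint S) := by
    have aux : ∀ j k, j < k → ∀ ω, ω ∈ S j → ω ∈ S k → False := by
      intro j k hjk ω hj hk
      rw [hmemS] at hj hk
      obtain ⟨v, rfl⟩ : ∃ v, k = v + 1 := ⟨k - 1, by omega⟩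
      have h1 : X (j+1) ω = false := by
        rcases Nat.eq_zero_or_pos j with rfl | hj1
        · have := hj 1 (by rw [hthIdx_zero, Finset.mem_Icc]; omega)
          simpa using this
        · obtain ⟨u, rfl⟩ : ∃ u, j = u + 1 := ⟨j - 1, by omega⟩
          have := hj (u+2) (by rw [hthIdx_succ, Finset.mem_Icc]; omega)
          simpa using this
      have h2 : X (j+1) ω = true := by
        have := hk (j+1) (by rw [hthIdx_succ, Finset.mem_Icc]; omega)
        have hne : j + 1 ≠ (v + 1) + 1 := by omega
        simpa [hne, show j ≠ v + 1 by omega] using this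
      rw [h1] at h2
      simp at h2
    intro j k hjk
    rcases lt_or_gt_of_ne hjk with h | h
    · rw [Function.onFun, Set.disjoint_left]
      intro ω hω1 hω2
      exact aux j k h ω hω1 hω2
    · rw [Function.onFun, Set.disjoint_left]
      intro ω hω1 hω2
      exact aux k j h ω hω2 hω1
  -- Step 4 : measure of each cylinder
  have hmeasure : ∀ j, μ (S j) = (2⁻¹ : ℝ≥0∞) ^ (hthIdx j).card := by
    intro j
    rw [hS]
    simp only []
    rw [hindep.measure_inter_preimage_eq_mul (hthIdx j)
      (sets := fun i => {decide (i ≠ j+1)}) (fun i _ => measurableSet_singleton _)]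
    have hfac : ∀ i ∈ hthIdx j, μ (X i ⁻¹' {decide (i ≠ j+1)}) = (2⁻¹ : ℝ≥0∞) := by
      intro i _
      rw [← Measure.map_apply (hmeas i) (measurableSet_singleton _), hfair i,
        fairCoin_singleton]
    rw [Finset.prod_congr rfl hfac, Finset.prod_const]
  -- Step 5 : summation
  rw [hE, measure_iUnion hdisj hmeasS]
  have hcard0 : (hthIdx 0).card = 3 := by rw [hthIdx_zero]; simp
  have hcards : ∀ j, (hthIdx (j+1)).card = j + 3 := by
    intro j
    rw [hthIdx_succ]
    simp
  rw [tsum_congr hmeasure]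
  rw [tsum_eq_zero_add' (by exact ENNReal.summable)]
  simp only [hcard0, hcards]
  have hgeo : ∑' (j : ℕ), (2⁻¹ : ℝ≥0∞) ^ (j + 3) = 4⁻¹ := by
    have : ∀ j : ℕ, (2⁻¹ : ℝ≥0∞) ^ (j + 3) = 2⁻¹ ^ j * 2⁻¹ ^ 3 := fun j => pow_add _ _ _
    rw [tsum_congr this, ENNReal.tsum_mul_right, ENNReal.tsum_geometric,
      ENNReal.one_sub_inv_two, inv_inv]
    rw [show ((2:ℝ≥0∞)⁻¹)^3 = (2:ℝ≥0∞)⁻¹ * 2⁻¹ * 2⁻¹ by ring]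
    rw [show (2:ℝ≥0∞) * (2⁻¹ * 2⁻¹ * 2⁻¹) = (2 * 2⁻¹) * (2⁻¹ * 2⁻¹) by ring]
    rw [ENNReal.mul_inv_cancel (by norm_num) (by norm_num)]
    rw [one_mul, ← ENNReal.mul_inv (by norm_num) (by norm_num)]
    norm_num
  rw [hgeo]
  -- (2⁻¹)^3 + 4⁻¹ = 3/8
  rw [show ((2:ℝ≥0∞)⁻¹)^3 = 8⁻¹ by
    rw [← ENNReal.inv_pow]; norm_num]
  rw [show (4:ℝ≥0∞)⁻¹ = 2 * 8⁻¹ by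
    rw [show (8:ℝ≥0∞) = 4 * 2 by norm_num, ENNReal.mul_inv (by norm_num) (by norm_num)]
    rw [← mul_assoc, mul_comm (2:ℝ≥0∞) 4⁻¹, mul_assoc,
      ENNReal.mul_inv_cancel (by norm_num) (by norm_num), mul_one]]
  rw [show (3:ℝ≥0∞)/8 = 3 * 8⁻¹ by rw [ENNReal.div_eq_inv_mul, mul_comm]]
  ring
end

section
/- In a sequence of independent fair coin flips, the probability that THH occurs before HHH is 7/8. -/
open MeasureTheory ProbabilityTheory
open scoped ENNReal NNReal

/- Auxiliary lemmas -/

lemma occ3_iff (a b c : Bool) (x : ℕ → Bool) (n : ℕ) :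
    occursAt [a, b, c] x n ↔ 3 ≤ n ∧ x (n-3) = a ∧ x (n-2) = b ∧ x (n-1) = c := by
  constructor
  · rintro ⟨hn, h⟩
    simp only [List.length_cons, List.length_nil] at hn
    have hn' : 3 ≤ n := by omega
    have h0 := h 0 (by norm_num)
    have h1 := h 1 (by norm_num)
    have h2 := h 2 (by norm_num)
    simp only [List.length_cons, List.length_nil] at h0 h1 h2
    have e1 : n - (0+1+1+1) + 1 = n - 2 := by omega
    have e2 : n - (0+1+1+1) + 2 = n - 1 := by omega
    have e0 : n - (0+1+1+1) + 0 = n - 3 := by omega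
    rw [e0] at h0; rw [e1] at h1; rw [e2] at h2
    exact ⟨hn', by simpa using h0, by simpa using h1, by simpa using h2⟩
  · rintro ⟨hn, h0, h1, h2⟩
    refine ⟨by simpa using hn.trans (le_refl n), ?_⟩
    intro i hi
    simp only [List.length_cons, List.length_nil] at hi ⊢
    interval_cases i
    · have e : n - (0+1+1+1) + 0 = n - 3 := by omega
      rw [e]; simpa using h0
    · have e : n - (0+1+1+1) + 1 = n - 2 := by omega
      rw [e]; simpa using h1
    · have e : n - (0+1+1+1) + 2 = n - 1 := by omega
      rw [e]; simpa using h2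

lemma hitTime_le {α : Type*} {P : List α} {x : ℕ → α} {n : ℕ} (h : occursAt P x n) :
    hitTime P x ≤ (n : ℝ≥0∞) :=
  sInf_le ⟨n, h, rfl⟩

lemma le_hitTime {α : Type*} {P : List α} {x : ℕ → α} {m : ℕ}
    (h : ∀ n, occursAt P x n → m ≤ n) : (m : ℝ≥0∞) ≤ hitTime P x := by
  refine le_sInf ?_
  rintro b ⟨n, hn, rfl⟩
  show (m : ℝ≥0∞) ≤ (n : ℝ≥0∞)
  exact_mod_cast h n hn

lemma hitTime_eq_top {α : Type*} {P : List α} {x : ℕ → α}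
    (h : ∀ n, ¬ occursAt P x n) : hitTime P x = ⊤ := by
  have he : {n | occursAt P x n} = ∅ := Set.eq_empty_iff_forall_notMem.mpr h
  simp [hitTime, he]

/-- If the sequence starts with three heads, THH does not occur before HHH. -/
lemma lemA {x : ℕ → Bool} (h0 : x 0 = true) (h1 : x 1 = true) (h2 : x 2 = true) :
    ¬ hitTime [false, true, true] x < hitTime [true, true, true] x := by
  have hQocc : occursAt [true, true, true] x 3 :=
    (occ3_iff _ _ _ x 3).mpr ⟨le_refl 3, by simpa using h0, by simpa using h1, by simpa using h2⟩
  have hQ : hitTime [true, true, true] x ≤ (3 : ℝ≥0∞) := by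
    simpa using hitTime_le hQocc
  have hP : (4 : ℝ≥0∞) ≤ hitTime [false, true, true] x := by
    have := le_hitTime (P := [false, true, true]) (x := x) (m := 4) ?_
    · simpa using this
    · intro n hn
      rw [occ3_iff] at hn
      obtain ⟨hn3, ha, -, -⟩ := hn
      by_contra hlt
      have hn3' : n = 3 := by omega
      subst hn3'
      simp only [show (3:ℕ) - 3 = 0 from rfl] at ha
      rw [h0] at ha
      exact Bool.true_eq_false.mp ha
  have : hitTime [true, true, true] x < hitTime [false, true, true] x :=
    lt_of_le_of_lt hQ (lt_of_lt_of_le (by norm_num) hP)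
  exact not_lt.mpr this.le

/-- If THH occurs at all and the sequence does not start with three heads,
then THH occurs strictly before HHH. -/
lemma lemB {x : ℕ → Bool} (hocc : ∃ n, occursAt [false, true, true] x n)
    (hA : ¬ (x 0 = true ∧ x 1 = true ∧ x 2 = true)) :
    hitTime [false, true, true] x < hitTime [true, true, true] x := by
  by_cases hQ : ∃ m, occursAt [true, true, true] x m
  · classical
    have hm := Nat.find_spec hQ
    set m := Nat.find hQ with hmdef
    rw [occ3_iff] at hm
    obtain ⟨h3, ha, hb, hc⟩ := hm
    have hm4 : 4 ≤ m := by
      rcases Nat.lt_or_ge m 4 with h | h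
      · exfalso
        have hm3 : m = 3 := by omega
        rw [hm3] at ha hb hc
        exact hA ⟨by simpa using ha, by simpa using hb, by simpa using hc⟩
      · exact h
    have hprev : x (m - 4) = false := by
      by_contra hT
      have hT' : x (m - 4) = true := by
        cases hv : x (m - 4)
        · exact absurd hv hT
        · rfl
      have hocc' : occursAt [true, true, true] x (m - 1) := by
        rw [occ3_iff]
        refine ⟨by omega, ?_, ?_, ?_⟩
        · rw [show m - 1 - 3 = m - 4 by omega]; exact hT'
        · rw [show m - 1 - 2 = m - 3 by omega]; exact ha
        · rw [show m - 1 - 1 = m - 2 by omega]; exact hb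
      exact Nat.find_min hQ (by omega : m - 1 < m) hocc'
    have hPocc : occursAt [false, true, true] x (m - 1) := by
      rw [occ3_iff]
      refine ⟨by omega, ?_, ?_, ?_⟩
      · rw [show m - 1 - 3 = m - 4 by omega]; exact hprev
      · rw [show m - 1 - 2 = m - 3 by omega]; exact ha
      · rw [show m - 1 - 1 = m - 2 by omega]; exact hb
    have hle : hitTime [false, true, true] x ≤ ((m - 1 : ℕ) : ℝ≥0∞) := hitTime_le hPocc
    have hge : ((m : ℕ) : ℝ≥0∞) ≤ hitTime [true, true, true] x :=
      le_hitTime (fun n hn => Nat.find_min' hQ hn)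
    refine lt_of_le_of_lt hle (lt_of_lt_of_le ?_ hge)
    exact_mod_cast Nat.sub_lt (by omega) one_pos
  · push_neg at hQ
    obtain ⟨n0, hn0⟩ := hocc
    rw [hitTime_eq_top hQ]
    exact lt_of_le_of_lt (hitTime_le hn0) (ENNReal.natCast_lt_top n0)

lemma half_mul_half_mul_half : (1/2 : ℝ≥0∞) * (1/2 * (1/2)) = 1/8 := by
  have h : (1/2 : ℝ≥0∞) = ((1/2 : ℝ≥0) : ℝ≥0∞) := by
    rw [ENNReal.coe_div (by norm_num)]; norm_num
  have h8 : (1/8 : ℝ≥0∞) = ((1/8 : ℝ≥0) : ℝ≥0∞) := by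
    rw [ENNReal.coe_div (by norm_num)]; norm_num
  rw [h, h8, ← ENNReal.coe_mul, ← ENNReal.coe_mul, ENNReal.coe_inj]
  rw [div_mul_div_comm, div_mul_div_comm]; norm_num

lemma one_sub_eighth : (1:ℝ≥0∞) - 1/8 = 7/8 := by
  refine ENNReal.sub_eq_of_eq_add (by norm_num) ?_
  rw [ENNReal.div_add_div_same]
  norm_num
  exact (ENNReal.div_self (by norm_num) (by norm_num)).symm

/-- In i.i.d. fair coin flips, P(THH occurs before HHH) = 7/8. -/
theorem stmt_1 {Ω : Type*} [MeasurableSpace Ω] (μ : Measure Ω) [IsProbabilityMeasure μ]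
    (X : ℕ → Ω → Bool) (hmeas : ∀ n, Measurable (X n))
    (hindep : iIndepFun X μ)
    (hfair : ∀ n, μ.map (X n) = fairCoin) :
    μ {ω | hitTime [false, true, true] (fun n => X n ω)
         < hitTime [true, true, true] (fun n => X n ω)} = 7/8 := by
  classical
  -- single coordinate probabilities
  have hone : ∀ (n : ℕ) (v : Bool), μ (X n ⁻¹' {v}) = 1/2 := by
    intro n v
    have hmap : μ (X n ⁻¹' {v}) = (μ.map (X n)) {v} :=
      (Measure.map_apply (hmeas n) (measurableSet_singleton v)).symm
    rw [hmap, hfair n]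
    show (PMF.bernoulli (1/2) (by norm_num)).toMeasure {v} = 1/2
    rw [PMF.toMeasure_apply_singleton _ _ (measurableSet_singleton v)]
    cases v
    · rw [PMF.bernoulli_apply]; simp
    · rw [PMF.bernoulli_apply]; simp
  -- triple probabilities
  have htriple : ∀ (a b c : ℕ) (u v w : Bool), a ≠ b → a ≠ c → b ≠ c →
      μ (X a ⁻¹' {u} ∩ (X b ⁻¹' {v} ∩ X c ⁻¹' {w})) = 1/8 := by
    intro a b c u v w hab hac hbc
    have hkey := hindep.measure_inter_preimage_eq_mul (S := {a, b, c})
      (sets := fun i => if i = a then {u} else if i = b then {v} else {w})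
      (fun i _ => MeasurableSet.of_discrete)
    have hma : a ∉ ({b, c} : Finset ℕ) := by simp [hab, hac]
    have hmb : b ∉ ({c} : Finset ℕ) := by simp [hbc]
    rw [show ({a, b, c} : Finset ℕ) = insert a {b, c} from rfl] at hkey
    rw [Finset.set_biInter_insert, Finset.set_biInter_insert, Finset.set_biInter_singleton]
      at hkey
    rw [Finset.prod_insert hma, Finset.prod_insert hmb, Finset.prod_singleton] at hkey
    have ea : (if a = a then ({u} : Set Bool) else if a = b then {v} else {w}) = {u} := by
      simp
    have eb : (if b = a then ({u} : Set Bool) else if b = b then {v} else {w}) = {v} := by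
      simp [hab.symm]
    have ec : (if c = a then ({u} : Set Bool) else if c = b then {v} else {w}) = {w} := by
      simp [hac.symm, hbc.symm]
    beta_reduce at hkey
    rw [ea, eb, ec] at hkey
    rw [hkey, hone, hone, hone]
    exact half_mul_half_mul_half
  -- the independent blocks
  set C : ℕ → Set Ω := fun k =>
    X (3*k) ⁻¹' {false} ∩ (X (3*k+1) ⁻¹' {true} ∩ X (3*k+2) ⁻¹' {true}) with hCdef
  have hCmeas : ∀ k, MeasurableSet (C k) := fun k =>
    ((hmeas (3*k)) (measurableSet_singleton false)).inter
      (((hmeas (3*k+1)) (measurableSet_singleton true)).inter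
        ((hmeas (3*k+2)) (measurableSet_singleton true)))
  have hC8 : ∀ k, μ (C k) = 1/8 := fun k =>
    htriple (3*k) (3*k+1) (3*k+2) false true true (by omega) (by omega) (by omega)
  set sets : ℕ → Set Bool := fun i => if i % 3 = 0 then {false} else {true} with hsetsdef
  set blk : ℕ → Finset ℕ := fun k => {3*k, 3*k+1, 3*k+2} with hblkdef
  have hCk : ∀ k, (⋂ i ∈ blk k, X i ⁻¹' sets i) = C k := by
    intro k
    have e0 : (3*k) % 3 = 0 := by omega
    have e1 : ¬ ((3*k+1) % 3 = 0) := by omega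
    have e2 : ¬ ((3*k+2) % 3 = 0) := by omega
    rw [show blk k = insert (3*k) {3*k+1, 3*k+2} from rfl]
    rw [Finset.set_biInter_insert, Finset.set_biInter_insert, Finset.set_biInter_singleton]
    simp only [hsetsdef, if_pos e0, if_neg e1, if_neg e2, hCdef]
  have hCindep : iIndepSet C μ := by
    rw [iIndepSet_iff_meas_biInter hCmeas]
    intro s
    have hdisj : Set.PairwiseDisjoint (↑s) blk := by
      intro k _ l _ hkl
      simp only [Finset.disjoint_left, hblkdef, Finset.mem_insert, Finset.mem_singleton]
      intro i hi hi'
      omega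
    have hstep1 : (⋂ k ∈ s, C k) = ⋂ i ∈ s.biUnion blk, X i ⁻¹' sets i := by
      rw [Finset.set_biInter_biUnion]
      exact (Set.iInter₂_congr fun k _ => hCk k).symm
    have hstep2 : μ (⋂ i ∈ s.biUnion blk, X i ⁻¹' sets i)
        = ∏ i ∈ s.biUnion blk, μ (X i ⁻¹' sets i) :=
      hindep.measure_inter_preimage_eq_mul _ (fun i _ => MeasurableSet.of_discrete)
    have hhalf : ∀ i, μ (X i ⁻¹' sets i) = 1/2 := by
      intro i
      by_cases h : i % 3 = 0
      · simp only [hsetsdef, if_pos h]; exact hone i false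
      · simp only [hsetsdef, if_neg h]; exact hone i true
    have hblkprod : ∀ k, (∏ i ∈ blk k, μ (X i ⁻¹' sets i)) = 1/8 := by
      intro k
      have m1 : (3*k) ∉ ({3*k+1, 3*k+2} : Finset ℕ) := by simp
      have m2 : (3*k+1) ∉ ({3*k+2} : Finset ℕ) := by simp
      rw [show blk k = insert (3*k) {3*k+1, 3*k+2} from rfl]
      rw [Finset.prod_insert m1, Finset.prod_insert m2, Finset.prod_singleton,
        hhalf, hhalf, hhalf]
      exact half_mul_half_mul_half
    rw [hstep1, hstep2, Finset.prod_biUnion hdisj]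
    exact Finset.prod_congr rfl fun k _ => by rw [hblkprod k, hC8 k]
  -- Borel-Cantelli: THH occurs almost surely
  have htsum : ∑' k, μ (C k) = ∞ := by
    rw [tsum_congr hC8]
    exact ENNReal.tsum_const_eq_top_of_ne_zero (by norm_num)
  have hlim : μ (Filter.limsup C Filter.atTop) = 1 :=
    measure_limsup_eq_one hCmeas hCindep htsum
  set Ebad : Set Ω := {ω | ∀ n, ¬ occursAt [false, true, true] (fun j => X j ω) n} with hEdef
  have hEsub : Ebad ⊆ (Filter.limsup C Filter.atTop)ᶜ := by
    intro ω hω hmem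
    have hmem' : ω ∈ ⋂ n, ⋃ k, ⋃ (_ : k ≥ n), C k := by
      rwa [Filter.limsup_eq_iInf_iSup_of_nat] at hmem
    have h0 : ω ∈ ⋃ k, ⋃ (_ : k ≥ 0), C k := Set.mem_iInter.mp hmem' 0
    obtain ⟨k, -, hk⟩ := Set.mem_iUnion₂.mp h0
    obtain ⟨hk0, hk1, hk2⟩ := hk
    refine hω (3*k+3) ?_
    rw [occ3_iff]
    refine ⟨by omega, ?_, ?_, ?_⟩
    · rw [show 3*k+3-3 = 3*k by omega]; exact hk0
    · rw [show 3*k+3-2 = 3*k+1 by omega]; exact hk1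
    · rw [show 3*k+3-1 = 3*k+2 by omega]; exact hk2
  have hEbad : μ Ebad = 0 := by
    refine le_antisymm ?_ zero_le
    calc μ Ebad ≤ μ ((Filter.limsup C Filter.atTop)ᶜ) := measure_mono hEsub
      _ = 1 - μ (Filter.limsup C Filter.atTop) := by
          rw [measure_compl (MeasurableSet.measurableSet_limsup hCmeas) (measure_ne_top μ _), measure_univ]
      _ = 0 := by rw [hlim]; simp
  -- the event that the first three flips are heads
  set A : Set Ω := X 0 ⁻¹' {true} ∩ (X 1 ⁻¹' {true} ∩ X 2 ⁻¹' {true}) with hAdef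
  have hAmeas : MeasurableSet A :=
    ((hmeas 0) (measurableSet_singleton true)).inter
      (((hmeas 1) (measurableSet_singleton true)).inter
        ((hmeas 2) (measurableSet_singleton true)))
  have hA : μ A = 1/8 := htriple 0 1 2 true true true (by omega) (by omega) (by omega)
  have hAc : μ Aᶜ = 7/8 := by
    rw [measure_compl hAmeas (measure_ne_top μ A), measure_univ, hA]
    exact one_sub_eighth
  set T : Set Ω := {ω | hitTime [false, true, true] (fun n => X n ω)
      < hitTime [true, true, true] (fun n => X n ω)} with hTdef
  have hTsub : T ⊆ Aᶜ := by
    intro ω hω hωA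
    obtain ⟨h0, h1, h2⟩ := hωA
    exact lemA (x := fun n => X n ω) h0 h1 h2 hω
  have hsub2 : Aᶜ ⊆ T ∪ Ebad := by
    intro ω hω
    by_cases h : ω ∈ Ebad
    · exact Or.inr h
    · refine Or.inl ?_
      have hocc : ∃ n, occursAt [false, true, true] (fun j => X j ω) n := by
        simp only [hEdef, Set.mem_setOf_eq, not_forall, not_not] at h
        exact h
      have hA' : ¬ (X 0 ω = true ∧ X 1 ω = true ∧ X 2 ω = true) := by
        intro ⟨h0, h1, h2⟩
        exact hω ⟨h0, h1, h2⟩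
      exact lemB hocc hA'
  refine le_antisymm ?_ ?_
  · calc μ T ≤ μ Aᶜ := measure_mono hTsub
      _ = 7/8 := hAc
  · calc (7/8 : ℝ≥0∞) = μ Aᶜ := hAc.symm
      _ ≤ μ (T ∪ Ebad) := measure_mono hsub2
      _ ≤ μ T + μ Ebad := measure_union_le _ _
      _ = μ T := by rw [hEbad, add_zero]
end

section
/- For any pattern A chosen from the eight patterns of length 3 over {H,T}, there exists a pattern B of length 3 such that in an i.i.d. fair coin flip sequence, the probability that B occurs before A is strictly greater than 1/2. -/
open MeasureTheory ProbabilityTheory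
open scoped ENNReal

/-- Extend a length-8 word to an infinite sequence (by `false`). -/
def ext8 (w : Fin 8 → Bool) : ℕ → Bool := fun i => if h : i < 8 then w ⟨i, h⟩ else false

instance occursAtDec (P : List Bool) (x : ℕ → Bool) (n : ℕ) : Decidable (occursAt P x n) := by
  unfold occursAt; infer_instance

/-- `w` certifies that `B` occurs (at some time `t ≤ 8`) strictly before `A` can. -/
def goodB (A B : List Bool) (w : Fin 8 → Bool) : Bool :=
  (List.range 9).any fun t =>
    decide (occursAt B (ext8 w) t) &&
      (List.range (t + 1)).all fun s => !decide (occursAt A (ext8 w) s)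

lemma key {A B : List Bool} {w : Fin 8 → Bool} (hw : goodB A B w = true)
    {x : ℕ → Bool} (hx : ∀ i, i < 8 → x i = ext8 w i) :
    hitTime B x < hitTime A x := by
  rw [goodB, List.any_eq_true] at hw
  obtain ⟨t, htmem, h⟩ := hw
  rw [List.mem_range] at htmem
  rw [Bool.and_eq_true, decide_eq_true_eq, List.all_eq_true] at h
  obtain ⟨hB, hA⟩ := h
  have ht8 : t ≤ 8 := by omega
  have occ_iff : ∀ (P : List Bool) (n : ℕ), n ≤ 8 →
      (occursAt P x n ↔ occursAt P (ext8 w) n) := by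
    intro P n hn
    constructor
    · rintro ⟨h1, h2⟩
      refine ⟨h1, fun i hi => ?_⟩
      rw [← h2 i hi, hx _ (by omega)]
    · rintro ⟨h1, h2⟩
      refine ⟨h1, fun i hi => ?_⟩
      rw [hx _ (by omega), h2 i hi]
  have hBx : occursAt B x t := (occ_iff B t ht8).mpr hB
  have h1 : hitTime B x ≤ (t : ℝ≥0∞) := sInf_le ⟨t, hBx, rfl⟩
  have h2 : ((t : ℝ≥0∞) + 1) ≤ hitTime A x := by
    refine le_sInf ?_
    rintro _ ⟨n, hn, rfl⟩
    have hnt : ¬ n ≤ t := by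
      intro hle
      have h3 := hA n (List.mem_range.mpr (by omega))
      rw [Bool.not_eq_true', decide_eq_false_iff_not] at h3
      exact h3 ((occ_iff A n (by omega)).mp hn)
    calc ((t : ℝ≥0∞) + 1) = ((t + 1 : ℕ) : ℝ≥0∞) := by push_cast; ring
      _ ≤ (n : ℝ≥0∞) := Nat.cast_le.mpr (by omega)
  calc hitTime B x ≤ (t : ℝ≥0∞) := h1
    _ < (t : ℝ≥0∞) + 1 := ENNReal.lt_add_right (by simp) one_ne_zero
    _ ≤ hitTime A x := h2

lemma main {Ω : Type*} [MeasurableSpace Ω] (μ : Measure Ω) [IsProbabilityMeasure μ]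
    (X : ℕ → Ω → Bool) (hmeas : ∀ n, Measurable (X n))
    (hindep : iIndepFun X μ)
    (hfair : ∀ n, μ.map (X n) = fairCoin)
    (A B : List Bool)
    (hcard : 128 <
      (Finset.univ.filter fun w : Fin 8 → Bool => goodB A B w = true).card) :
    1/2 < μ {ω | hitTime B (fun n => X n ω) < hitTime A (fun n => X n ω)} := by
  classical
  set G : Finset (Fin 8 → Bool) :=
    Finset.univ.filter fun w : Fin 8 → Bool => goodB A B w = true with hG
  set E : (Fin 8 → Bool) → Set Ω :=
    fun w => ⋂ i ∈ Finset.range 8, X i ⁻¹' {ext8 w i} with hEdef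
  have hsingle : ∀ (i : ℕ) (b : Bool), μ (X i ⁻¹' {b}) = 1/2 := by
    intro i b
    have h1 : μ (X i ⁻¹' {b}) = (μ.map (X i)) {b} :=
      (Measure.map_apply (hmeas i) (measurableSet_singleton b)).symm
    rw [h1, hfair i, fairCoin,
      PMF.toMeasure_apply_singleton _ _ (measurableSet_singleton b),
      PMF.bernoulli_apply]
    cases b
    · simp only [cond_false]
      rw [show (1 - 1/2 : NNReal) = 1/2 by rw [tsub_eq_iff_eq_add_of_le (by norm_num)]; norm_num]
      simp
    · simp
  have hEmeas : ∀ w, MeasurableSet (E w) := by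
    intro w
    exact Finset.measurableSet_biInter _ fun i _ =>
      (hmeas i) (measurableSet_singleton _)
  have hEmu : ∀ w, μ (E w) = (1/2 : ℝ≥0∞) ^ 8 := by
    intro w
    rw [hEdef]
    rw [hindep.meas_biInter (fun i _ => ⟨{ext8 w i}, measurableSet_singleton _, rfl⟩)]
    rw [Finset.prod_congr rfl fun i _ => hsingle i (ext8 w i)]
    simp
  have hdisj : (G : Set (Fin 8 → Bool)).PairwiseDisjoint E := by
    intro v _ w _ hvw
    rw [Function.onFun]
    rw [Set.disjoint_left]
    intro ω hv hwω
    apply hvw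
    funext i
    have h1 : X (i : ℕ) ω = ext8 v i := by
      simp only [hEdef, Set.mem_iInter] at hv
      exact hv i (Finset.mem_range.mpr i.isLt)
    have h2 : X (i : ℕ) ω = ext8 w i := by
      simp only [hEdef, Set.mem_iInter] at hwω
      exact hwω i (Finset.mem_range.mpr i.isLt)
    have : ext8 v i = ext8 w i := h1 ▸ h2
    simpa [ext8] using this
  have hsub : (⋃ w ∈ G, E w) ⊆
      {ω | hitTime B (fun n => X n ω) < hitTime A (fun n => X n ω)} := by
    intro ω hω
    simp only [Set.mem_iUnion] at hω
    obtain ⟨w, hwG, hωE⟩ := hω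
    have hgood : goodB A B w = true := (Finset.mem_filter.mp hwG).2
    refine key hgood ?_
    intro i hi
    simp only [hEdef, Set.mem_iInter] at hωE
    have := hωE i (Finset.mem_range.mpr hi)
    simpa [ext8, hi] using this
  have hunion : μ (⋃ w ∈ G, E w) = (G.card : ℝ≥0∞) * (1/2) ^ 8 := by
    rw [measure_biUnion_finset hdisj fun w _ => hEmeas w]
    rw [Finset.sum_congr rfl fun w _ => hEmu w]
    rw [Finset.sum_const, nsmul_eq_mul]
  have hlow : (129 : ℝ≥0∞) * (1/2) ^ 8 ≤ μ (⋃ w ∈ G, E w) := by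
    rw [hunion]
    refine mul_le_mul_left ?_ _
    exact_mod_cast hcard
  calc (1/2 : ℝ≥0∞) < 129 * (1/2) ^ 8 := by
        rw [show ((1:ℝ≥0∞)/2) ^ 8 = (256)⁻¹ by
          rw [one_div, ← ENNReal.inv_pow]; norm_num]
        rw [show (1/2 : ℝ≥0∞) = 128 * 256⁻¹ by
          rw [one_div, show (256 : ℝ≥0∞) = 128 * 2 by norm_num,
            ENNReal.mul_inv (by norm_num) (by norm_num),
            ← mul_assoc, ENNReal.mul_inv_cancel (by norm_num) (by norm_num), one_mul]]
        exact (ENNReal.mul_lt_mul_iff_left (by norm_num) (by norm_num)).mpr (by norm_num)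
    _ ≤ μ (⋃ w ∈ G, E w) := hlow
    _ ≤ _ := measure_mono hsub

set_option maxRecDepth 100000 in
set_option maxHeartbeats 4000000 in
/-- For every length-3 pattern A there is a length-3 pattern B that occurs
before A with probability strictly greater than 1/2. -/
theorem stmt_2 {Ω : Type*} [MeasurableSpace Ω] (μ : Measure Ω) [IsProbabilityMeasure μ]
    (X : ℕ → Ω → Bool) (hmeas : ∀ n, Measurable (X n))
    (hindep : iIndepFun X μ)
    (hfair : ∀ n, μ.map (X n) = fairCoin) :
    ∀ A : List Bool, A.length = 3 →
      ∃ B : List Bool, B.length = 3 ∧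
        1/2 < μ {ω | hitTime B (fun n => X n ω) < hitTime A (fun n => X n ω)} := by
  intro A hA
  match A, hA with
  | [a, b, c], _ =>
    refine ⟨[!b, a, b], rfl, ?_⟩
    apply main μ X hmeas hindep hfair
    cases a <;> cases b <;> cases c <;> decide
end

section
/- The relation 'B beats A' (meaning B occurs before A with probability > 1/2 in fair coin flips) on length-3 patterns is not transitive: HHT beats HTT, HTT beats TTH, TTH beats THH, and THH beats HHT. -/
open MeasureTheory ProbabilityTheory
open scoped ENNReal

/-- `beats μ X B A` : pattern `B` occurs before pattern `A` with probability > 1/2. -/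
def beats {Ω : Type*} [MeasurableSpace Ω] (μ : Measure Ω) (X : ℕ → Ω → Bool)
    (B A : List Bool) : Prop :=
  1/2 < μ {ω | hitTime B (fun n => X n ω) < hitTime A (fun n => X n ω)}

instance occursAt.decidable {α : Type*} [DecidableEq α] (P : List α) (x : ℕ → α) (n : ℕ) :
    Decidable (occursAt P x n) :=
  inferInstanceAs (Decidable (P.length ≤ n ∧ ∀ i (h : i < P.length),
    x (n - P.length + i) = P.get ⟨i, h⟩))

/-- `B` occurs by time 8, strictly before any occurrence of `A`. -/
def Win (B A : List Bool) (w : Fin 8 → Bool) : Prop :=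
  ∃ n ∈ Finset.range 9, occursAt B (ext8 w) n ∧
    ∀ m ∈ Finset.range (n + 1), ¬ occursAt A (ext8 w) m

instance Win.decidable (B A : List Bool) : DecidablePred (Win B A) := fun w => by
  unfold Win; infer_instance

lemma occursAt_congr {P : List Bool} {x y : ℕ → Bool} {n : ℕ} (h : ∀ i < n, x i = y i)
    (hx : occursAt P x n) : occursAt P y n := by
  obtain ⟨hl, hp⟩ := hx
  refine ⟨hl, fun i hi => ?_⟩
  rw [← h (n - P.length + i) (by omega), hp i hi]

lemma win_hitlt {B A : List Bool} {x : ℕ → Bool} {w : Fin 8 → Bool}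
    (hx : ∀ i : Fin 8, x i = w i) (hw : Win B A w) :
    hitTime B x < hitTime A x := by
  obtain ⟨n, hn, hB, hA⟩ := hw
  rw [Finset.mem_range] at hn
  have hagree : ∀ i < 8, ext8 w i = x i := by
    intro i hi
    simp only [ext8, dif_pos hi]
    exact (hx ⟨i, hi⟩).symm
  have h1 : hitTime B x ≤ (n : ℝ≥0∞) :=
    sInf_le ⟨n, occursAt_congr (fun i hi => hagree i (by omega)) hB, rfl⟩
  have h2 : (n : ℝ≥0∞) + 1 ≤ hitTime A x := by
    refine le_sInf ?_
    rintro b ⟨m, hm, rfl⟩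
    have hnm : n < m := by
      by_contra hle
      push_neg at hle
      exact hA m (Finset.mem_range.mpr (by omega))
        (occursAt_congr (fun i hi => (hagree i (by omega)).symm) hm)
    have hle : n + 1 ≤ m := hnm
    show (n : ℝ≥0∞) + 1 ≤ (m : ℝ≥0∞)
    exact_mod_cast hle
  calc hitTime B x ≤ (n : ℝ≥0∞) := h1
    _ < (n : ℝ≥0∞) + 1 := ENNReal.lt_add_right (ENNReal.natCast_ne_top n) one_ne_zero
    _ ≤ hitTime A x := h2

lemma beats_of_count {Ω : Type*} [MeasurableSpace Ω] (μ : Measure Ω) [IsProbabilityMeasure μ]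
    (X : ℕ → Ω → Bool) (hmeas : ∀ n, Measurable (X n))
    (hindep : iIndepFun X μ)
    (hfair : ∀ n, μ.map (X n) = fairCoin)
    (B A : List Bool)
    (hcard : 128 < (Finset.univ.filter (Win B A)).card) :
    beats μ X B A := by
  classical
  set S := Finset.univ.filter (Win B A) with hS
  set C : (Fin 8 → Bool) → Set Ω := fun w => ⋂ i ∈ Finset.range 8, X i ⁻¹' {ext8 w i} with hC
  have hhalf : ∀ (i : ℕ) (b : Bool), μ (X i ⁻¹' {b}) = 2⁻¹ := by
    intro i b
    have h1 : μ (X i ⁻¹' {b}) = μ.map (X i) {b} :=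
      (Measure.map_apply (hmeas i) (measurableSet_singleton b)).symm
    rw [h1, hfair i, fairCoin,
      PMF.toMeasure_apply_singleton _ _ (measurableSet_singleton b), PMF.bernoulli_apply]
    cases b
    · simp [one_div, ENNReal.one_sub_inv_two]
    · simp [one_div]
  have hCmeas : ∀ w, MeasurableSet (C w) := fun w =>
    Finset.measurableSet_biInter _ fun i _ => (hmeas i) (measurableSet_singleton _)
  have hCval : ∀ w, μ (C w) = 2⁻¹ ^ 8 := by
    intro w
    have := hindep.meas_biInter (S := Finset.range 8)
      (s := fun i => X i ⁻¹' {ext8 w i})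
      (fun i _ => ⟨{ext8 w i}, measurableSet_singleton _, rfl⟩)
    rw [hC]
    simp only
    rw [this]
    simp [hhalf]
  have hCdisj : (↑S : Set (Fin 8 → Bool)).PairwiseDisjoint C := by
    intro w _ w' _ hne
    refine Set.disjoint_left.mpr fun ω hw hw' => hne ?_
    funext i
    have e1 : X i ω = ext8 w i := by
      have := Set.mem_iInter₂.mp hw i (Finset.mem_range.mpr i.isLt)
      simpa using this
    have e2 : X i ω = ext8 w' i := by
      have := Set.mem_iInter₂.mp hw' i (Finset.mem_range.mpr i.isLt)
      simpa using this
    have : ext8 w (i : ℕ) = ext8 w' (i : ℕ) := e1 ▸ e2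
    simpa [ext8, i.isLt] using this
  have hsub : (⋃ w ∈ S, C w) ⊆
      {ω | hitTime B (fun n => X n ω) < hitTime A (fun n => X n ω)} := by
    intro ω hω
    simp only [Set.mem_iUnion] at hω
    obtain ⟨w, hwS, hwC⟩ := hω
    have hx : ∀ i : Fin 8, X i ω = w i := by
      intro i
      have := Set.mem_iInter₂.mp hwC i (Finset.mem_range.mpr i.isLt)
      simpa [ext8, i.isLt] using this
    exact win_hitlt hx (Finset.mem_filter.mp hwS).2
  have hval : μ (⋃ w ∈ S, C w) = (S.card : ℝ≥0∞) * 2⁻¹ ^ 8 := by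
    rw [measure_biUnion_finset hCdisj fun w _ => hCmeas w]
    simp [hCval, Finset.sum_const, nsmul_eq_mul]
  have hlt : (1 / 2 : ℝ≥0∞) < (S.card : ℝ≥0∞) * 2⁻¹ ^ 8 := by
    have h129 : (129 : ℝ≥0∞) ≤ (S.card : ℝ≥0∞) := by exact_mod_cast hcard
    calc (1 / 2 : ℝ≥0∞) < 129 * 2⁻¹ ^ 8 := by
          rw [show ((2 : ℝ≥0∞))⁻¹ ^ 8 = (256 : ℝ≥0∞)⁻¹ by rw [← ENNReal.inv_pow]; norm_num,
            ← div_eq_mul_inv (129 : ℝ≥0∞) 256,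
            ENNReal.lt_div_iff_mul_lt (Or.inl (by norm_num)) (Or.inl (by norm_num)),
            one_div, show (256 : ℝ≥0∞) = 2 * 128 by norm_num, ← mul_assoc,
            ENNReal.inv_mul_cancel (by norm_num) (by norm_num), one_mul]
          norm_num
      _ ≤ (S.card : ℝ≥0∞) * 2⁻¹ ^ 8 :=
          mul_le_mul_left h129 _
  rw [beats]
  calc (1 / 2 : ℝ≥0∞) < (S.card : ℝ≥0∞) * 2⁻¹ ^ 8 := hlt
    _ = μ (⋃ w ∈ S, C w) := hval.symm
    _ ≤ _ := measure_mono hsub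

set_option maxRecDepth 100000 in
/-- The `beats` relation on length-3 patterns is not transitive: there is the cycle
HHT beats HTT, HTT beats TTH, TTH beats THH, and THH beats HHT. -/
theorem stmt_3 {Ω : Type*} [MeasurableSpace Ω] (μ : Measure Ω) [IsProbabilityMeasure μ]
    (X : ℕ → Ω → Bool) (hmeas : ∀ n, Measurable (X n))
    (hindep : iIndepFun X μ)
    (hfair : ∀ n, μ.map (X n) = fairCoin) :
    beats μ X ([true, true, false]) ([true, false, false]) ∧
    beats μ X ([true, false, false]) ([false, false, true]) ∧
    beats μ X ([false, false, true]) ([false, true, true]) ∧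
    beats μ X ([false, true, true]) ([true, true, false]) ∧
    ¬ Transitive (beats μ X) := by
  have h1 : beats μ X ([true, true, false]) ([true, false, false]) :=
    beats_of_count μ X hmeas hindep hfair _ _ (by decide)
  have h2 : beats μ X ([true, false, false]) ([false, false, true]) :=
    beats_of_count μ X hmeas hindep hfair _ _ (by decide)
  have h3 : beats μ X ([false, false, true]) ([false, true, true]) :=
    beats_of_count μ X hmeas hindep hfair _ _ (by decide)
  have h4 : beats μ X ([false, true, true]) ([true, true, false]) :=
    beats_of_count μ X hmeas hindep hfair _ _ (by decide)
  refine ⟨h1, h2, h3, h4, fun htrans => ?_⟩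
  have hself : beats μ X ([true, true, false]) ([true, true, false]) :=
    htrans (htrans (htrans h1 h2) h3) h4
  rw [beats] at hself
  simp only [lt_self_iff_false, Set.setOf_false, measure_empty] at hself
  exact (by simp : ¬ (1 / 2 : ℝ≥0∞) < 0) hself
end

section
/- For distinct length-3 patterns A, B over a fair coin, with Conway's leading numbers AA, AB, BB, BA, the probability that A occurs before B equals (BB - BA) / (AA - AB + BB - BA). -/
open MeasureTheory ProbabilityTheory
open scoped ENNReal

/-- Conway's leading number XY for patterns of a common length k:
XY = ∑_{s=1}^{k} 2^{k-s} · [last (k-s+1) characters of X = first (k-s+1) characters of Y]. -/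
def conwayNum (X Y : List Bool) : ℕ :=
  ∑ s ∈ Finset.Icc 1 X.length,
    if X.drop (s - 1) = Y.take (X.length - s + 1) then 2 ^ (X.length - s) else 0

namespace Stmt4
set_option linter.unusedSectionVars false

variable {Ω : Type*} [MeasurableSpace Ω] {μ : Measure Ω} [IsProbabilityMeasure μ]
  {X : ℕ → Ω → Bool}

lemma coord_meas (hmeas : ∀ n, Measurable (X n)) (hfair : ∀ n, μ.map (X n) = fairCoin)
    (n : ℕ) (b : Bool) : μ (X n ⁻¹' {b}) = 2⁻¹ := by
  have h1 : μ (X n ⁻¹' {b}) = (μ.map (X n)) {b} := by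
    rw [Measure.map_apply (hmeas n) (measurableSet_singleton b)]
  rw [h1, hfair n, fairCoin, PMF.toMeasure_apply_singleton _ _ (measurableSet_singleton b),
    PMF.bernoulli_apply]
  cases b <;> simp

/-- the first-n-coordinates map -/
def firstN (X : ℕ → Ω → Bool) (n : ℕ) : Ω → (Fin n → Bool) := fun ω i => X i ω

lemma indep_head (hindep : iIndepFun X μ)
    (hmeas : ∀ n, Measurable (X n)) (hfair : ∀ n, μ.map (X n) = fairCoin)
    (n : ℕ) (T : Set (Fin n → Bool)) (c : Bool) :
    μ (firstN X n ⁻¹' T ∩ X n ⁻¹' {c}) = μ (firstN X n ⁻¹' T) * 2⁻¹ := by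
  have hST : Disjoint (Finset.range n) ({n} : Finset ℕ) := by
    simp [Finset.disjoint_singleton_right]
  have hI := hindep.indepFun_finset (Finset.range n) {n} hST hmeas
  have hφ : Measurable (fun (v : ↥(Finset.range n) → Bool) (i : Fin n) =>
      v ⟨i.1, Finset.mem_range.2 i.2⟩) :=
    measurable_pi_lambda _ fun i => measurable_pi_apply _
  have hψ : Measurable (fun (v : ↥({n} : Finset ℕ) → Bool) => v ⟨n, Finset.mem_singleton_self n⟩) :=
    measurable_pi_apply _
  have hI2 := hI.comp hφ hψ
  have he1 : (fun (v : ↥(Finset.range n) → Bool) (i : Fin n) =>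
      v ⟨i.1, Finset.mem_range.2 i.2⟩) ∘ (fun a (i : ↥(Finset.range n)) => X i a)
      = firstN X n := rfl
  have he2 : (fun (v : ↥({n} : Finset ℕ) → Bool) => v ⟨n, Finset.mem_singleton_self n⟩) ∘
      (fun a (i : ↥({n} : Finset ℕ)) => X i a) = X n := rfl
  rw [he1, he2] at hI2
  rw [hI2.measure_inter_preimage_eq_mul T {c} T.to_countable.measurableSet
    (measurableSet_singleton c), coord_meas hmeas hfair]

/-- the triple of flips starting at j -/
def tri (X : ℕ → Ω → Bool) (j : ℕ) (ω : Ω) : Bool × Bool × Bool := (X j ω, X (j+1) ω, X (j+2) ω)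

/-- no occurrence of pattern p or q in the first n flips -/
def NoOcc (X : ℕ → Ω → Bool) (p q : Bool × Bool × Bool) (n : ℕ) : Set Ω :=
  {ω | ∀ j, j + 3 ≤ n → tri X j ω ≠ p ∧ tri X j ω ≠ q}

/-- no occurrence within first m+2 flips, and the last two flips are b, c -/
def Ev (X : ℕ → Ω → Bool) (p q : Bool × Bool × Bool) (b c : Bool) (m : ℕ) : Set Ω :=
  NoOcc X p q (m+2) ∩ X m ⁻¹' {b} ∩ X (m+1) ⁻¹' {c}

def EvT (p q : Bool × Bool × Bool) (b c : Bool) (m : ℕ) : Set (Fin (m+2) → Bool) :=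
  {v | (∀ j, (hj : j + 3 ≤ m + 2) → ((v ⟨j, by omega⟩, v ⟨j+1, by omega⟩, v ⟨j+2, by omega⟩) ≠ p
        ∧ (v ⟨j, by omega⟩, v ⟨j+1, by omega⟩, v ⟨j+2, by omega⟩) ≠ q))
    ∧ v ⟨m, by omega⟩ = b ∧ v ⟨m+1, by omega⟩ = c}

lemma Ev_repr (p q : Bool × Bool × Bool) (b c : Bool) (m : ℕ) :
    Ev X p q b c m = firstN X (m+2) ⁻¹' EvT p q b c m := by
  ext ω
  simp only [Ev, NoOcc, EvT, firstN, tri, Set.mem_inter_iff, Set.mem_setOf_eq,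
    Set.mem_preimage, Set.mem_singleton_iff]
  tauto

lemma Ev_measurable (hmeas : ∀ n, Measurable (X n)) (p q : Bool × Bool × Bool) (b c : Bool)
    (m : ℕ) : MeasurableSet (Ev X p q b c m) := by
  rw [Ev_repr]
  exact (EvT p q b c m).to_countable.measurableSet.preimage
    (measurable_pi_lambda _ fun i => hmeas i)

lemma Ev_succ (p q : Bool × Bool × Bool) (b c : Bool) (m : ℕ) :
    Ev X p q b c (m+1) =
      ⋃ a : Bool, ((Ev X p q a b m ∩ X (m+2) ⁻¹' {c}) ∩
        {ω | (a,b,c) ≠ p ∧ (a,b,c) ≠ q}) := by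
  ext ω
  simp only [Ev, NoOcc, Set.mem_iUnion, Set.mem_inter_iff, Set.mem_setOf_eq,
    Set.mem_preimage, Set.mem_singleton_iff]
  constructor
  · rintro ⟨⟨h1, h2⟩, h3⟩
    refine ⟨X m ω, ⟨⟨⟨fun j hj => h1 j (by omega), rfl⟩, h2⟩, h3⟩, ?_⟩
    have := h1 m (by omega)
    simpa [tri, h2, h3] using this
  · rintro ⟨a, ⟨⟨⟨⟨h1, h2⟩, h3⟩, h4⟩, h5⟩⟩
    refine ⟨⟨fun j hj => ?_, h3⟩, h4⟩
    rcases Nat.lt_or_ge j m with hj' | hj'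
    · exact h1 j (by omega)
    · have : j = m := by omega
      subst this
      simpa [tri, h2, h3, h4] using h5


lemma G_zero (hindep : iIndepFun X μ)
    (hmeas : ∀ n, Measurable (X n)) (hfair : ∀ n, μ.map (X n) = fairCoin)
    (p q : Bool × Bool × Bool) (b c : Bool) : μ (Ev X p q b c 0) = 4⁻¹ := by
  have h0 : Ev X p q b c 0 = firstN X 1 ⁻¹' {v | v 0 = b} ∩ X 1 ⁻¹' {c} := by
    ext ω
    simp only [Ev, NoOcc, firstN, Set.mem_inter_iff, Set.mem_setOf_eq, Set.mem_preimage,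
      Set.mem_singleton_iff]
    constructor
    · rintro ⟨⟨-, h2⟩, h3⟩; exact ⟨h2, h3⟩
    · rintro ⟨h2, h3⟩; exact ⟨⟨fun j hj => by omega, h2⟩, h3⟩
  have h1 : firstN X 1 ⁻¹' {v | v 0 = b} = X 0 ⁻¹' {b} := rfl
  rw [h0, indep_head hindep hmeas hfair, h1, coord_meas hmeas hfair]
  rw [show (2:ℝ≥0∞)⁻¹ * 2⁻¹ = (4:ℝ≥0∞)⁻¹ by
    rw [← ENNReal.mul_inv (Or.inl (by norm_num)) (Or.inl (by norm_num))]; norm_num]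

lemma measF (hindep : iIndepFun X μ)
    (hmeas : ∀ n, Measurable (X n)) (hfair : ∀ n, μ.map (X n) = fairCoin)
    (p q : Bool × Bool × Bool) (a b c : Bool) (m : ℕ) :
    μ ((Ev X p q a b m ∩ X (m+2) ⁻¹' {c}) ∩ {ω | (a,b,c) ≠ p ∧ (a,b,c) ≠ q}) =
      if (a,b,c) = p ∨ (a,b,c) = q then 0 else μ (Ev X p q a b m) * 2⁻¹ := by
  by_cases hc : (a,b,c) = p ∨ (a,b,c) = q
  · have : {ω : Ω | (a,b,c) ≠ p ∧ (a,b,c) ≠ q} = ∅ := by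
      ext ω; simp only [Set.mem_setOf_eq, Set.mem_empty_iff_false, iff_false]; tauto
    simp [hc, this]
  · have : {ω : Ω | (a,b,c) ≠ p ∧ (a,b,c) ≠ q} = Set.univ := by
      ext ω; simp only [Set.mem_setOf_eq, Set.mem_univ, iff_true]; tauto
    rw [this, Set.inter_univ, if_neg hc, Ev_repr, indep_head hindep hmeas hfair, ← Ev_repr]

lemma G_succ (hindep : iIndepFun X μ)
    (hmeas : ∀ n, Measurable (X n)) (hfair : ∀ n, μ.map (X n) = fairCoin)
    (p q : Bool × Bool × Bool) (b c : Bool) (m : ℕ) :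
    μ (Ev X p q b c (m+1)) =
      (if (true,b,c) = p ∨ (true,b,c) = q then 0 else μ (Ev X p q true b m) * 2⁻¹)
      + (if (false,b,c) = p ∨ (false,b,c) = q then 0 else μ (Ev X p q false b m) * 2⁻¹) := by
  rw [Ev_succ]
  have hU : (⋃ a : Bool, ((Ev X p q a b m ∩ X (m+2) ⁻¹' {c}) ∩
      {ω | (a,b,c) ≠ p ∧ (a,b,c) ≠ q})) =
      ((Ev X p q true b m ∩ X (m+2) ⁻¹' {c}) ∩ {ω | (true,b,c) ≠ p ∧ (true,b,c) ≠ q}) ∪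
      ((Ev X p q false b m ∩ X (m+2) ⁻¹' {c}) ∩ {ω | (false,b,c) ≠ p ∧ (false,b,c) ≠ q}) := by
    ext ω
    simp only [Set.mem_iUnion, Set.mem_union, Bool.exists_bool]
    tauto
  rw [hU, measure_union ?hd ?hm, measF hindep hmeas hfair, measF hindep hmeas hfair]
  case hd =>
    have h1 : ((Ev X p q true b m ∩ X (m+2) ⁻¹' {c}) ∩ {ω | (true,b,c) ≠ p ∧ (true,b,c) ≠ q})
        ⊆ X m ⁻¹' {true} := fun ω hω => hω.1.1.1.2
    have h2 : ((Ev X p q false b m ∩ X (m+2) ⁻¹' {c}) ∩ {ω | (false,b,c) ≠ p ∧ (false,b,c) ≠ q})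
        ⊆ X m ⁻¹' {false} := fun ω hω => hω.1.1.1.2
    refine Set.disjoint_of_subset h1 h2 ?_
    rw [Set.disjoint_iff_inter_eq_empty, ← Set.preimage_inter,
      show ({true} ∩ {false} : Set Bool) = ∅ by simp, Set.preimage_empty]
  case hm =>
    exact ((Ev_measurable hmeas p q false b m).inter
      ((measurableSet_singleton _).preimage (hmeas _))).inter (MeasurableSet.const _)

lemma indep_head3 (hindep : iIndepFun X μ)
    (hmeas : ∀ n, Measurable (X n)) (n : ℕ) (T : Set (Fin n → Bool))
    (U : Set (Bool × Bool × Bool)) :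
    μ (firstN X n ⁻¹' T ∩ tri X n ⁻¹' U) = μ (firstN X n ⁻¹' T) * μ (tri X n ⁻¹' U) := by
  have hST : Disjoint (Finset.range n) ({n, n+1, n+2} : Finset ℕ) := by
    rw [Finset.disjoint_left]
    intro a ha ha'
    simp only [Finset.mem_range] at ha
    simp only [Finset.mem_insert, Finset.mem_singleton] at ha'
    omega
  have hI := hindep.indepFun_finset (Finset.range n) {n, n+1, n+2} hST hmeas
  have hφ : Measurable (fun (v : ↥(Finset.range n) → Bool) (i : Fin n) =>
      v ⟨i.1, Finset.mem_range.2 i.2⟩) :=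
    measurable_pi_lambda _ fun i => measurable_pi_apply _
  have hψ : Measurable (fun (v : ↥({n, n+1, n+2} : Finset ℕ) → Bool) =>
      ((v ⟨n, by simp⟩, v ⟨n+1, by simp⟩, v ⟨n+2, by simp⟩) : Bool × Bool × Bool)) :=
    (measurable_pi_apply _).prodMk ((measurable_pi_apply _).prodMk (measurable_pi_apply _))
  have hI2 := hI.comp hφ hψ
  have he1 : (fun (v : ↥(Finset.range n) → Bool) (i : Fin n) =>
      v ⟨i.1, Finset.mem_range.2 i.2⟩) ∘ (fun a (i : ↥(Finset.range n)) => X i a)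
      = firstN X n := rfl
  have he2 : (fun (v : ↥({n, n+1, n+2} : Finset ℕ) → Bool) =>
      ((v ⟨n, by simp⟩, v ⟨n+1, by simp⟩, v ⟨n+2, by simp⟩) : Bool × Bool × Bool)) ∘
      (fun a (i : ↥({n, n+1, n+2} : Finset ℕ)) => X i a) = tri X n := rfl
  rw [he1, he2] at hI2
  exact hI2.measure_inter_preimage_eq_mul T U T.to_countable.measurableSet
    U.to_countable.measurableSet

lemma tri_meas (hindep : iIndepFun X μ)
    (hmeas : ∀ n, Measurable (X n)) (hfair : ∀ n, μ.map (X n) = fairCoin)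
    (n : ℕ) (p : Bool × Bool × Bool) : μ (tri X n ⁻¹' {p}) = 8⁻¹ := by
  obtain ⟨x, y, z⟩ := p
  have h1 : tri X n ⁻¹' {(x,y,z)} =
      (firstN X (n+2) ⁻¹' {v | v ⟨n, by omega⟩ = x ∧ v ⟨n+1, by omega⟩ = y}) ∩
        X (n+2) ⁻¹' {z} := by
    ext ω
    simp only [tri, firstN, Set.mem_preimage, Set.mem_singleton_iff, Set.mem_inter_iff,
      Set.mem_setOf_eq, Prod.mk.injEq]
    tauto
  have h2 : (firstN X (n+2) ⁻¹' {v | v ⟨n, by omega⟩ = x ∧ v ⟨n+1, by omega⟩ = y} : Set Ω) =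
      (firstN X (n+1) ⁻¹' {v | v ⟨n, by omega⟩ = x}) ∩ X (n+1) ⁻¹' {y} := by
    ext ω
    simp only [firstN, Set.mem_preimage, Set.mem_setOf_eq, Set.mem_inter_iff,
      Set.mem_singleton_iff]
  have h3 : (firstN X (n+1) ⁻¹' {v | v ⟨n, by omega⟩ = x} : Set Ω) = X n ⁻¹' {x} := rfl
  rw [h1, indep_head hindep hmeas hfair, h2, indep_head hindep hmeas hfair, h3,
    coord_meas hmeas hfair]
  rw [show (2:ℝ≥0∞)⁻¹ * 2⁻¹ * 2⁻¹ = (8:ℝ≥0∞)⁻¹ by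
    rw [← ENNReal.mul_inv (Or.inl (by norm_num)) (Or.inl (by norm_num)),
      ← ENNReal.mul_inv (Or.inl (by norm_num)) (Or.inl (by norm_num))]
    norm_num]

lemma triNe_meas (hindep : iIndepFun X μ)
    (hmeas : ∀ n, Measurable (X n)) (hfair : ∀ n, μ.map (X n) = fairCoin)
    (n : ℕ) (p : Bool × Bool × Bool) : μ (tri X n ⁻¹' {p}ᶜ) = 7 * 8⁻¹ := by
  have htri : Measurable (tri X n) := (hmeas n).prodMk (((hmeas (n+1)).prodMk (hmeas (n+2))))
  have hms : MeasurableSet (tri X n ⁻¹' {p}) := (measurableSet_singleton p).preimage htri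
  rw [Set.preimage_compl, measure_compl hms (measure_ne_top μ _),
    measure_univ, tri_meas hindep hmeas hfair]
  rw [ENNReal.sub_eq_of_eq_add (by norm_num)]
  rw [show (7:ℝ≥0∞) * 8⁻¹ + 8⁻¹ = 8 * 8⁻¹ by ring]
  rw [ENNReal.mul_inv_cancel (by norm_num) (by norm_num)]

/-- blocks event: none of the k disjoint 3-blocks equals p -/
def Bl (X : ℕ → Ω → Bool) (p : Bool × Bool × Bool) (k : ℕ) : Set Ω :=
  {ω | ∀ j, j < k → tri X (3*j) ω ≠ p}

def BlT (p : Bool × Bool × Bool) (k : ℕ) : Set (Fin (3*k) → Bool) :=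
  {v | ∀ j, (hj : j < k) →
    ((v ⟨3*j, by omega⟩, v ⟨3*j+1, by omega⟩, v ⟨3*j+2, by omega⟩) : Bool × Bool × Bool) ≠ p}

lemma Bl_repr (p : Bool × Bool × Bool) (k : ℕ) : Bl X p k = firstN X (3*k) ⁻¹' BlT p k := by
  ext ω
  simp only [Bl, BlT, firstN, tri, Set.mem_setOf_eq, Set.mem_preimage]

lemma Bl_succ_set (p : Bool × Bool × Bool) (k : ℕ) :
    Bl X p (k+1) = Bl X p k ∩ tri X (3*k) ⁻¹' {p}ᶜ := by
  ext ω
  simp only [Bl, Set.mem_setOf_eq, Set.mem_inter_iff, Set.mem_preimage, Set.mem_compl_iff,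
    Set.mem_singleton_iff]
  constructor
  · intro h
    exact ⟨fun j hj => h j (by omega), h k (by omega)⟩
  · rintro ⟨h1, h2⟩ j hj
    rcases Nat.lt_or_ge j k with hj' | hj'
    · exact h1 j hj'
    · have : j = k := by omega
      subst this; exact h2

lemma Bl_meas (hindep : iIndepFun X μ)
    (hmeas : ∀ n, Measurable (X n)) (hfair : ∀ n, μ.map (X n) = fairCoin)
    (p : Bool × Bool × Bool) (k : ℕ) : μ (Bl X p k) = (7 * 8⁻¹ : ℝ≥0∞) ^ k := by
  induction k with
  | zero =>
    have : Bl X p 0 = Set.univ := by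
      ext ω; simp [Bl]
    simp [this]
  | succ k ih =>
    rw [Bl_succ_set, Bl_repr, indep_head3 hindep hmeas, ← Bl_repr, ih,
      triNe_meas hindep hmeas hfair, pow_succ]

lemma Ev_le (hindep : iIndepFun X μ)
    (hmeas : ∀ n, Measurable (X n)) (hfair : ∀ n, μ.map (X n) = fairCoin)
    (p q : Bool × Bool × Bool) (b c : Bool) (m : ℕ) :
    μ (Ev X p q b c m) ≤ (7 * 8⁻¹ : ℝ≥0∞) ^ ((m+2)/3) := by
  rw [← Bl_meas hindep hmeas hfair p]
  refine measure_mono ?_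
  rintro ω ⟨⟨h1, -⟩, -⟩
  intro j hj
  exact (h1 (3*j) (by omega)).1

lemma t_ne_top (hindep : iIndepFun X μ)
    (hmeas : ∀ n, Measurable (X n)) (hfair : ∀ n, μ.map (X n) = fairCoin)
    (p q : Bool × Bool × Bool) (b c : Bool) :
    (∑' m, μ (Ev X p q b c m)) ≠ ⊤ := by
  have hr1 : (7 * 8⁻¹ : ℝ≥0∞) ≤ 1 := by
    rw [show (1:ℝ≥0∞) = 8 * 8⁻¹ from (ENNReal.mul_inv_cancel (by norm_num) (by norm_num)).symm]
    exact mul_le_mul_left (by norm_num) _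
  have h1 : (∑' m, μ (Ev X p q b c m)) ≤ ∑' m, (7 * 8⁻¹ : ℝ≥0∞) ^ (m/3) := by
    refine ENNReal.tsum_le_tsum fun m => le_trans (Ev_le hindep hmeas hfair p q b c m) ?_
    exact pow_le_pow_of_le_one (by norm_num) hr1 (Nat.div_le_div_right (by omega))
  refine ne_top_of_le_ne_top ?_ h1
  set e := Nat.divModEquiv 3 with he_def
  have he : ∀ x : ℕ × Fin 3, ((e.symm x : ℕ) / 3) = x.1 := by
    intro x
    have h2 := x.2.isLt
    simp only [he_def, Nat.divModEquiv_symm_apply]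
    omega
  rw [← (e.symm).tsum_eq (fun m => (7 * 8⁻¹ : ℝ≥0∞) ^ (m/3))]
  have : ∀ x : ℕ × Fin 3, (7 * 8⁻¹ : ℝ≥0∞) ^ ((e.symm x : ℕ)/3) = (7 * 8⁻¹ : ℝ≥0∞) ^ x.1 := by
    intro x; rw [he x]
  rw [tsum_congr this, ENNReal.tsum_prod (f := fun a (_ : Fin 3) => (7 * 8⁻¹ : ℝ≥0∞) ^ a)]
  have hsum : ∀ k : ℕ, (∑' _ : Fin 3, (7 * 8⁻¹ : ℝ≥0∞) ^ k) = 3 * (7 * 8⁻¹ : ℝ≥0∞) ^ k := by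
    intro k
    rw [tsum_fintype]
    simp [Finset.sum_const, mul_comm]
  rw [tsum_congr hsum, ENNReal.tsum_mul_left, ENNReal.tsum_geometric]
  have h2 : (1 : ℝ≥0∞) - 7 * 8⁻¹ = 8⁻¹ := by
    rw [ENNReal.sub_eq_of_eq_add (ENNReal.mul_ne_top (by norm_num)
      (ENNReal.inv_ne_top.2 (by norm_num)))]
    rw [show (8:ℝ≥0∞)⁻¹ + 7 * 8⁻¹ = 8 * 8⁻¹ by ring]
    rw [ENNReal.mul_inv_cancel (by norm_num) (by norm_num)]
  rw [h2, inv_inv]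
  exact ENNReal.mul_ne_top (by norm_num) (by norm_num)

lemma t_rec (hindep : iIndepFun X μ)
    (hmeas : ∀ n, Measurable (X n)) (hfair : ∀ n, μ.map (X n) = fairCoin)
    (p q : Bool × Bool × Bool) (b c : Bool) :
    (∑' m, μ (Ev X p q b c m)) = 4⁻¹ +
      ((if (true,b,c) = p ∨ (true,b,c) = q then 0 else (∑' m, μ (Ev X p q true b m)) * 2⁻¹)
      + (if (false,b,c) = p ∨ (false,b,c) = q then 0
          else (∑' m, μ (Ev X p q false b m)) * 2⁻¹)) := by
  rw [tsum_eq_zero_add' ENNReal.summable, G_zero hindep hmeas hfair]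
  congr 1
  rw [tsum_congr (fun m => G_succ hindep hmeas hfair p q b c m), ENNReal.tsum_add]
  congr 1
  · by_cases hc : (true,b,c) = p ∨ (true,b,c) = q
    · simp [hc]
    · simp only [if_neg hc]
      exact ENNReal.tsum_mul_right
  · by_cases hc : (false,b,c) = p ∨ (false,b,c) = q
    · simp [hc]
    · simp only [if_neg hc]
      exact ENNReal.tsum_mul_right

lemma occursAt_iff (x : ℕ → Bool) (a0 a1 a2 : Bool) (n : ℕ) :
    occursAt [a0,a1,a2] x n ↔ 3 ≤ n ∧ x (n-3) = a0 ∧ x (n-2) = a1 ∧ x (n-1) = a2 := by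
  constructor
  · rintro ⟨hlen, h⟩
    simp only [List.length_cons, List.length_nil] at hlen h
    have h0 := h 0 (by norm_num)
    have h1 := h 1 (by norm_num)
    have h2 := h 2 (by norm_num)
    refine ⟨hlen, ?_, ?_, ?_⟩
    · simpa using h0
    · rw [show n - 3 + 1 = n - 2 by omega] at h1; simpa using h1
    · rw [show n - 3 + 2 = n - 1 by omega] at h2; simpa using h2
  · rintro ⟨hlen, h0, h1, h2⟩
    refine ⟨by simpa using hlen, ?_⟩
    intro i hi
    simp only [List.length_cons, List.length_nil] at hi ⊢
    interval_cases i
    · simpa using h0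
    · rw [show n - (0+1+1+1) + 1 = n - 2 by omega]; simpa using h1
    · rw [show n - (0+1+1+1) + 2 = n - 1 by omega]; simpa using h2

lemma hit_lt_iff (x : ℕ → Bool) (P Q : List Bool) :
    hitTime P x < hitTime Q x ↔
      ∃ n, occursAt P x n ∧ (∀ m, m < n → ¬ occursAt P x m) ∧
        (∀ m, m ≤ n → ¬ occursAt Q x m) := by
  constructor
  · intro h
    have hne : {n | occursAt P x n}.Nonempty := by
      by_contra hc
      rw [Set.not_nonempty_iff_eq_empty] at hc
      rw [hitTime, hc] at h
      simp only [Set.image_empty, sInf_empty] at h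
      exact not_top_lt h
    set n := sInf {n | occursAt P x n} with hn
    have hmem : n ∈ {n | occursAt P x n} := Nat.sInf_mem hne
    have hlb : (n : ℝ≥0∞) ≤ hitTime P x := by
      refine le_sInf ?_
      rintro y ⟨k, hk, rfl⟩
      exact_mod_cast Nat.cast_le.2 (Nat.sInf_le hk)
    refine ⟨n, hmem, fun m hm => Nat.notMem_of_lt_sInf hm, fun m hm hQ => ?_⟩
    have hub : hitTime Q x ≤ (m : ℝ≥0∞) := sInf_le ⟨m, hQ, rfl⟩
    have : (n : ℝ≥0∞) < (m : ℝ≥0∞) := lt_of_le_of_lt hlb (lt_of_lt_of_le h hub)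
    exact absurd (Nat.cast_lt.1 this) (by omega)
  · rintro ⟨n, h1, -, h3⟩
    have hP : hitTime P x ≤ (n : ℝ≥0∞) := sInf_le ⟨n, h1, rfl⟩
    have hQ : ((n:ℝ≥0∞) + 1) ≤ hitTime Q x := by
      refine le_sInf ?_
      rintro y ⟨k, hk, rfl⟩
      have : n + 1 ≤ k := by
        by_contra hc
        exact h3 k (by omega) hk
      exact_mod_cast Nat.cast_le.2 this
    refine lt_of_le_of_lt hP (lt_of_lt_of_le ?_ hQ)
    exact ENNReal.lt_add_right (by simp) one_ne_zero

lemma target_eq (a0 a1 a2 b0 b1 b2 : Bool) (hne : (a0,a1,a2) ≠ ((b0,b1,b2) : Bool×Bool×Bool)) :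
    {ω | hitTime [a0,a1,a2] (fun n => X n ω) < hitTime [b0,b1,b2] (fun n => X n ω)}
      = ⋃ m, (Ev X (a0,a1,a2) (b0,b1,b2) a0 a1 m ∩ X (m+2) ⁻¹' {a2}) := by
  ext ω
  simp only [Set.mem_setOf_eq, Set.mem_iUnion, Set.mem_inter_iff, Set.mem_preimage,
    Set.mem_singleton_iff, hit_lt_iff, Ev, NoOcc]
  constructor
  · rintro ⟨n, h1, h2, h3⟩
    rw [occursAt_iff] at h1
    obtain ⟨hn3, e0, e1, e2⟩ := h1
    refine ⟨n-3, ⟨⟨⟨fun j hj => ⟨?_, ?_⟩, ?_⟩, ?_⟩, ?_⟩⟩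
    · intro htri
      obtain ⟨f0, f1, f2⟩ : X j ω = a0 ∧ X (j+1) ω = a1 ∧ X (j+2) ω = a2 := by
        simpa [tri, Prod.ext_iff] using htri
      refine h2 (j+3) (by omega) ?_
      rw [occursAt_iff]
      exact ⟨by omega, by rw [show j+3-3 = j by omega]; exact f0,
        by rw [show j+3-2 = j+1 by omega]; exact f1,
        by rw [show j+3-1 = j+2 by omega]; exact f2⟩
    · intro htri
      obtain ⟨f0, f1, f2⟩ : X j ω = b0 ∧ X (j+1) ω = b1 ∧ X (j+2) ω = b2 := by
        simpa [tri, Prod.ext_iff] using htri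
      refine h3 (j+3) (by omega) ?_
      rw [occursAt_iff]
      exact ⟨by omega, by rw [show j+3-3 = j by omega]; exact f0,
        by rw [show j+3-2 = j+1 by omega]; exact f1,
        by rw [show j+3-1 = j+2 by omega]; exact f2⟩
    · exact e0
    · rw [show n-3+1 = n-2 by omega]; exact e1
    · rw [show n-3+2 = n-1 by omega]; exact e2
  · rintro ⟨m, ⟨⟨⟨hno, e0⟩, e1⟩, e2⟩⟩
    refine ⟨m+3, ?_, ?_, ?_⟩
    · rw [occursAt_iff]
      exact ⟨by omega, by rw [show m+3-3 = m by omega]; exact e0,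
        by rw [show m+3-2 = m+1 by omega]; exact e1,
        by rw [show m+3-1 = m+2 by omega]; exact e2⟩
    · intro k hk hocc
      rw [occursAt_iff] at hocc
      obtain ⟨hk3, f0, f1, f2⟩ := hocc
      refine (hno (k-3) (by omega)).1 ?_
      simp only [tri, Prod.mk.injEq]
      exact ⟨f0, by rw [show k-3+1 = k-2 by omega]; exact f1,
        by rw [show k-3+2 = k-1 by omega]; exact f2⟩
    · intro k hk hocc
      rw [occursAt_iff] at hocc
      obtain ⟨hk3, f0, f1, f2⟩ := hocc
      rcases Nat.lt_or_ge k (m+3) with hk' | hk'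
      · refine (hno (k-3) (by omega)).2 ?_
        simp only [tri, Prod.mk.injEq]
        exact ⟨f0, by rw [show k-3+1 = k-2 by omega]; exact f1,
          by rw [show k-3+2 = k-1 by omega]; exact f2⟩
      · have hkm : k = m + 3 := by omega
        subst hkm
        rw [show m+3-3 = m by omega] at f0
        rw [show m+3-2 = m+1 by omega] at f1
        rw [show m+3-1 = m+2 by omega] at f2
        exact hne (by rw [← e0, ← e1, ← e2, ← f0, ← f1, ← f2])

lemma target_meas (hindep : iIndepFun X μ)
    (hmeas : ∀ n, Measurable (X n)) (hfair : ∀ n, μ.map (X n) = fairCoin)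
    (a0 a1 a2 b0 b1 b2 : Bool) (hne : (a0,a1,a2) ≠ ((b0,b1,b2) : Bool×Bool×Bool)) :
    μ {ω | hitTime [a0,a1,a2] (fun n => X n ω) < hitTime [b0,b1,b2] (fun n => X n ω)}
      = (∑' m, μ (Ev X (a0,a1,a2) (b0,b1,b2) a0 a1 m)) * 2⁻¹ := by
  rw [target_eq a0 a1 a2 b0 b1 b2 hne]
  have hkey : ∀ u v : ℕ, u < v →
      Disjoint (Ev X (a0,a1,a2) (b0,b1,b2) a0 a1 u ∩ X (u+2) ⁻¹' {a2})
        (Ev X (a0,a1,a2) (b0,b1,b2) a0 a1 v ∩ X (v+2) ⁻¹' {a2}) := by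
    intro u v huv
    rw [Set.disjoint_left]
    rintro ω ⟨⟨⟨hnoU, eu0⟩, eu1⟩, eu2⟩ ⟨⟨⟨hnoV, -⟩, -⟩, -⟩
    refine (hnoV u (by omega)).1 ?_
    simp only [tri, Prod.mk.injEq]
    exact ⟨eu0, eu1, eu2⟩
  rw [measure_iUnion ?hd ?hm]
  case hd =>
    intro u v huv
    rcases huv.lt_or_gt with h | h
    · exact hkey u v h
    · exact (hkey v u h).symm
  case hm =>
    intro m
    exact (Ev_measurable hmeas _ _ _ _ m).inter
      ((measurableSet_singleton _).preimage (hmeas _))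
  rw [← ENNReal.tsum_mul_right]
  refine tsum_congr fun m => ?_
  rw [Ev_repr, indep_head hindep hmeas hfair, ← Ev_repr]

lemma list3 (l : List Bool) (h : l.length = 3) : ∃ x y z, l = [x,y,z] := by
  match l, h with
  | [x,y,z], _ => exact ⟨x,y,z,rfl⟩

lemma conwayNum3 (L M : List Bool) (h : L.length = 3) :
    conwayNum L M = (if L.drop 0 = M.take 3 then 4 else 0)
      + ((if L.drop 1 = M.take 2 then 2 else 0) + (if L.drop 2 = M.take 1 then 1 else 0)) := by
  rw [conwayNum, h, show (Finset.Icc 1 3 : Finset ℕ) = {1,2,3} by decide,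
    Finset.sum_insert (by decide), Finset.sum_insert (by decide), Finset.sum_singleton]
  norm_num

lemma r_rec (hindep : iIndepFun X μ)
    (hmeas : ∀ n, Measurable (X n)) (hfair : ∀ n, μ.map (X n) = fairCoin)
    (p q : Bool × Bool × Bool) (b c : Bool) :
    (∑' m, μ (Ev X p q b c m)).toReal = 4⁻¹ +
      ((if (true,b,c) = p ∨ (true,b,c) = q then (0:ℝ)
          else (∑' m, μ (Ev X p q true b m)).toReal * 2⁻¹)
      + (if (false,b,c) = p ∨ (false,b,c) = q then (0:ℝ)
          else (∑' m, μ (Ev X p q false b m)).toReal * 2⁻¹)) := by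
  have h := t_rec hindep hmeas hfair p q b c
  have h1t : (if (true,b,c) = p ∨ (true,b,c) = q then 0
      else (∑' m, μ (Ev X p q true b m)) * 2⁻¹) ≠ ⊤ := by
    split
    · exact ENNReal.zero_ne_top
    · exact ENNReal.mul_ne_top (t_ne_top hindep hmeas hfair p q true b) (by norm_num)
  have h2t : (if (false,b,c) = p ∨ (false,b,c) = q then 0
      else (∑' m, μ (Ev X p q false b m)) * 2⁻¹) ≠ ⊤ := by
    split
    · exact ENNReal.zero_ne_top
    · exact ENNReal.mul_ne_top (t_ne_top hindep hmeas hfair p q false b) (by norm_num)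
  rw [h, ENNReal.toReal_add (by norm_num) (ENNReal.add_ne_top.2 ⟨h1t, h2t⟩),
    ENNReal.toReal_add h1t h2t, apply_ite ENNReal.toReal, apply_ite ENNReal.toReal]
  norm_num [ENNReal.toReal_mul, ENNReal.toReal_inv]

lemma conwayNum3' (x0 x1 x2 y0 y1 y2 : Bool) :
    conwayNum ([x0,x1,x2]) ([y0,y1,y2]) = (if x0 = y0 ∧ x1 = y1 ∧ x2 = y2 then 4 else 0)
      + ((if x1 = y0 ∧ x2 = y1 then 2 else 0) + (if x2 = y0 then 1 else 0)) := by
  cases x0 <;> cases x1 <;> cases x2 <;> cases y0 <;> cases y1 <;> cases y2 <;> decide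

end Stmt4

set_option maxHeartbeats 2000000

/-- For distinct length-3 fair-coin patterns A, B,
P(A before B) = (BB - BA) / (AA - AB + BB - BA) with Conway's leading numbers. -/
theorem stmt_4 {Ω : Type*} [MeasurableSpace Ω] (μ : Measure Ω) [IsProbabilityMeasure μ]
    (X : ℕ → Ω → Bool) (hmeas : ∀ n, Measurable (X n))
    (hindep : iIndepFun X μ)
    (hfair : ∀ n, μ.map (X n) = fairCoin)
    (A B : List Bool) (hA : A.length = 3) (hB : B.length = 3) (hAB : A ≠ B) :
    (μ {ω | hitTime A (fun n => X n ω) < hitTime B (fun n => X n ω)}).toReal =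
      ((conwayNum B B : ℝ) - conwayNum B A) /
        ((conwayNum A A : ℝ) - conwayNum A B + (conwayNum B B : ℝ) - conwayNum B A) := by
  obtain ⟨a0,a1,a2,rfl⟩ := Stmt4.list3 A hA
  obtain ⟨b0,b1,b2,rfl⟩ := Stmt4.list3 B hB
  have hne : (a0,a1,a2) ≠ ((b0,b1,b2) : Bool×Bool×Bool) := by
    simp only [ne_eq, Prod.mk.injEq]
    intro hcon
    exact hAB (by simp [hcon.1, hcon.2.1, hcon.2.2])
  have hμ := Stmt4.target_meas hindep hmeas hfair a0 a1 a2 b0 b1 b2 hne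
  rw [hμ, ENNReal.toReal_mul]
  have keytt := Stmt4.r_rec hindep hmeas hfair (a0,a1,a2) (b0,b1,b2) true true
  have keytf := Stmt4.r_rec hindep hmeas hfair (a0,a1,a2) (b0,b1,b2) true false
  have keyft := Stmt4.r_rec hindep hmeas hfair (a0,a1,a2) (b0,b1,b2) false true
  have keyff := Stmt4.r_rec hindep hmeas hfair (a0,a1,a2) (b0,b1,b2) false false
  have cBB := Stmt4.conwayNum3' b0 b1 b2 b0 b1 b2
  have cBA := Stmt4.conwayNum3' b0 b1 b2 a0 a1 a2
  have cAA := Stmt4.conwayNum3' a0 a1 a2 a0 a1 a2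
  have cAB := Stmt4.conwayNum3' a0 a1 a2 b0 b1 b2
  rw [cBB, cBA, cAA, cAB]
  rw [show ((2:ℝ≥0∞)⁻¹).toReal = 2⁻¹ by norm_num [ENNReal.toReal_inv]]
  cases a0 <;> cases a1 <;> cases a2 <;> cases b0 <;> cases b1 <;> cases b2
  all_goals first
    | exact absurd rfl hAB
    | (simp only [Prod.mk.injEq, reduceCtorEq, eq_self_iff_true, and_self, and_true, true_and,
         and_false, false_and, or_self, or_true, true_or, or_false, false_or, if_true, if_false,
         ite_true, ite_false] at keytt keytf keyft keyff ⊢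
       norm_num
       linarith)
end

section
/- For a fair coin and distinct length-3 patterns A = HTH and B = TTH, neither a substring of the other, the expected waiting time until the first occurrence of A or B equals (R_A(A)·R_B(B) − R_A(B)·R_B(A)) / (R_A(A) + R_B(B) − R_A(B) − R_B(A)) = 5, where R_X(Y) = 2·(Conway leading number XY). -/
open MeasureTheory ProbabilityTheory
open scoped ENNReal

/-- R_X(Y) = 2·(Conway leading number XY) for length-3 patterns:
R_X(Y) = ∑_{s=1}^{3} 2^{4-s} · [trailing (4-s) characters of X = leading (4-s) characters of Y]. -/
def R3 (X Y : List Bool) : ℕ :=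
  ∑ s ∈ Finset.Icc 1 3, if X.drop (s - 1) = Y.take (4 - s) then 2 ^ (4 - s) else 0

/-- The pattern A = HTH. -/
def patA : List Bool := [true, false, true]

/-- The pattern B = TTH. -/
def patB : List Bool := [false, false, true]


open scoped NNReal Classical

/-- No occurrence of the pair (tails, heads) at adjacent positions `j, j+1` with
`1 ≤ j` and `j + 1 ≤ L`. -/
def noFT (x : ℕ → Bool) (L : ℕ) : Prop :=
  ∀ j, 1 ≤ j → j + 1 ≤ L → ¬(x j = false ∧ x (j+1) = true)

lemma occurs_iff (x : ℕ → Bool) (n : ℕ) :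
    (occursAt patA x n ∨ occursAt patB x n) ↔
      3 ≤ n ∧ x (n-2) = false ∧ x (n-1) = true := by
  constructor
  · rintro (⟨hn, h⟩ | ⟨hn, h⟩) <;>
    · simp only [patA, patB, List.length_cons, List.length_nil] at hn h
      have h1 := h 1 (by norm_num)
      have h2 := h 2 (by norm_num)
      rw [show n - 3 + 1 = n - 2 by omega] at h1
      rw [show n - 3 + 2 = n - 1 by omega] at h2
      exact ⟨hn, h1, h2⟩
  · rintro ⟨hn, h1, h2⟩
    cases hx : x (n - 3)
    · right
      refine ⟨hn, ?_⟩
      intro i hi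
      simp only [patB, List.length_cons, List.length_nil] at hi ⊢
      interval_cases i <;>
        simp only [List.get] <;>
        [skip; rw [show n - 3 + 1 = n - 2 by omega]; rw [show n - 3 + 2 = n - 1 by omega]] <;>
        simp [hx, h1, h2]
    · left
      refine ⟨hn, ?_⟩
      intro i hi
      simp only [patA, List.length_cons, List.length_nil] at hi ⊢
      interval_cases i <;>
        simp only [List.get] <;>
        [skip; rw [show n - 3 + 1 = n - 2 by omega]; rw [show n - 3 + 2 = n - 1 by omega]] <;>
        simp [hx, h1, h2]

lemma min_hitTime (x : ℕ → Bool) :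
    min (hitTime patA x) (hitTime patB x)
      = sInf ((fun n : ℕ => (n:ℝ≥0∞)) '' {n | 3 ≤ n ∧ x (n-2) = false ∧ x (n-1) = true}) := by
  rw [hitTime, hitTime, ← sInf_union, ← Set.image_union]
  have hs : ({n | occursAt patA x n} ∪ {n | occursAt patB x n})
      = {n | 3 ≤ n ∧ x (n-2) = false ∧ x (n-1) = true} :=
    Set.ext fun n => by rw [Set.mem_union]; exact occurs_iff x n
  rw [hs]

lemma lt_min_hitTime (x : ℕ → Bool) (n : ℕ) :
    ((n:ℝ≥0∞) < min (hitTime patA x) (hitTime patB x)) ↔ noFT x (n-1) := by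
  rw [min_hitTime]
  constructor
  · intro h j hj1 hj2
    rintro ⟨hf, ht⟩
    have hmem : ((j+2 : ℕ) : ℝ≥0∞) ∈
        (fun n : ℕ => (n:ℝ≥0∞)) '' {n | 3 ≤ n ∧ x (n-2) = false ∧ x (n-1) = true} := by
      refine ⟨j+2, ⟨by omega, ?_, ?_⟩, rfl⟩
      · rw [show j+2-2 = j by omega]; exact hf
      · rw [show j+2-1 = j+1 by omega]; exact ht
    have := lt_of_lt_of_le h (sInf_le hmem)
    rw [Nat.cast_lt] at this
    omega
  · intro h
    refine lt_of_lt_of_le (show (n:ℝ≥0∞) < ((n+1:ℕ):ℝ≥0∞) by exact_mod_cast Nat.lt_succ_self n)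
      (le_sInf ?_)
    rintro b ⟨m, ⟨hm3, hf, ht⟩, rfl⟩
    rw [Nat.cast_le]
    by_contra hc
    push_neg at hc
    exact h (m-2) (by omega) (by omega)
      ⟨hf, by rw [show m-2+1 = m-1 by omega]; exact ht⟩

lemma tsum_ite_lt (m : ℕ) :
    ∑' n : ℕ, (if (n:ℝ≥0∞) < (m:ℝ≥0∞) then (1:ℝ≥0∞) else 0) = m := by
  rw [tsum_eq_sum (s := Finset.range m) (fun n hn => by
    rw [if_neg]; rw [Nat.cast_lt]; simpa using hn)]
  rw [Finset.sum_congr rfl (fun n hn => if_pos (by exact_mod_cast Finset.mem_range.mp hn))]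
  simp

lemma sInf_nat_eq_tsum (S : Set ℕ) :
    sInf ((fun n : ℕ => (n:ℝ≥0∞)) '' S)
      = ∑' n : ℕ, (if (n:ℝ≥0∞) < sInf ((fun n : ℕ => (n:ℝ≥0∞)) '' S) then (1:ℝ≥0∞) else 0) := by
  rcases S.eq_empty_or_nonempty with h | h
  · rw [h]
    simp only [Set.image_empty, sInf_empty]
    rw [tsum_congr (fun n => if_pos (by simp [lt_top_iff_ne_top]))]
    simp [ENNReal.tsum_const_eq_top_of_ne_zero]
  · have key : sInf ((fun n : ℕ => (n:ℝ≥0∞)) '' S) = ((sInf S : ℕ) : ℝ≥0∞) := by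
      refine le_antisymm (sInf_le ⟨sInf S, Nat.sInf_mem h, rfl⟩) (le_sInf ?_)
      rintro b ⟨m, hm, rfl⟩
      exact Nat.cast_le.mpr (Nat.sInf_le hm)
    rw [key, tsum_ite_lt]

lemma tsum_geom_arith : ∑' L : ℕ, ((L:ℝ≥0∞)+1) * 2⁻¹^L = 4 := by
  have hr : ‖(2⁻¹ : ℝ)‖ < 1 := by
    rw [Real.norm_eq_abs, abs_of_pos] <;> norm_num
  have h1 : HasSum (fun n : ℕ => (n:ℝ) * 2⁻¹^n) ((2⁻¹:ℝ) / (1-2⁻¹)^2) :=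
    hasSum_coe_mul_geometric_of_norm_lt_one hr
  have h2 : HasSum (fun n : ℕ => (2⁻¹:ℝ)^n) (1-2⁻¹)⁻¹ := hasSum_geometric_of_norm_lt_one hr
  have h3 : HasSum (fun n : ℕ => ((n:ℝ)+1) * 2⁻¹^n) 4 := by
    have := h1.add h2
    norm_num at this ⊢
    convert this using 2 with n
    ring
  have h4 : HasSum (fun n : ℕ => (((n:ℝ≥0)+1) * 2⁻¹^n : ℝ≥0)) 4 := by
    rw [← NNReal.hasSum_coe]
    convert h3 using 2 with n
    all_goals simp
  calc ∑' L : ℕ, ((L:ℝ≥0∞)+1) * 2⁻¹^L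
      = ∑' L : ℕ, ((((L:ℝ≥0)+1) * 2⁻¹^L : ℝ≥0) : ℝ≥0∞) := by
        refine tsum_congr fun L => ?_
        push_cast
        norm_num
    _ = ((4:ℝ≥0):ℝ≥0∞) := by rw [← ENNReal.coe_tsum h4.summable, h4.tsum_eq]
    _ = 4 := by norm_num

section
variable {Ω : Type*} [MeasurableSpace Ω] (μ : Measure Ω) [IsProbabilityMeasure μ]
  (X : ℕ → Ω → Bool) (hmeas : ∀ n, Measurable (X n))
  (hindep : iIndepFun X μ)
  (hfair : ∀ n, μ.map (X n) = fairCoin)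

include hmeas hfair in
lemma meas_single (j : ℕ) (b : Bool) : μ (X j ⁻¹' {b}) = 2⁻¹ := by
  rw [← Measure.map_apply (hmeas j) (measurableSet_singleton b), hfair j, fairCoin,
    PMF.toMeasure_apply_singleton _ _ (measurableSet_singleton b)]
  cases b <;> simp [PMF.bernoulli_apply]

include hmeas hfair hindep in
lemma meas_cylinder (L : ℕ) (f : ℕ → Bool) :
    μ (⋂ j ∈ Finset.Icc 1 L, X j ⁻¹' {f j}) = 2⁻¹ ^ L := by
  rw [hindep.measure_inter_preimage_eq_mul (Finset.Icc 1 L)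
    (sets := fun j => {f j}) (fun i _ => measurableSet_singleton _)]
  rw [Finset.prod_congr rfl (fun j _ => meas_single μ X hmeas hfair j (f j))]
  rw [Finset.prod_const, Nat.card_Icc]
  norm_num

lemma noFT_decomp (L : ℕ) : {ω | noFT (fun i => X i ω) L}
    = ⋃ k ∈ Finset.range (L+1), ⋂ j ∈ Finset.Icc 1 L, X j ⁻¹' {decide (j ≤ k)} := by
  ext ω
  simp only [Set.mem_setOf_eq, Set.mem_iUnion, Set.mem_iInter, Set.mem_preimage,
    Set.mem_singleton_iff, Finset.mem_range, Finset.mem_Icc, exists_prop]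
  constructor
  · intro h
    have prop : ∀ d j, 1 ≤ j → j + d ≤ L → X j ω = false → X (j+d) ω = false := by
      intro d
      induction d with
      | zero => intro j _ _ hf; simpa using hf
      | succ d ih =>
        intro j hj1 hjd hf
        have hprev : X (j+d) ω = false := ih j hj1 (by omega) hf
        have hno := h (j+d) (by omega) (by omega)
        rw [show j + (d+1) = (j+d)+1 by omega]
        cases hx : X (j+d+1) ω
        · rfl
        · exact absurd ⟨hprev, hx⟩ hno
    set k := Nat.findGreatest (fun j => X j ω = true) L with hk
    have hkL : k ≤ L := Nat.findGreatest_le L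
    refine ⟨k, by omega, ?_⟩
    rintro j ⟨hj1, hjL⟩
    by_cases hjk : j ≤ k
    · have hkt : X k ω = true := Nat.findGreatest_of_ne_zero hk.symm (by omega)
      rw [decide_eq_true hjk]
      cases hx : X j ω
      · have := prop (k - j) j hj1 (by omega) hx
        rw [show j + (k - j) = k by omega] at this
        rw [this] at hkt; exact hkt
      · rfl
    · have hng : ¬ (X j ω = true) :=
        Nat.findGreatest_is_greatest (P := fun j => X j ω = true) (by omega) hjL
      rw [decide_eq_false hjk]
      simpa using hng
  · rintro ⟨k, _, hA⟩ j hj1 hj2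
    rintro ⟨hf, ht⟩
    have h1 := hA j ⟨hj1, by omega⟩
    have h2 := hA (j+1) ⟨by omega, by omega⟩
    rw [show X j ω = false from hf] at h1
    rw [show X (j+1) ω = true from ht] at h2
    simp only [false_eq_decide_iff, true_eq_decide_iff] at h1 h2
    omega

include hmeas hfair hindep in
lemma meas_noFT (L : ℕ) :
    μ {ω | noFT (fun i => X i ω) L} = ((L:ℝ≥0∞)+1) * 2⁻¹ ^ L := by
  rw [noFT_decomp]
  rw [measure_biUnion_finset ?hd ?hm]
  · rw [Finset.sum_congr rfl (fun k _ => meas_cylinder μ X hmeas hindep hfair L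
      (fun j => decide (j ≤ k)))]
    rw [Finset.sum_const, Finset.card_range, nsmul_eq_mul]
    push_cast
    ring
  case hd =>
    have key : ∀ k k', k < k' → k' < L + 1 →
        Disjoint (⋂ j ∈ Finset.Icc 1 L, X j ⁻¹' {decide (j ≤ k)})
          (⋂ j ∈ Finset.Icc 1 L, X j ⁻¹' {decide (j ≤ k')}) := by
      intro k k' hlt hk'
      refine Set.disjoint_left.mpr ?_
      intro ω hω hω'
      have h1 := Set.mem_iInter₂.mp hω (k+1) (Finset.mem_Icc.mpr ⟨by omega, by omega⟩)
      have h2 := Set.mem_iInter₂.mp hω' (k+1) (Finset.mem_Icc.mpr ⟨by omega, by omega⟩)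
      simp only [Set.mem_preimage, Set.mem_singleton_iff] at h1 h2
      rw [h1] at h2
      simp only [decide_eq_decide] at h2
      omega
    rintro k hk k' hk' hne
    simp only [Finset.coe_range, Set.mem_Iio, Finset.mem_coe, Finset.mem_range] at hk hk'
    rcases lt_or_gt_of_ne hne with h | h
    · exact key k k' h hk'
    · exact (key k' k h hk).symm
  case hm =>
    intro k _
    exact MeasurableSet.biInter (Finset.countable_toSet _)
      (fun j _ => hmeas j (measurableSet_singleton _))

end

/-- For A = HTH and B = TTH (distinct, neither a substring of the other), the expected
waiting time until the first occurrence of A or B equals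
(R_A(A)·R_B(B) − R_A(B)·R_B(A)) / (R_A(A) + R_B(B) − R_A(B) − R_B(A)) = 5. -/
theorem stmt_8 {Ω : Type*} [MeasurableSpace Ω] (μ : Measure Ω) [IsProbabilityMeasure μ]
    (X : ℕ → Ω → Bool) (hmeas : ∀ n, Measurable (X n))
    (hindep : iIndepFun X μ)
    (hfair : ∀ n, μ.map (X n) = fairCoin) :
    (∫⁻ ω, min (hitTime patA (fun n => X n ω)) (hitTime patB (fun n => X n ω)) ∂μ =
      ((R3 patA patA * R3 patB patB - R3 patA patB * R3 patB patA : ℕ) : ℝ≥0∞) /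
        ((R3 patA patA + R3 patB patB - R3 patA patB - R3 patB patA : ℕ) : ℝ≥0∞)) ∧
    ((R3 patA patA * R3 patB patB - R3 patA patB * R3 patB patA : ℕ) : ℝ≥0∞) /
        ((R3 patA patA + R3 patB patB - R3 patA patB - R3 patB patA : ℕ) : ℝ≥0∞) = 5 := by
  have hR : ((R3 patA patA * R3 patB patB - R3 patA patB * R3 patB patA : ℕ) : ℝ≥0∞) /
        ((R3 patA patA + R3 patB patB - R3 patA patB - R3 patB patA : ℕ) : ℝ≥0∞) = 5 := by
    have h1 : (R3 patA patA * R3 patB patB - R3 patA patB * R3 patB patA : ℕ) = 80 := by decide +kernel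
    have h2 : (R3 patA patA + R3 patB patB - R3 patA patB - R3 patB patA : ℕ) = 16 := by decide +kernel
    rw [h1, h2, show ((80:ℕ):ℝ≥0∞) = 5 * ((16:ℕ):ℝ≥0∞) by norm_num, mul_div_assoc,
      ENNReal.div_self (by norm_num) (by norm_num), mul_one]
  refine ⟨?_, hR⟩
  rw [hR]
  -- measurability of the noFT events
  have hms : ∀ L : ℕ, MeasurableSet {ω | noFT (fun i => X i ω) L} := by
    intro L
    rw [noFT_decomp X L]
    exact MeasurableSet.biUnion (Finset.countable_toSet _) fun k _ =>
      MeasurableSet.biInter (Finset.countable_toSet _)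
        (fun j _ => hmeas j (measurableSet_singleton _))
  have hT : ∀ ω : Ω, min (hitTime patA (fun n => X n ω)) (hitTime patB (fun n => X n ω))
      = ∑' n : ℕ, Set.indicator {ω' | noFT (fun i => X i ω') (n-1)} (fun _ => (1:ℝ≥0∞)) ω := by
    intro ω
    set x : ℕ → Bool := fun n => X n ω with hx
    have h0 := sInf_nat_eq_tsum {n | 3 ≤ n ∧ x (n-2) = false ∧ x (n-1) = true}
    rw [min_hitTime, h0, ← min_hitTime]
    refine tsum_congr fun n => ?_
    rw [Set.indicator_apply]
    exact if_congr (by rw [Set.mem_setOf_eq]; exact lt_min_hitTime x n) rfl rfl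
  calc ∫⁻ ω, min (hitTime patA (fun n => X n ω)) (hitTime patB (fun n => X n ω)) ∂μ
      = ∫⁻ ω, ∑' n : ℕ, Set.indicator {ω' | noFT (fun i => X i ω') (n-1)}
          (fun _ => (1:ℝ≥0∞)) ω ∂μ := lintegral_congr hT
    _ = ∑' n : ℕ, ∫⁻ ω, Set.indicator {ω' | noFT (fun i => X i ω') (n-1)}
          (fun _ => (1:ℝ≥0∞)) ω ∂μ :=
        lintegral_tsum fun n => (Measurable.indicator measurable_const (hms (n-1))).aemeasurable
    _ = ∑' n : ℕ, μ {ω' | noFT (fun i => X i ω') (n-1)} := by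
        refine tsum_congr fun n => ?_
        exact lintegral_indicator_one (hms (n-1))
    _ = ∑' n : ℕ, (((n-1 : ℕ):ℝ≥0∞)+1) * 2⁻¹ ^ (n-1) :=
        tsum_congr fun n => meas_noFT μ X hmeas hindep hfair (n-1)
    _ = 5 := by
        rw [tsum_eq_zero_add' ENNReal.summable]
        simp only [Nat.add_sub_cancel, Nat.zero_sub, Nat.cast_zero, pow_zero, mul_one, zero_add]
        rw [tsum_geom_arith]
        norm_num
end

section
/- For a fair coin and distinct length-k patterns A, B (k ≥ 1, neither a substring of the other), the quantities R_A(A) − R_A(B) and R_B(B) − R_B(A) are strictly positive, where R_X(Y) = sum over s from 1 to k of 2^{k-s+1} · [trailing (k−s+1) characters of X equal leading (k−s+1) characters of Y]. -/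
open MeasureTheory ProbabilityTheory
open scoped ENNReal

/-- R_X(Y) = ∑_{s=1}^{k} 2^{k-s+1} · [trailing (k-s+1) characters of X
= leading (k-s+1) characters of Y], for patterns of common length k. -/
def Rpay (X Y : List Bool) : ℕ :=
  ∑ s ∈ Finset.Icc 1 X.length,
    if X.drop (s - 1) = Y.take (X.length - s + 1) then 2 ^ (X.length - s + 1) else 0


lemma my_geom_lt (m : ℕ) : ∑ i ∈ Finset.range m, 2 ^ i < 2 ^ m := by
  induction m with
  | zero => simp
  | succ n ih => rw [Finset.sum_range_succ, pow_succ]; omega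

lemma my_geom_lt' (m : ℕ) : ∑ i ∈ Finset.range m, 2 ^ (i + 1) < 2 ^ (m + 1) := by
  induction m with
  | zero => simp
  | succ n ih => rw [Finset.sum_range_succ, pow_succ 2 (n+1)]; omega

lemma Rpay_self_ge (k : ℕ) (hk : 1 ≤ k) (X : List Bool) (hX : X.length = k) :
    2 ^ k ≤ Rpay X X := by
  have htake : X.take k = X := by rw [← hX]; exact List.take_length
  have h1 : (1 : ℕ) ∈ Finset.Icc 1 X.length := by simp [hX]; omega
  have := Finset.single_le_sum (f := fun s =>
      if X.drop (s - 1) = X.take (X.length - s + 1) then 2 ^ (X.length - s + 1) else 0)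
      (fun i _ => Nat.zero_le _) h1
  simpa [Rpay, hX, Nat.sub_add_cancel hk, htake] using this

lemma Rpay_ne_lt (k : ℕ) (hk : 1 ≤ k) (X Y : List Bool) (hX : X.length = k)
    (hY : Y.length = k) (hXY : X ≠ Y) : Rpay X Y < 2 ^ k := by
  have htake : Y.take k = Y := by rw [← hY]; exact List.take_length
  have hins : Finset.Icc 1 k = insert 1 (Finset.Icc 2 k) := by
    ext s; simp [Finset.mem_Icc, Finset.mem_insert]; omega
  have hf1 : (if X.drop (1 - 1) = Y.take (k - 1 + 1) then 2 ^ (k - 1 + 1) else 0) = 0 := by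
    rw [if_neg]
    simpa [Nat.sub_add_cancel hk, htake] using hXY
  have hrw : Rpay X Y = ∑ s ∈ Finset.Icc 2 k,
      if X.drop (s - 1) = Y.take (k - s + 1) then 2 ^ (k - s + 1) else 0 := by
    rw [Rpay, hX, hins, Finset.sum_insert (by simp), hf1, zero_add]
  rw [hrw]
  calc ∑ s ∈ Finset.Icc 2 k, (if X.drop (s - 1) = Y.take (k - s + 1) then 2 ^ (k - s + 1) else 0)
      ≤ ∑ s ∈ Finset.Icc 2 k, 2 ^ (k - s + 1) := by
        apply Finset.sum_le_sum; intro i _; split <;> simp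
    _ = ∑ i ∈ Finset.range (k - 1), 2 ^ (k - (2 + i) + 1) := by
        rw [← Finset.Ico_add_one_right_eq_Icc, Finset.sum_Ico_eq_sum_range, show k + 1 - 2 = k - 1 by omega]
    _ = ∑ i ∈ Finset.range (k - 1), 2 ^ (k - 1 - 1 - i + 1) := by
        apply Finset.sum_congr rfl; intro i hi; simp at hi; congr 1; omega
    _ = ∑ i ∈ Finset.range (k - 1), 2 ^ (i + 1) := by
        exact Finset.sum_range_reflect (fun i => 2 ^ (i + 1)) (k - 1)
    _ < 2 ^ k := by
        have h := my_geom_lt' (k - 1)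
        have hkk : k - 1 + 1 = k := by omega
        rw [hkk] at h
        exact h

/-- For distinct length-k fair-coin patterns A, B (k ≥ 1, neither a substring of the other),
R_A(A) − R_A(B) and R_B(B) − R_B(A) are strictly positive. -/
theorem stmt_10 (k : ℕ) (hk : 1 ≤ k) (A B : List Bool)
    (hA : A.length = k) (hB : B.length = k) (hAB : A ≠ B)
    (hAinfB : ¬ A.IsInfix B) (hBinfA : ¬ B.IsInfix A) :
    0 < (Rpay A A : ℤ) - Rpay A B ∧ 0 < (Rpay B B : ℤ) - Rpay B A := by
  have h1 := Rpay_self_ge k hk A hA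
  have h2 := Rpay_ne_lt k hk A B hA hB hAB
  have h3 := Rpay_self_ge k hk B hB
  have h4 := Rpay_ne_lt k hk B A hB hA (fun h => hAB h.symm)
  constructor <;> omega
end

section
/- In an i.i.d. fair coin sequence, the probability that HHT occurs before HTT is 2/3. -/
open MeasureTheory ProbabilityTheory
open scoped ENNReal

lemma occursAt_iff (a b c : Bool) (x : ℕ → Bool) (n : ℕ) :
    occursAt [a,b,c] x n ↔ 3 ≤ n ∧ x (n-3) = a ∧ x (n-2) = b ∧ x (n-1) = c := by
  constructor
  · rintro ⟨h3, h⟩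
    simp only [List.length] at h3 h
    refine ⟨h3, ?_, ?_, ?_⟩
    · simpa using h 0 (by norm_num)
    · have := h 1 (by norm_num)
      rwa [show n - 3 + 1 = n - 2 by omega] at this
    · have := h 2 (by norm_num)
      rwa [show n - 3 + 2 = n - 1 by omega] at this
  · rintro ⟨h3, h0, h1, h2⟩
    refine ⟨by simpa using h3, ?_⟩
    intro i hi
    simp only [List.length] at hi
    interval_cases i
    · simpa using h0
    · rw [show n - [a,b,c].length + 1 = n - 2 by simp; omega]; simpa using h1
    · rw [show n - [a,b,c].length + 2 = n - 1 by simp; omega]; simpa using h2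

lemma hitTime_lt_iff (P Q : List Bool) (x : ℕ → Bool) :
    hitTime P x < hitTime Q x ↔
      ∃ n, occursAt P x n ∧ ∀ m, occursAt Q x m → n < m := by
  unfold hitTime
  rw [sInf_lt_iff]
  constructor
  · rintro ⟨a, ⟨n, hn, rfl⟩, hlt⟩
    refine ⟨n, hn, fun m hm => ?_⟩
    have hle : sInf ((fun n : ℕ => (n : ℝ≥0∞)) '' {n | occursAt Q x n}) ≤ (m : ℝ≥0∞) :=
      sInf_le ⟨m, hm, rfl⟩
    have := lt_of_lt_of_le hlt hle
    simp only [] at this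
    exact_mod_cast this
  · rintro ⟨n, hn, h⟩
    refine ⟨n, ⟨n, hn, rfl⟩, ?_⟩
    refine lt_of_lt_of_le (show (n : ℝ≥0∞) < ((n+1 : ℕ) : ℝ≥0∞) by exact_mod_cast Nat.lt_succ_self n) ?_
    refine le_sInf ?_
    rintro b ⟨m, hm, rfl⟩
    simp only []
    have := h m hm
    exact_mod_cast Nat.succ_le_of_lt this

/-- The forced prefix: `t` tails, then `c` copies of `HT`, then `HH`. -/
def wseq (t c : ℕ) (i : ℕ) : Bool :=
  if i < t then false else if t + 2*c ≤ i then true else decide ((i - t) % 2 = 0)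

lemma wseq_lt {t c i : ℕ} (h : i < t) : wseq t c i = false := by simp [wseq, h]
lemma wseq_ge {t c i : ℕ} (h : t + 2*c ≤ i) : wseq t c i = true := by
  simp [wseq, h, show ¬ i < t by omega]
lemma wseq_mid {t c i : ℕ} (h1 : t ≤ i) (h2 : i < t + 2*c) :
    wseq t c i = decide ((i - t) % 2 = 0) := by
  simp only [wseq, show ¬ i < t by omega, if_false, show ¬ t + 2*c ≤ i by omega]

/-- The "good at k" condition: first HH at k with no HTT strictly before. -/
def Gk (x : ℕ → Bool) (k : ℕ) : Prop :=
  x k = true ∧ x (k+1) = true ∧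
  (∀ j < k, ¬(x j = true ∧ x (j+1) = true)) ∧
  (∀ j, j + 2 < k → ¬(x j = true ∧ x (j+1) = false ∧ x (j+2) = false))

lemma key_forward (x : ℕ → Bool)
    (h : hitTime [true,true,false] x < hitTime [true,false,false] x) :
    ∃ t c, (∀ i < t + 2*c + 2, x i = wseq t c i) ∧
      (∃ m, t + 2*c + 2 ≤ m ∧ x m = false) := by
  rw [hitTime_lt_iff] at h
  obtain ⟨n, h1, hall⟩ := h
  rw [occursAt_iff] at h1
  obtain ⟨h3, ha, hb, hc⟩ := h1
  -- first HH
  have hex : ∃ k, x k = true ∧ x (k+1) = true := ⟨n-3, ha, by rwa [show n-3+1 = n-2 by omega]⟩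
  classical
  let k := Nat.find hex
  obtain ⟨hkk, hk1⟩ : x k = true ∧ x (k+1) = true := Nat.find_spec hex
  have hmin : ∀ j < k, ¬(x j = true ∧ x (j+1) = true) := fun j hj => Nat.find_min hex hj
  have hkn : k ≤ n - 3 := Nat.find_min' hex ⟨ha, by rwa [show n-3+1 = n-2 by omega]⟩
  have hG : Gk x k := by
    refine ⟨hkk, hk1, hmin, ?_⟩
    rintro j hj ⟨e1, e2, e3⟩
    have hocc : occursAt [true,false,false] x (j+3) := by
      rw [occursAt_iff]
      exact ⟨by omega, by simpa using e1, by rw [show j+3-2 = j+1 by omega]; exact e2,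
        by rw [show j+3-1 = j+2 by omega]; exact e3⟩
    have := hall _ hocc
    -- n < j + 3 ≤ k + 2, but k ≤ n - 3
    omega
  -- extract t, c from Gk
  obtain ⟨hkk, hk1, hmin, hnoHTT⟩ := hG
  have htail : ∃ m, k + 2 ≤ m ∧ x m = false :=
    ⟨n - 1, by omega, hc⟩
  by_cases hT : ∃ i, x i = true ∧ i < k
  · let t := Nat.find hT
    obtain ⟨htt, htk⟩ : x t = true ∧ t < k := Nat.find_spec hT
    have hmint : ∀ j < t, x j = false := by
      intro j hj
      have := Nat.find_min hT hj
      have hjk : j < k := by omega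
      cases hxj : x j with
      | false => rfl
      | true => exact absurd ⟨hxj, hjk⟩ this
    -- alternating claim
    have claim : ∀ d, t + d ≤ k → x (t + d) = decide (d % 2 = 0) := by
      intro d
      induction d using Nat.strong_induction_on with
      | _ d ih =>
        intro hdk
        rcases d with _ | _ | d
        · simpa using htt
        · have h1 := hmin t htk
          have h2 : ¬ (x (t+1) = true) := fun hh => h1 ⟨htt, hh⟩
          cases hx1 : x (t+1) with
          | false => simp
          | true => exact absurd hx1 h2
        · have ih1 := ih (d+1) (by omega) (by omega)
          have ih0 := ih d (by omega) (by omega)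
          rcases Nat.even_or_odd d with he | ho
          · have hde : d % 2 = 0 := Nat.even_iff.mp he
            have e0 : x (t+d) = true := by
              rw [ih0]; simp only [decide_eq_true_eq]; omega
            have e1 : x (t+d+1) = false := by
              rw [show t+d+1 = t+(d+1) by omega, ih1]
              simp only [decide_eq_false_iff_not]; omega
            have hd2 : (d+2) % 2 = 0 := by omega
            rw [show t+(d+1+1) = t+d+2 by omega, show d+1+1 = d+2 by omega, hd2]
            simp only [decide_eq_true_eq]
            rcases Nat.lt_or_ge (t+d+2) k with hlt | hge
            · by_contra hne
              have hxf : x (t+d+2) = false := by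
                cases hx : x (t+d+2) with
                | false => rfl
                | true => exact absurd hx hne
              exact hnoHTT (t+d) (by omega) ⟨e0, e1, hxf⟩
            · have hk : t + d + 2 = k := by omega
              rw [hk]; exact hkk.symm ▸ rfl
          · have hdo : d % 2 = 1 := Nat.odd_iff.mp ho
            have e1 : x (t+(d+1)) = true := by
              rw [ih1]; simp only [decide_eq_true_eq]; omega
            have hlt : t + (d+1) < k := by omega
            have h1 := hmin _ hlt
            have hxf : ¬ (x (t+(d+1)+1) = true) := fun hh => h1 ⟨e1, hh⟩
            have hd2 : (d+1+1) % 2 = 1 := by omega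
            rw [hd2, show t+(d+1+1) = t+(d+1)+1 by omega]
            cases hx : x (t+(d+1)+1) with
            | false => simp [hx]
            | true => exact absurd hx hxf
    -- k - t is even
    have hev : (k - t) % 2 = 0 := by
      by_contra hodd
      have := claim (k - t) (by omega)
      rw [show t + (k-t) = k by omega] at this
      rw [hkk] at this
      simp at this
      omega
    refine ⟨t, (k - t)/2, ?_, ?_⟩
    · intro i hi
      rcases Nat.lt_or_ge i t with h1 | h1
      · rw [wseq_lt h1, hmint i h1]
      rcases Nat.lt_or_ge i (t + 2*((k-t)/2)) with h2 | h2
      · rw [wseq_mid h1 h2]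
        have := claim (i - t) (by omega)
        rw [show t + (i-t) = i by omega] at this
        exact this
      · rw [wseq_ge h2]
        have hik : i = k ∨ i = k + 1 := by omega
        rcases hik with rfl | rfl
        · exact hkk
        · exact hk1
    · obtain ⟨m, hm, hmf⟩ := htail
      exact ⟨m, by omega, hmf⟩
  · -- all false before k
    push_neg at hT
    refine ⟨k, 0, ?_, by simpa using htail⟩
    intro i hi
    rcases Nat.lt_or_ge i k with h1 | h1
    · rw [wseq_lt h1]
      cases hx : x i with
      | false => rfl
      | true => exact absurd h1 (by simpa [hx] using hT i)
    · rw [wseq_ge (by omega)]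
      have : i = k ∨ i = k + 1 := by omega
      rcases this with rfl | rfl
      · exact hkk
      · exact hk1

lemma key_backward (x : ℕ → Bool) (t c : ℕ)
    (hx : ∀ i < t + 2*c + 2, x i = wseq t c i)
    (htail : ∃ m, t + 2*c + 2 ≤ m ∧ x m = false) :
    hitTime [true,true,false] x < hitTime [true,false,false] x := by
  classical
  set k := t + 2*c with hk
  have hkk : x k = true := by rw [hx k (by omega)]; exact wseq_ge (by omega)
  have hk1 : x (k+1) = true := by rw [hx (k+1) (by omega)]; exact wseq_ge (by omega)
  obtain ⟨m0, hm0, hm0f⟩ := htail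
  have hexr : ∃ m, k + 2 ≤ m ∧ x m = false := ⟨m0, by omega, hm0f⟩
  let r := Nat.find hexr
  obtain ⟨hrk, hrf⟩ : k + 2 ≤ r ∧ x r = false := Nat.find_spec hexr
  have hrmin : ∀ m, k + 2 ≤ m → m < r → x m = true := by
    intro m h1 h2
    have := Nat.find_min hexr h2
    cases hxm : x m with
    | true => rfl
    | false => exact absurd ⟨h1, hxm⟩ this
  have hrun : ∀ i, k ≤ i → i < r → x i = true := by
    intro i h1 h2
    rcases Nat.lt_or_ge i (k+2) with h3 | h3
    · have : i = k ∨ i = k + 1 := by omega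
      rcases this with rfl | rfl
      · exact hkk
      · exact hk1
    · exact hrmin i h3 h2
  rw [hitTime_lt_iff]
  refine ⟨r + 1, ?_, ?_⟩
  · rw [occursAt_iff]
    refine ⟨by omega, ?_, ?_, ?_⟩
    · rw [show r+1-3 = r-2 by omega]; exact hrun _ (by omega) (by omega)
    · rw [show r+1-2 = r-1 by omega]; exact hrun _ (by omega) (by omega)
    · rw [show r+1-1 = r by omega]; exact hrf
  · intro m hm
    rw [occursAt_iff] at hm
    obtain ⟨h3m, e1, e2, e3⟩ := hm
    by_contra hle
    push_neg at hle
    -- m ≤ r + 1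
    set j := m - 3 with hj
    have hj1 : m - 2 = j + 1 := by omega
    have hj2 : m - 1 = j + 2 := by omega
    rw [hj1] at e2; rw [hj2] at e3
    rcases Nat.lt_or_ge j k with hjk | hjk
    · -- j < k : use the prefix structure
      have hjt : t ≤ j := by
        by_contra h
        push_neg at h
        rw [hx j (by omega), wseq_lt h] at e1
        exact Bool.false_ne_true e1
      have hjpar : (j - t) % 2 = 0 := by
        have := hx j (by omega)
        rw [wseq_mid hjt (by omega)] at this
        rw [e1] at this
        simpa using this.symm
      -- j+1 < k since x (j+1) = false but x k = true
      have hj1k : j + 1 < k := by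
        rcases Nat.lt_or_ge (j+1) k with h | h
        · exact h
        · have : j + 1 = k := by omega
          rw [this, hkk] at e2; exact absurd e2 (by simp)
      -- j+2 vs k
      rcases Nat.lt_or_ge (j+2) k with h2k | h2k
      · have := hx (j+2) (by omega)
        rw [wseq_mid (by omega) (by omega)] at this
        rw [e3] at this
        have : ¬ (j + 2 - t) % 2 = 0 := by simpa using this.symm
        omega
      · have : j + 2 = k := by omega
        rw [this, hkk] at e3; exact absurd e3 (by simp)
    · -- j ≥ k : x (j+1) should be true
      have hj1r : j + 1 < r := by omega
      have := hrun (j+1) (by omega) hj1r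
      rw [e2] at this; exact absurd this (by simp)

section prob
variable {Ω : Type*} [MeasurableSpace Ω] (μ : Measure Ω) [IsProbabilityMeasure μ]
  (X : ℕ → Ω → Bool)

lemma single_coord (hmeas : ∀ n, Measurable (X n)) (hfair : ∀ n, μ.map (X n) = fairCoin)
    (i : ℕ) (b : Bool) : μ (X i ⁻¹' {b}) = 2⁻¹ := by
  rw [← Measure.map_apply (hmeas i) (measurableSet_singleton b), hfair i,
    fairCoin_singleton]

lemma cyl_meas (hmeas : ∀ n, Measurable (X n))
    (hindep : iIndepFun X μ)
    (hfair : ∀ n, μ.map (X n) = fairCoin) (n : ℕ) (w : ℕ → Bool) :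
    μ {ω | ∀ i < n, X i ω = w i} = 2⁻¹ ^ n := by
  have hset : {ω | ∀ i < n, X i ω = w i} = ⋂ i ∈ Finset.range n, X i ⁻¹' {w i} := by
    ext ω
    simp [Set.mem_iInter]
  rw [hset,
    hindep.measure_inter_preimage_eq_mul (Finset.range n) (sets := fun i => {w i})
      (fun i _ => measurableSet_singleton _)]
  rw [Finset.prod_congr rfl (fun i _ => single_coord μ X hmeas hfair i (w i)),
    Finset.prod_const, Finset.card_range]

lemma tail_zero (hmeas : ∀ n, Measurable (X n))
    (hindep : iIndepFun X μ)
    (hfair : ∀ n, μ.map (X n) = fairCoin) (N : ℕ) :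
    μ {ω | ∀ m, N ≤ m → X m ω = true} = 0 := by
  have hle : ∀ j : ℕ, μ {ω | ∀ m, N ≤ m → X m ω = true} ≤ 2⁻¹ ^ j := by
    intro j
    have hsub : {ω | ∀ m, N ≤ m → X m ω = true} ⊆
        ⋂ i ∈ Finset.Ico N (N + j), X i ⁻¹' {true} := by
      intro ω hω
      simp only [Set.mem_iInter, Finset.mem_Ico, Set.mem_preimage, Set.mem_singleton_iff]
      exact fun i hi => hω i hi.1
    refine le_trans (measure_mono hsub) (le_of_eq ?_)
    rw [hindep.measure_inter_preimage_eq_mul (Finset.Ico N (N+j)) (sets := fun _ => {true})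
      (fun i _ => measurableSet_singleton _)]
    rw [Finset.prod_congr rfl (fun i _ => single_coord μ X hmeas hfair i true),
      Finset.prod_const, Nat.card_Ico, Nat.add_sub_cancel_left]
  have htend : Filter.Tendsto (fun j : ℕ => (2⁻¹ : ℝ≥0∞) ^ j) Filter.atTop (nhds 0) :=
    ENNReal.tendsto_pow_atTop_nhds_zero_of_lt_one (by
      rw [← ENNReal.one_sub_inv_two]; exact ENNReal.sub_lt_self ENNReal.one_ne_top
        one_ne_zero (by simp))
  have := ge_of_tendsto' htend hle
  simpa using this

end prob

lemma wseq_start (t c : ℕ) : wseq t c t = true := by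
  rcases Nat.eq_zero_or_pos c with rfl | hc
  · exact wseq_ge (by omega)
  · rw [wseq_mid le_rfl (by omega)]; simp

lemma wseq_unique {x : ℕ → Bool} {t c t' c' : ℕ}
    (h1 : ∀ i < t + 2*c + 2, x i = wseq t c i)
    (h2 : ∀ i < t' + 2*c' + 2, x i = wseq t' c' i) : t = t' ∧ c = c' := by
  have haux : ∀ t1 c1 t2 c2, t1 < t2 →
      (∀ i < t1 + 2*c1 + 2, x i = wseq t1 c1 i) →
      (∀ i < t2 + 2*c2 + 2, x i = wseq t2 c2 i) → False := by
    intro t1 c1 t2 c2 hlt g1 g2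
    have e1 : x t1 = true := by rw [g1 t1 (by omega)]; exact wseq_start t1 c1
    have e2 : x t1 = false := by rw [g2 t1 (by omega)]; exact wseq_lt hlt
    rw [e1] at e2; exact absurd e2 (by simp)
  have ht : t = t' := by
    rcases lt_trichotomy t t' with h | h | h
    · exact absurd (haux t c t' c' h h1 h2) not_false
    · exact h
    · exact absurd (haux t' c' t c h h2 h1) not_false
  subst ht
  have haux2 : ∀ c1 c2, c1 < c2 →
      (∀ i < t + 2*c1 + 2, x i = wseq t c1 i) →
      (∀ i < t + 2*c2 + 2, x i = wseq t c2 i) → False := by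
    intro c1 c2 hlt g1 g2
    have e1 : x (t + 2*c1 + 1) = true := by
      rw [g1 _ (by omega)]; exact wseq_ge (by omega)
    have e2 : x (t + 2*c1 + 1) = false := by
      rw [g2 _ (by omega), wseq_mid (by omega) (by omega)]
      simp only [decide_eq_false_iff_not]
      omega
    rw [e1] at e2; exact absurd e2 (by simp)
  have hc : c = c' := by
    rcases lt_trichotomy c c' with h | h | h
    · exact absurd (haux2 c c' h h1 h2) not_false
    · exact h
    · exact absurd (haux2 c' c h h2 h1) not_false
  exact ⟨rfl, hc⟩

lemma ennreal_arith : (1 - 2⁻¹ : ℝ≥0∞)⁻¹ * ((1 - 2⁻¹^2)⁻¹ * 2⁻¹^2) = 2/3 := by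
  rw [ENNReal.one_sub_inv_two, inv_inv]
  have h4 : (2⁻¹:ℝ≥0∞)^2 = 4⁻¹ := by
    rw [← ENNReal.inv_pow]; norm_num
  rw [h4]
  have h34 : (1:ℝ≥0∞) - 4⁻¹ = 3 * 4⁻¹ := by
    refine ENNReal.sub_eq_of_eq_add (by simp) ?_
    have : (3:ℝ≥0∞) * 4⁻¹ + 4⁻¹ = 4 * 4⁻¹ := by ring
    rw [this, ENNReal.mul_inv_cancel (by norm_num) (by norm_num)]
  rw [h34, ENNReal.mul_inv (Or.inl (by norm_num)) (Or.inl (by norm_num)), inv_inv]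
  rw [show (3:ℝ≥0∞)⁻¹ * 4 * 4⁻¹ = 3⁻¹ * (4 * 4⁻¹) by ring,
    ENNReal.mul_inv_cancel (by norm_num) (by norm_num), mul_one,
    ENNReal.div_eq_inv_mul, mul_comm]


/-- In i.i.d. fair coin flips, P(HHT occurs before HTT) = 2/3. -/
theorem stmt_12 {Ω : Type*} [MeasurableSpace Ω] (μ : Measure Ω) [IsProbabilityMeasure μ]
    (X : ℕ → Ω → Bool) (hmeas : ∀ n, Measurable (X n))
    (hindep : iIndepFun X μ)
    (hfair : ∀ n, μ.map (X n) = fairCoin) :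
    μ {ω | hitTime [true, true, false] (fun n => X n ω)
         < hitTime [true, false, false] (fun n => X n ω)} = 2/3 := by
  classical
  set S : ℕ × ℕ → Set Ω := fun p =>
    {ω | (∀ i < p.1 + 2*p.2 + 2, X i ω = wseq p.1 p.2 i) ∧
      ∃ m, p.1 + 2*p.2 + 2 ≤ m ∧ X m ω = false} with hS
  have hE : {ω | hitTime [true, true, false] (fun n => X n ω)
         < hitTime [true, false, false] (fun n => X n ω)} = ⋃ p, S p := by
    ext ω
    simp only [Set.mem_iUnion, Set.mem_setOf_eq, hS]
    constructor
    · intro h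
      obtain ⟨t, c, h1, h2⟩ := key_forward _ h
      exact ⟨(t, c), h1, h2⟩
    · rintro ⟨⟨t, c⟩, h1, h2⟩
      exact key_backward _ t c h1 h2
  have hBmeas : ∀ (n : ℕ) (w : ℕ → Bool),
      MeasurableSet {ω | ∀ i < n, X i ω = w i} := by
    intro n w
    have : {ω | ∀ i < n, X i ω = w i} = ⋂ i, ⋂ (_ : i < n), X i ⁻¹' {w i} := by
      ext ω; simp
    rw [this]
    exact MeasurableSet.iInter fun i => MeasurableSet.iInter fun _ =>
      (hmeas i) (measurableSet_singleton _)
  have hTmeas : ∀ N : ℕ, MeasurableSet {ω | ∃ m, N ≤ m ∧ X m ω = false} := by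
    intro N
    have : {ω | ∃ m, N ≤ m ∧ X m ω = false} = ⋃ m, ⋃ (_ : N ≤ m), X m ⁻¹' {false} := by
      ext ω; simp
    rw [this]
    exact MeasurableSet.iUnion fun m => MeasurableSet.iUnion fun _ =>
      (hmeas m) (measurableSet_singleton _)
  have hSmeas : ∀ p : ℕ × ℕ, MeasurableSet (S p) := by
    intro p
    have : S p = {ω | ∀ i < p.1 + 2*p.2 + 2, X i ω = wseq p.1 p.2 i} ∩
        {ω | ∃ m, p.1 + 2*p.2 + 2 ≤ m ∧ X m ω = false} := rfl
    rw [this]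
    exact (hBmeas _ _).inter (hTmeas _)
  have hdisj : Pairwise (Function.onFun Disjoint S) := by
    rintro ⟨t, c⟩ ⟨t', c'⟩ hne
    rw [Function.onFun, Set.disjoint_left]
    rintro ω ⟨h1, _⟩ ⟨h2, _⟩
    obtain ⟨e1, e2⟩ := wseq_unique h1 h2
    simp only at e1 e2
    exact hne (by simp [Prod.ext_iff, e1, e2])
  have hSval : ∀ p : ℕ × ℕ, μ (S p) = 2⁻¹ ^ (p.1 + 2*p.2 + 2) := by
    intro p
    have heq : S p = {ω | ∀ i < p.1 + 2*p.2 + 2, X i ω = wseq p.1 p.2 i} ∩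
        {ω | ∃ m, p.1 + 2*p.2 + 2 ≤ m ∧ X m ω = false} := rfl
    rw [heq, measure_inter_conull, cyl_meas μ X hmeas hindep hfair]
    have hc : {ω | ∃ m, p.1 + 2*p.2 + 2 ≤ m ∧ X m ω = false}ᶜ =
        {ω | ∀ m, p.1 + 2*p.2 + 2 ≤ m → X m ω = true} := by
      ext ω
      simp [not_exists]
    rw [hc]
    exact tail_zero μ X hmeas hindep hfair _
  rw [hE, measure_iUnion hdisj hSmeas]
  rw [tsum_congr hSval]
  rw [show (∑' p : ℕ × ℕ, (2⁻¹:ℝ≥0∞) ^ (p.1 + 2*p.2 + 2)) =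
    ∑' (t : ℕ) (c : ℕ), (2⁻¹:ℝ≥0∞) ^ (t + 2*c + 2) from
      ENNReal.tsum_prod (f := fun t c => (2⁻¹:ℝ≥0∞) ^ (t + 2*c + 2))]
  have hsplit : ∀ t c : ℕ, (2⁻¹:ℝ≥0∞) ^ (t + 2*c + 2) =
      2⁻¹ ^ t * ((2⁻¹ ^ 2) ^ c * 2⁻¹ ^ 2) := by
    intro t c
    rw [pow_add, pow_add, ← pow_mul]
    ring
  simp_rw [hsplit, ENNReal.tsum_mul_left, ENNReal.tsum_mul_right,
    ENNReal.tsum_geometric]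
  exact ennreal_arith
end

section
/- For a fair coin, the expected waiting time for any pattern of length k is at least 2^k, with equality if and only if no proper nonempty suffix of the pattern equals a prefix of the pattern (i.e., the pattern has trivial self-overlap). -/
open MeasureTheory ProbabilityTheory
open scoped ENNReal

set_option linter.unusedSectionVars false

namespace St17

section A


variable {P : List Bool} {x y : ℕ → Bool}

lemma occursAt_congr {n : ℕ} (h : ∀ i < n, x i = y i) {m : ℕ} (hm : m ≤ n)
    (hx : occursAt P x m) : occursAt P y m := by
  obtain ⟨hk, hx⟩ := hx
  refine ⟨hk, fun i hi => ?_⟩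
  rw [← h _ (by omega)]
  exact hx i hi

lemma hitTime_le {n : ℕ} (h : occursAt P x n) : hitTime P x ≤ n :=
  sInf_le ⟨n, h, rfl⟩

lemma le_hitTime_iff {t : ℕ} : (t : ℝ≥0∞) ≤ hitTime P x ↔ ∀ s, occursAt P x s → t ≤ s := by
  rw [hitTime, le_sInf_iff]
  constructor
  · intro h s hs
    have := h _ ⟨s, hs, rfl⟩
    simpa using this
  · rintro h b ⟨s, hs, rfl⟩
    simpa using h s hs

lemma lt_hitTime_iff {m : ℕ} : (m : ℝ≥0∞) < hitTime P x ↔ ∀ s, s ≤ m → ¬ occursAt P x s := by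
  constructor
  · intro h s hsm hs
    exact absurd (hitTime_le hs) (by
      simp only [not_le]
      exact lt_of_le_of_lt (by exact_mod_cast Nat.cast_le.2 hsm) h)
  · intro h
    have : ((m + 1 : ℕ) : ℝ≥0∞) ≤ hitTime P x := by
      rw [le_hitTime_iff]
      intro s hs
      by_contra hc
      exact h s (by omega) hs
    calc (m : ℝ≥0∞) < ((m+1 : ℕ) : ℝ≥0∞) := by exact_mod_cast Nat.lt_succ_self m
    _ ≤ _ := this

lemma hitTime_eq_coe_iff {t : ℕ} :
    hitTime P x = t ↔ occursAt P x t ∧ ∀ s, s < t → ¬ occursAt P x s := by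
  constructor
  · intro h
    have hlt : ∀ s, s < t → ¬ occursAt P x s := by
      intro s hs hos
      have := hitTime_le hos
      rw [h] at this
      exact absurd (Nat.cast_le.1 this) (by omega)
    refine ⟨?_, hlt⟩
    by_contra hc
    have : ((t + 1 : ℕ) : ℝ≥0∞) ≤ hitTime P x := by
      rw [le_hitTime_iff]
      intro s hs
      rcases Nat.lt_or_ge s t with h' | h'
      · exact absurd hs (hlt _ h')
      · rcases Nat.eq_or_lt_of_le h' with h'' | h''
        · exact absurd hs (h'' ▸ hc)
        · omega
    rw [h] at this
    exact absurd (Nat.cast_le.1 this) (by omega)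
  · rintro ⟨h1, h2⟩
    refine le_antisymm (hitTime_le h1) ?_
    rw [le_hitTime_iff]
    intro s hs
    by_contra hc
    exact h2 s (by omega) hs

lemma hitTime_eq_top_iff : hitTime P x = ⊤ ↔ ∀ n, ¬ occursAt P x n := by
  rw [hitTime, sInf_eq_top]
  constructor
  · intro h n hn
    exact (ENNReal.natCast_ne_top n) (h _ ⟨n, hn, rfl⟩)
  · rintro h b ⟨s, hs, rfl⟩
    exact absurd hs (h s)

lemma hitTime_cases : hitTime P x = ⊤ ∨ ∃ t : ℕ, hitTime P x = t := by
  classical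
  by_cases h : ∀ n, ¬ occursAt P x n
  · exact Or.inl (hitTime_eq_top_iff.2 h)
  · push_neg at h
    right
    exact ⟨Nat.find h, hitTime_eq_coe_iff.2 ⟨Nat.find_spec h, fun s hs => Nat.find_min h hs⟩⟩

lemma len_le_hitTime : (P.length : ℝ≥0∞) ≤ hitTime P x :=
  le_hitTime_iff.2 fun s hs => hs.1


end A

section B


variable {Ω : Type*} [MeasurableSpace Ω] (μ : Measure Ω) [IsProbabilityMeasure μ]
    (X : ℕ → Ω → Bool)

lemma coin_meas (hmeas : ∀ n, Measurable (X n)) (hfair : ∀ n, μ.map (X n) = fairCoin)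
    (i : ℕ) (b : Bool) : μ (X i ⁻¹' {b}) = 2⁻¹ := by
  rw [← Measure.map_apply (hmeas i) (measurableSet_singleton b), hfair i, fairCoin,
    PMF.toMeasure_apply_singleton _ _ (measurableSet_singleton b), PMF.bernoulli_apply]
  cases b
  · show (((1 : NNReal) - 1/2 : NNReal) : ℝ≥0∞) = 2⁻¹
    rw [ENNReal.coe_sub, ENNReal.coe_one, ENNReal.coe_div two_ne_zero, ENNReal.coe_one,
      ENNReal.coe_ofNat, one_div, ENNReal.one_sub_inv_two]
  · show (((1 : NNReal) / 2 : NNReal) : ℝ≥0∞) = 2⁻¹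
    rw [ENNReal.coe_div two_ne_zero, ENNReal.coe_one, ENNReal.coe_ofNat, one_div]

lemma cylinder_meas (hmeas : ∀ n, Measurable (X n))
    (hindep : iIndepFun X μ)
    (hfair : ∀ n, μ.map (X n) = fairCoin)
    (s : Finset ℕ) (g : ℕ → Bool) :
    μ (⋂ i ∈ s, X i ⁻¹' {g i}) = 2⁻¹ ^ s.card := by
  rw [hindep.measure_inter_preimage_eq_mul s
    (sets := fun i => {g i}) (fun i _ => measurableSet_singleton _)]
  rw [Finset.prod_congr rfl (fun i _ => coin_meas μ X hmeas hfair i (g i)), Finset.prod_const]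

variable (P : List Bool)

lemma measSet_occursAt (hmeas : ∀ n, Measurable (X n)) (n : ℕ) :
    MeasurableSet {ω | occursAt P (fun i => X i ω) n} := by
  by_cases hk : P.length ≤ n
  · have : {ω | occursAt P (fun i => X i ω) n}
        = ⋂ i : Fin P.length, X (n - P.length + i) ⁻¹' {P.get i} := by
      ext ω
      simp only [Set.mem_setOf_eq, occursAt, Set.mem_iInter, Set.mem_preimage,
        Set.mem_singleton_iff]
      constructor
      · rintro ⟨-, h⟩ i; exact h i i.2
      · intro h; exact ⟨hk, fun i hi => h ⟨i, hi⟩⟩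
    rw [this]
    exact MeasurableSet.iInter fun i => (hmeas _) (measurableSet_singleton _)
  · have : {ω | occursAt P (fun i => X i ω) n} = ∅ := by
      ext ω; simp [occursAt, hk]
    simp [this]

lemma block_indep (hmeas : ∀ n, Measurable (X n))
    (hindep : iIndepFun X μ)
    (hfair : ∀ n, μ.map (X n) = fairCoin)
    (a b c : ℕ) (hab : a ≤ b) (E : Set Ω)
    (hloc : ∀ ω ω', (∀ i, i < a → X i ω = X i ω') → ω ∈ E → ω' ∈ E) (g : ℕ → Bool) :
    μ (E ∩ ⋂ j ∈ Finset.Ico b c, X j ⁻¹' {g j}) = μ E * 2⁻¹ ^ (c - b) := by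
  classical
  set S := Finset.range a with hS
  set T := Finset.Ico b c with hT
  have hdisj : Disjoint S T := by
    rw [Finset.disjoint_left]
    intro i hi hi'
    rw [hS, Finset.mem_range] at hi
    rw [hT, Finset.mem_Ico] at hi'
    omega
  have hIndep := hindep.indepFun_finset S T hdisj hmeas
  set SE : Set ({i // i ∈ S} → Bool) := (fun ω (i : {i // i ∈ S}) => X (i : ℕ) ω) '' E with hSE
  have hEeq : E = (fun ω (i : {i // i ∈ S}) => X (i : ℕ) ω) ⁻¹' SE := by
    ext ω
    constructor
    · intro h; exact ⟨ω, h, rfl⟩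
    · rintro ⟨ω', hω', hY⟩
      refine hloc ω' ω (fun i hi => ?_) hω'
      exact congrFun hY ⟨i, Finset.mem_range.2 hi⟩
  set SF : Set ({j // j ∈ T} → Bool) := {v | ∀ j : {j // j ∈ T}, v j = g (j : ℕ)} with hSF
  have hFeq : (⋂ j ∈ T, X j ⁻¹' {g j}) = (fun ω (j : {j // j ∈ T}) => X (j : ℕ) ω) ⁻¹' SF := by
    ext ω
    simp only [Set.mem_iInter, Set.mem_preimage, Set.mem_singleton_iff, hSF, Set.mem_setOf_eq]
    constructor
    · intro h j; exact h j j.2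
    · intro h j hj; exact h ⟨j, hj⟩
  rw [hEeq, hFeq, hIndep.measure_inter_preimage_eq_mul SE SF (Set.toFinite SE).measurableSet
    (Set.toFinite SF).measurableSet, ← hEeq, ← hFeq,
    cylinder_meas μ X hmeas hindep hfair T g, hT, Nat.card_Ico]


end B

section C

variable {Ω : Type*} [MeasurableSpace Ω] (μ : Measure Ω) [IsProbabilityMeasure μ]
    (X : ℕ → Ω → Bool) (P : List Bool)

lemma measSet_eq (hmeas : ∀ n, Measurable (X n)) (t : ℕ) :
    MeasurableSet {ω | hitTime P (fun i => X i ω) = (t : ℝ≥0∞)} := by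
  have : {ω | hitTime P (fun i => X i ω) = (t : ℝ≥0∞)} =
      {ω | occursAt P (fun i => X i ω) t} ∩
        ⋂ (s : ℕ) (_ : s < t), {ω | occursAt P (fun i => X i ω) s}ᶜ := by
    ext ω
    simp only [Set.mem_setOf_eq, hitTime_eq_coe_iff, Set.mem_inter_iff, Set.mem_iInter,
      Set.mem_compl_iff]
  rw [this]
  exact (measSet_occursAt X P hmeas t).inter (MeasurableSet.iInter fun s =>
    MeasurableSet.iInter fun _ => (measSet_occursAt X P hmeas s).compl)

lemma measSet_gt (hmeas : ∀ n, Measurable (X n)) (m : ℕ) :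
    MeasurableSet {ω | (m : ℝ≥0∞) < hitTime P (fun i => X i ω)} := by
  have : {ω | (m : ℝ≥0∞) < hitTime P (fun i => X i ω)} =
      ⋂ (s : ℕ) (_ : s ≤ m), {ω | occursAt P (fun i => X i ω) s}ᶜ := by
    ext ω
    simp only [Set.mem_setOf_eq, lt_hitTime_iff, Set.mem_iInter, Set.mem_compl_iff]
  rw [this]
  exact MeasurableSet.iInter fun s => MeasurableSet.iInter fun _ =>
    (measSet_occursAt X P hmeas s).compl

lemma hitTime_local (t : ℕ) (ω ω' : Ω) (h : ∀ i, i < t → X i ω = X i ω')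
    (hω : hitTime P (fun i => X i ω) = (t : ℝ≥0∞)) :
    hitTime P (fun i => X i ω') = (t : ℝ≥0∞) := by
  rw [hitTime_eq_coe_iff] at hω ⊢
  obtain ⟨h1, h2⟩ := hω
  refine ⟨occursAt_congr (fun i hi => h i hi) le_rfl h1, fun s hs hos => ?_⟩
  exact h2 s hs (occursAt_congr (fun i hi => (h i hi).symm) (by omega) hos)

lemma renewal (hmeas : ∀ n, Measurable (X n))
    (hindep : iIndepFun X μ)
    (hfair : ∀ n, μ.map (X n) = fairCoin)
    (hP : 1 ≤ P.length) (m : ℕ) :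
    μ {ω | (m : ℝ≥0∞) < hitTime P (fun i => X i ω)} =
    ∑ d ∈ Finset.range P.length,
      (if P.drop d = P.take (P.length - d) then (2 : ℝ≥0∞) ^ (P.length - d) else 0) *
        μ {ω | hitTime P (fun i => X i ω) = ((m + (P.length - d) : ℕ) : ℝ≥0∞)} := by
  classical
  set k := P.length with hk
  set n := m + k with hn
  set T : Ω → ℝ≥0∞ := fun ω => hitTime P (fun i => X i ω) with hTdef
  set A := {ω : Ω | occursAt P (fun i => X i ω) n} with hAdef
  set g : ℕ → Bool := fun j => P.getD (j - (n - k)) false with hg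
  have hkn : k ≤ n := by omega
  -- A as a cylinder
  have hAcyl : A = ⋂ j ∈ Finset.Ico (n - k) n, X j ⁻¹' {g j} := by
    ext ω
    simp only [hAdef, Set.mem_setOf_eq, Set.mem_iInter, Set.mem_preimage,
      Set.mem_singleton_iff, Finset.mem_Ico]
    constructor
    · rintro ⟨-, h⟩ j hj
      have hidx : j - (n - k) < k := by omega
      have h2 := h (j - (n - k)) hidx
      rw [(by omega : n - k + (j - (n - k)) = j)] at h2
      show X j ω = P.getD (j - (n - k)) false
      rw [List.getD_eq_getElem _ _ hidx]
      exact h2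
    · intro h
      refine ⟨hkn, fun i hi => ?_⟩
      have h2 := h (n - k + i) ⟨by omega, by omega⟩
      show X (n - k + i) ω = P.get ⟨i, hi⟩
      rw [h2]
      show P.getD (n - k + i - (n - k)) false = P.get ⟨i, hi⟩
      rw [(by omega : n - k + i - (n - k) = i), List.getD_eq_getElem _ _ hi, List.get_eq_getElem]
  have hA : μ A = 2⁻¹ ^ k := by
    rw [hAcyl, cylinder_meas μ X hmeas hindep hfair, Nat.card_Ico]
    congr 1
    omega
  -- locality of {T = t}
  have hloc : ∀ t : ℕ, ∀ ω ω', (∀ i, i < t → X i ω = X i ω') →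
      ω ∈ {ω : Ω | T ω = (t : ℝ≥0∞)} → ω' ∈ {ω : Ω | T ω = (t : ℝ≥0∞)} := by
    intro t ω ω' h hω
    exact hitTime_local X P t ω ω' h hω
  -- decomposition of A
  have hdecomp : A = ⋃ t ∈ Finset.range (n + 1), A ∩ {ω | T ω = (t : ℝ≥0∞)} := by
    ext ω
    simp only [Set.mem_iUnion, Finset.mem_range, Set.mem_inter_iff, Set.mem_setOf_eq]
    constructor
    · intro h
      rcases hitTime_cases (P := P) (x := fun i => X i ω) with hc | ⟨t, ht⟩
      · exact absurd h (hitTime_eq_top_iff.1 hc n)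
      · have hle : T ω ≤ (n : ℝ≥0∞) := hitTime_le h
        rw [show T ω = hitTime P (fun i => X i ω) from rfl, ht] at hle
        exact ⟨t, Nat.lt_succ_of_le (Nat.cast_le.1 hle), h, ht⟩
    · rintro ⟨t, -, h, -⟩
      exact h
  have hdisj : (↑(Finset.range (n + 1)) : Set ℕ).PairwiseDisjoint
      (fun t : ℕ => A ∩ {ω | T ω = (t : ℝ≥0∞)}) := by
    intro a _ b _ hab
    simp only [Function.onFun, Set.disjoint_left]
    rintro ω ⟨-, h1⟩ ⟨-, h2⟩
    rw [Set.mem_setOf_eq] at h1 h2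
    exact hab (by exact_mod_cast h1.symm.trans h2)
  have hAmeas : ∀ t : ℕ, MeasurableSet (A ∩ {ω | T ω = (t : ℝ≥0∞)}) := fun t =>
    (measSet_occursAt X P hmeas n).inter (measSet_eq X P hmeas t)
  have hsum : μ A = ∑ t ∈ Finset.range (n + 1), μ (A ∩ {ω | T ω = (t : ℝ≥0∞)}) := by
    conv_lhs => rw [hdecomp]
    exact measure_biUnion_finset hdisj fun t _ => hAmeas t
  -- piece 1 : t ≤ m
  have h1 : ∀ t ∈ Finset.range (m + 1), μ (A ∩ {ω | T ω = (t : ℝ≥0∞)}) =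
      μ {ω | T ω = (t : ℝ≥0∞)} * 2⁻¹ ^ k := by
    intro t ht
    rw [Finset.mem_range] at ht
    rw [hAcyl, Set.inter_comm,
      block_indep μ X hmeas hindep hfair t (n - k) n (by omega) _ (hloc t) g,
      (by omega : n - (n - k) = k)]
  -- piece 2 : t = n - d with d < k
  have h2 : ∀ d, d < k → μ (A ∩ {ω | T ω = ((n - d : ℕ) : ℝ≥0∞)}) =
      (if P.drop d = P.take (k - d) then (1 : ℝ≥0∞) else 0) *
        (2⁻¹ ^ d * μ {ω | T ω = ((n - d : ℕ) : ℝ≥0∞)}) := by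
    intro d hd
    set t := n - d with htdef
    have htn : t + d = n := by omega
    by_cases hover : P.drop d = P.take (k - d)
    · rw [if_pos hover, one_mul]
      set g2 : ℕ → Bool := fun j => P.getD (k - d + (j - t)) false with hg2
      have hset : A ∩ {ω | T ω = ((t : ℕ) : ℝ≥0∞)} =
          {ω | T ω = ((t : ℕ) : ℝ≥0∞)} ∩ ⋂ j ∈ Finset.Ico t n, X j ⁻¹' {g2 j} := by
        ext ω
        simp only [hAdef, Set.mem_inter_iff, Set.mem_setOf_eq, Set.mem_iInter,
          Set.mem_preimage, Set.mem_singleton_iff, Finset.mem_Ico]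
        constructor
        · rintro ⟨hA', hT'⟩
          refine ⟨hT', fun j hj => ?_⟩
          have hidx : j - (n - k) < k := by omega
          have h3 := hA'.2 (j - (n - k)) hidx
          rw [(by omega : n - k + (j - (n - k)) = j)] at h3
          show X j ω = P.getD (k - d + (j - t)) false
          rw [(by omega : k - d + (j - t) = j - (n - k)), List.getD_eq_getElem _ _ hidx]
          exact h3
        · rintro ⟨hT', hC⟩
          have hocc_t : occursAt P (fun i => X i ω) t := (hitTime_eq_coe_iff.1 hT').1
          have hkt : k ≤ t := hocc_t.1
          refine ⟨⟨hkn, fun i hi => ?_⟩, hT'⟩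
          by_cases hit : i < k - d
          · have h3 := hocc_t.2 (d + i) (by omega)
            rw [(by omega : t - k + (d + i) = n - k + i)] at h3
            have h4 : (P.drop d).getD i false = (P.take (k - d)).getD i false := by
              rw [hover]
            rw [List.getD_eq_getElem _ _ (by simp only [List.length_drop]; omega),
              List.getD_eq_getElem _ _ (by simp only [List.length_take]; omega)] at h4
            simp only [List.get_eq_getElem, List.getElem_drop, List.getElem_take] at h4
            refine h3.trans ?_
            simp only [List.get_eq_getElem]
            exact h4
          · have h3 := hC (n - k + i) ⟨by omega, by omega⟩
            show X (n - k + i) ω = P.get ⟨i, hi⟩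
            rw [h3]
            show P.getD (k - d + (n - k + i - t)) false = P.get ⟨i, hi⟩
            rw [(by omega : k - d + (n - k + i - t) = i), List.getD_eq_getElem _ _ hi, List.get_eq_getElem]
      rw [hset, block_indep μ X hmeas hindep hfair t t n le_rfl _ (hloc t) g2,
        (by omega : n - t = d), mul_comm]
    · rw [if_neg hover, zero_mul]
      have hempty : A ∩ {ω | T ω = ((t : ℕ) : ℝ≥0∞)} = ∅ := by
        ext ω
        simp only [hAdef, Set.mem_inter_iff, Set.mem_setOf_eq, Set.mem_empty_iff_false,
          iff_false, not_and]
        intro hA' hT'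
        have hocc_t : occursAt P (fun i => X i ω) t := (hitTime_eq_coe_iff.1 hT').1
        have hkt : k ≤ t := hocc_t.1
        apply hover
        apply List.ext_getElem (by simp only [List.length_drop, List.length_take]; omega)
        intro i hi1 hi2
        simp only [List.length_drop] at hi1
        have h3 := hocc_t.2 (d + i) (by omega)
        have h4 := hA'.2 i (by omega)
        rw [(by omega : t - k + (d + i) = n - k + i)] at h3
        have h5 : P.get ⟨d + i, by omega⟩ = P.get ⟨i, by omega⟩ := h3.symm.trans h4
        simp only [List.getElem_drop, List.getElem_take]
        simp only [List.get_eq_getElem] at h5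
        exact h5
      rw [hempty]
      simp
  -- assemble
  set p := μ {ω : Ω | (m : ℝ≥0∞) < T ω} with hpdef
  have hcompl : {ω : Ω | (m : ℝ≥0∞) < T ω}ᶜ =
      ⋃ t ∈ Finset.range (m + 1), {ω : Ω | T ω = (t : ℝ≥0∞)} := by
    ext ω
    simp only [Set.mem_compl_iff, Set.mem_setOf_eq, not_lt, Set.mem_iUnion, Finset.mem_range]
    constructor
    · intro h
      rcases hitTime_cases (P := P) (x := fun i => X i ω) with hc | ⟨t, ht⟩
      · rw [show T ω = hitTime P (fun i => X i ω) from rfl, hc, top_le_iff] at h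
        exact absurd h (by simp)
      · rw [show T ω = hitTime P (fun i => X i ω) from rfl, ht] at h ⊢
        exact ⟨t, by exact_mod_cast Nat.lt_succ_of_le (Nat.cast_le.1 h), rfl⟩
    · rintro ⟨t, ht, h⟩
      rw [h]
      exact_mod_cast Nat.cast_le.2 (by omega)
  have hdisj2 : (↑(Finset.range (m + 1)) : Set ℕ).PairwiseDisjoint
      (fun t : ℕ => {ω : Ω | T ω = (t : ℝ≥0∞)}) := by
    intro a _ b _ hab
    simp only [Function.onFun, Set.disjoint_left]
    rintro ω h1 h2
    rw [Set.mem_setOf_eq] at h1 h2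
    exact hab (by exact_mod_cast h1.symm.trans h2)
  have hsum2 : ∑ t ∈ Finset.range (m + 1), μ {ω : Ω | T ω = (t : ℝ≥0∞)} = 1 - p := by
    rw [← measure_biUnion_finset hdisj2 fun t _ => measSet_eq X P hmeas t, ← hcompl,
      measure_compl (measSet_gt X P hmeas m) (measure_ne_top μ _), measure_univ]
  -- split the sum
  have hsplit : ∑ t ∈ Finset.range (n + 1), μ (A ∩ {ω | T ω = (t : ℝ≥0∞)}) =
      ∑ t ∈ Finset.range (m + 1), μ (A ∩ {ω | T ω = (t : ℝ≥0∞)}) +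
      ∑ t ∈ Finset.Ico (m + 1) (n + 1), μ (A ∩ {ω | T ω = (t : ℝ≥0∞)}) := by
    rw [Finset.range_eq_Ico,
      ← Finset.sum_Ico_consecutive _ (by omega : 0 ≤ m + 1) (by omega : m + 1 ≤ n + 1),
      ← Finset.range_eq_Ico]
  have hreindex : ∑ t ∈ Finset.Ico (m + 1) (n + 1), μ (A ∩ {ω | T ω = (t : ℝ≥0∞)}) =
      ∑ d ∈ Finset.range k, μ (A ∩ {ω | T ω = ((n - d : ℕ) : ℝ≥0∞)}) := by
    refine Finset.sum_nbij' (i := fun t => n - t) (j := fun d => n - d) ?_ ?_ ?_ ?_ ?_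
    · intro t ht
      rw [Finset.mem_Ico] at ht
      show n - t ∈ Finset.range k
      rw [Finset.mem_range]
      omega
    · intro d hd
      rw [Finset.mem_range] at hd
      show n - d ∈ Finset.Ico (m + 1) (n + 1)
      rw [Finset.mem_Ico]
      omega
    · intro t ht
      rw [Finset.mem_Ico] at ht
      show n - (n - t) = t
      omega
    · intro d hd
      rw [Finset.mem_range] at hd
      show n - (n - d) = d
      omega
    · intro t ht
      rw [Finset.mem_Ico] at ht
      show μ (A ∩ {ω | T ω = (t : ℝ≥0∞)}) = μ (A ∩ {ω | T ω = ((n - (n - t) : ℕ) : ℝ≥0∞)})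
      rw [(by omega : n - (n - t) = t)]
  -- the main equation
  have heq : (2⁻¹ : ℝ≥0∞) ^ k = (1 - p) * 2⁻¹ ^ k +
      ∑ d ∈ Finset.range k, (if P.drop d = P.take (k - d) then (1 : ℝ≥0∞) else 0) *
        (2⁻¹ ^ d * μ {ω | T ω = ((n - d : ℕ) : ℝ≥0∞)}) := by
    calc (2⁻¹ : ℝ≥0∞) ^ k = μ A := hA.symm
    _ = ∑ t ∈ Finset.range (n + 1), μ (A ∩ {ω | T ω = (t : ℝ≥0∞)}) := hsum
    _ = ∑ t ∈ Finset.range (m + 1), μ (A ∩ {ω | T ω = (t : ℝ≥0∞)}) +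
        ∑ t ∈ Finset.Ico (m + 1) (n + 1), μ (A ∩ {ω | T ω = (t : ℝ≥0∞)}) := hsplit
    _ = _ := by
        rw [Finset.sum_congr rfl h1, ← Finset.sum_mul, hsum2, hreindex,
          Finset.sum_congr rfl (fun d hd => h2 d (Finset.mem_range.1 hd))]
  -- solve for p
  set S := ∑ d ∈ Finset.range k, (if P.drop d = P.take (k - d) then (1 : ℝ≥0∞) else 0) *
    (2⁻¹ ^ d * μ {ω | T ω = ((n - d : ℕ) : ℝ≥0∞)}) with hSdef
  have hqne : (2⁻¹ : ℝ≥0∞) ^ k ≠ ⊤ := by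
    apply ENNReal.pow_ne_top
    simp
  have hpq_le : p * 2⁻¹ ^ k ≤ 2⁻¹ ^ k := by
    calc p * 2⁻¹ ^ k ≤ 1 * 2⁻¹ ^ k := by
          exact mul_le_mul_left prob_le_one _
    _ = 2⁻¹ ^ k := one_mul _
  have hsub : (1 - p) * (2⁻¹ : ℝ≥0∞) ^ k = 2⁻¹ ^ k - p * 2⁻¹ ^ k := by
    rw [ENNReal.sub_mul (fun _ _ => hqne), one_mul]
  have hSpq : S = p * 2⁻¹ ^ k := by
    have heq' : (2⁻¹ : ℝ≥0∞) ^ k = (2⁻¹ ^ k - p * 2⁻¹ ^ k) + S := by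
      rw [← hsub]; exact heq
    have h5 : (2⁻¹ ^ k - p * (2⁻¹:ℝ≥0∞) ^ k) + S = (2⁻¹ ^ k - p * 2⁻¹ ^ k) + p * 2⁻¹ ^ k := by
      rw [tsub_add_cancel_of_le hpq_le, ← heq']
    exact (ENNReal.add_right_inj (ne_top_of_le_ne_top hqne tsub_le_self)).1 h5
  have hcancel : (2⁻¹ : ℝ≥0∞) ^ k * 2 ^ k = 1 := by
    rw [← mul_pow, ENNReal.inv_mul_cancel (by norm_num) (by norm_num), one_pow]
  have hp : p = S * 2 ^ k := by
    calc p = p * ((2⁻¹ : ℝ≥0∞) ^ k * 2 ^ k) := by rw [hcancel, mul_one]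
    _ = p * 2⁻¹ ^ k * 2 ^ k := by ring
    _ = S * 2 ^ k := by rw [← hSpq]
  show p = _
  rw [hp, hSdef, Finset.sum_mul]
  refine Finset.sum_congr rfl fun d hd => ?_
  rw [Finset.mem_range] at hd
  have hset : {ω : Ω | T ω = ((n - d : ℕ) : ℝ≥0∞)} =
      {ω : Ω | hitTime P (fun i => X i ω) = ((m + (k - d) : ℕ) : ℝ≥0∞)} := by
    ext ω
    simp only [Set.mem_setOf_eq, (by omega : n - d = m + (k - d))]
    rfl
  rw [hset]
  by_cases hover : P.drop d = P.take (k - d)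
  · rw [if_pos hover, if_pos hover, one_mul]
    have : (2⁻¹ : ℝ≥0∞) ^ d * 2 ^ k = 2 ^ (k - d) := by
      rw [(by omega : k = (k - d) + d), pow_add, ← mul_assoc, mul_comm ((2⁻¹ : ℝ≥0∞) ^ d),
        mul_assoc, ← mul_pow, ENNReal.inv_mul_cancel (by norm_num) (by norm_num), one_pow,
        mul_one]
      congr 1
      omega
    calc (2⁻¹ : ℝ≥0∞) ^ d *
          μ {ω | hitTime P (fun i => X i ω) = ((m + (k - d) : ℕ) : ℝ≥0∞)} * 2 ^ k
        = (2⁻¹ : ℝ≥0∞) ^ d * 2 ^ k *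
          μ {ω | hitTime P (fun i => X i ω) = ((m + (k - d) : ℕ) : ℝ≥0∞)} := by ring
    _ = _ := by rw [this]
  · rw [if_neg hover, if_neg hover, zero_mul, zero_mul, zero_mul]


end C

section D
lemma tsum_if_lt (a : ℝ≥0∞) (ha : a = ⊤ ∨ ∃ t : ℕ, a = t) :
    ∑' m : ℕ, (if (m : ℝ≥0∞) < a then (1 : ℝ≥0∞) else 0) = a := by
  classical
  rcases ha with h | ⟨t, ht⟩
  · subst h
    rw [tsum_congr (fun m => if_pos (ENNReal.natCast_lt_top m))]
    exact ENNReal.tsum_const_eq_top_of_ne_zero one_ne_zero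
  · subst ht
    rw [tsum_eq_sum (s := Finset.range t) (fun m hm => by
      rw [Finset.mem_range] at hm
      exact if_neg (by exact_mod_cast fun h => hm (Nat.cast_lt.1 h)))]
    rw [Finset.sum_congr rfl (fun m hm => if_pos (by
      rw [Finset.mem_range] at hm
      exact_mod_cast Nat.cast_lt.2 hm)), Finset.sum_const, Finset.card_range, nsmul_eq_mul,
      mul_one]


variable {Ω : Type*} [MeasurableSpace Ω] (μ : Measure Ω) [IsProbabilityMeasure μ]
    (X : ℕ → Ω → Bool) (P : List Bool)


lemma lintegral_hitTime (hmeas : ∀ n, Measurable (X n)) :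
    ∫⁻ ω, hitTime P (fun i => X i ω) ∂μ =
      ∑' m : ℕ, μ {ω | (m : ℝ≥0∞) < hitTime P (fun i => X i ω)} := by
  classical
  have h1 : ∀ ω, hitTime P (fun i => X i ω) =
      ∑' m : ℕ, Set.indicator {ω | (m : ℝ≥0∞) < hitTime P (fun i => X i ω)}
        (fun _ => (1 : ℝ≥0∞)) ω := by
    intro ω
    rw [tsum_congr (fun m => Set.indicator_apply _ _ _)]
    exact (tsum_if_lt _ hitTime_cases).symm
  rw [lintegral_congr h1, lintegral_tsum (fun m =>
    (measurable_const.indicator (measSet_gt X P hmeas m)).aemeasurable)]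
  exact tsum_congr fun m => by
    rw [lintegral_indicator_const (measSet_gt X P hmeas m), one_mul]

lemma tsum_shift (hmeas : ∀ n, Measurable (X n)) (c : ℕ) (hc1 : 1 ≤ c) (hck : c ≤ P.length) :
    ∑' m : ℕ, μ {ω | hitTime P (fun i => X i ω) = ((m + c : ℕ) : ℝ≥0∞)} =
      μ {ω | hitTime P (fun i => X i ω) ≠ ⊤} := by
  have hUnion : {ω : Ω | hitTime P (fun i => X i ω) ≠ ⊤} =
      ⋃ m : ℕ, {ω | hitTime P (fun i => X i ω) = ((m + c : ℕ) : ℝ≥0∞)} := by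
    ext ω
    simp only [Set.mem_setOf_eq, Set.mem_iUnion]
    constructor
    · intro h
      rcases hitTime_cases (P := P) (x := fun i => X i ω) with hc' | ⟨t, ht⟩
      · exact absurd hc' h
      · have hkt : P.length ≤ t := by
          have := len_le_hitTime (P := P) (x := fun i => X i ω)
          rw [ht] at this
          exact_mod_cast this
        exact ⟨t - c, by rw [(by omega : t - c + c = t)]; exact ht⟩
    · rintro ⟨m, hm⟩
      rw [hm]
      exact ENNReal.natCast_ne_top _
  have hdisj : Pairwise (Function.onFun Disjoint
      (fun m : ℕ => {ω : Ω | hitTime P (fun i => X i ω) = ((m + c : ℕ) : ℝ≥0∞)})) := by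
    intro a b hab
    simp only [Function.onFun, Set.disjoint_left]
    rintro ω h1 h2
    rw [Set.mem_setOf_eq] at h1 h2
    have : ((a + c : ℕ) : ℝ≥0∞) = ((b + c : ℕ) : ℝ≥0∞) := h1.symm.trans h2
    have : a + c = b + c := by exact_mod_cast this
    exact hab (by omega)
  rw [hUnion, measure_iUnion hdisj (fun m => measSet_eq X P hmeas _)]

theorem stmt_17' {Ω : Type*} [MeasurableSpace Ω] (μ : Measure Ω) [IsProbabilityMeasure μ]
    (X : ℕ → Ω → Bool) (hmeas : ∀ n, Measurable (X n))
    (hindep : iIndepFun X μ)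
    (hfair : ∀ n, μ.map (X n) = fairCoin)
    (P : List Bool) (hP : 1 ≤ P.length) :
    (2 : ℝ≥0∞) ^ P.length ≤ ∫⁻ ω, hitTime P (fun n => X n ω) ∂μ ∧
    ((∫⁻ ω, hitTime P (fun n => X n ω) ∂μ = (2 : ℝ≥0∞) ^ P.length) ↔
      ∀ m, 0 < m → m < P.length → P.drop (P.length - m) ≠ P.take m) := by
  classical
  have hkey : ∫⁻ ω, hitTime P (fun n => X n ω) ∂μ =
      (∑ d ∈ Finset.range P.length,
        (if P.drop d = P.take (P.length - d) then (2 : ℝ≥0∞) ^ (P.length - d) else 0)) *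
        μ {ω | hitTime P (fun i => X i ω) ≠ ⊤} := by
    rw [lintegral_hitTime μ X P hmeas,
      tsum_congr (fun m => renewal μ X P hmeas hindep hfair hP m),
      Summable.tsum_finsetSum (fun d _ => ENNReal.summable), Finset.sum_mul]
    refine Finset.sum_congr rfl fun d hd => ?_
    rw [Finset.mem_range] at hd
    rw [ENNReal.tsum_mul_left, tsum_shift μ X P hmeas (P.length - d) (by omega) (by omega)]
  have h2netop : (2 : ℝ≥0∞) ≠ ⊤ := by norm_num
  have hS0ne : (∑ d ∈ Finset.range P.length,
      (if P.drop d = P.take (P.length - d) then (2 : ℝ≥0∞) ^ (P.length - d) else 0)) ≠ ⊤ := by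
    refine ENNReal.sum_ne_top.2 fun d _ => ?_
    split
    · exact ENNReal.pow_ne_top h2netop
    · exact ENNReal.zero_ne_top
  have hTtop_meas : MeasurableSet {ω | hitTime P (fun i => X i ω) = ⊤} := by
    have heq : {ω : Ω | hitTime P (fun i => X i ω) = ⊤} =
        ⋂ m : ℕ, {ω | (m : ℝ≥0∞) < hitTime P (fun i => X i ω)} := by
      ext ω
      simp only [Set.mem_setOf_eq, Set.mem_iInter]
      constructor
      · intro h m
        rw [h]
        exact ENNReal.natCast_lt_top m
      · intro h
        rcases hitTime_cases (P := P) (x := fun i => X i ω) with hc | ⟨t, ht⟩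
        · exact hc
        · exact absurd (h t) (by rw [ht]; exact lt_irrefl _)
    rw [heq]
    exact MeasurableSet.iInter fun m => measSet_gt X P hmeas m
  have hr : μ {ω | hitTime P (fun i => X i ω) = ⊤} = 0 := by
    by_contra hr0
    have hle : ∀ m : ℕ, μ {ω | hitTime P (fun i => X i ω) = ⊤} ≤
        μ {ω | (m : ℝ≥0∞) < hitTime P (fun i => X i ω)} := fun m =>
      measure_mono (fun ω h => by
        rw [Set.mem_setOf_eq] at h ⊢
        rw [h]
        exact ENNReal.natCast_lt_top m)
    have htop : (⊤ : ℝ≥0∞) ≤ ∑' m : ℕ, μ {ω | (m : ℝ≥0∞) < hitTime P (fun i => X i ω)} := by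
      calc (⊤ : ℝ≥0∞) = ∑' _ : ℕ, μ {ω | hitTime P (fun i => X i ω) = ⊤} :=
            (ENNReal.tsum_const_eq_top_of_ne_zero hr0).symm
      _ ≤ _ := ENNReal.tsum_le_tsum hle
    have hEtop : ∫⁻ ω, hitTime P (fun n => X n ω) ∂μ = ⊤ := by
      rw [lintegral_hitTime μ X P hmeas]
      exact top_le_iff.1 htop
    rw [hkey] at hEtop
    exact absurd hEtop (ENNReal.mul_ne_top hS0ne (measure_ne_top μ _))
  have hq : μ {ω | hitTime P (fun i => X i ω) ≠ ⊤} = 1 := by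
    have hc : {ω : Ω | hitTime P (fun i => X i ω) ≠ ⊤} =
        {ω : Ω | hitTime P (fun i => X i ω) = ⊤}ᶜ := rfl
    rw [hc, measure_compl hTtop_meas (measure_ne_top μ _), hr, measure_univ, tsub_zero]
  rw [hq, mul_one] at hkey
  have hrange : Finset.range P.length = insert 0 (Finset.Ico 1 P.length) := by
    ext d
    simp only [Finset.mem_range, Finset.mem_insert, Finset.mem_Ico]
    omega
  have h0 : (if P.drop 0 = P.take (P.length - 0) then (2 : ℝ≥0∞) ^ (P.length - 0) else 0)
      = 2 ^ P.length := by
    rw [if_pos (by rw [List.drop_zero, Nat.sub_zero, List.take_length]), Nat.sub_zero]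
  have hS0split : (∑ d ∈ Finset.range P.length,
      (if P.drop d = P.take (P.length - d) then (2 : ℝ≥0∞) ^ (P.length - d) else 0)) =
      2 ^ P.length + ∑ d ∈ Finset.Ico 1 P.length,
        (if P.drop d = P.take (P.length - d) then (2 : ℝ≥0∞) ^ (P.length - d) else 0) := by
    rw [hrange, Finset.sum_insert (by simp [Finset.mem_Ico]), h0]
  rw [hS0split] at hkey
  constructor
  · rw [hkey]
    exact le_self_add
  · rw [hkey]
    constructor
    · intro h
      have hR0 : (∑ d ∈ Finset.Ico 1 P.length,
          (if P.drop d = P.take (P.length - d) then (2 : ℝ≥0∞) ^ (P.length - d) else 0)) = 0 := by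
        conv_rhs at h => rw [← add_zero ((2 : ℝ≥0∞) ^ P.length)]
        exact (ENNReal.add_right_inj (ENNReal.pow_ne_top h2netop)).1 h
      intro m hm0 hmk hcontra
      have hd := (Finset.sum_eq_zero_iff.1 hR0) (P.length - m) (by
        rw [Finset.mem_Ico]; omega)
      rw [(by omega : P.length - (P.length - m) = m), if_pos hcontra] at hd
      exact absurd hd (pow_ne_zero _ (by norm_num))
    · intro h
      have hR0 : (∑ d ∈ Finset.Ico 1 P.length,
          (if P.drop d = P.take (P.length - d) then (2 : ℝ≥0∞) ^ (P.length - d) else 0)) = 0 := by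
        refine Finset.sum_eq_zero fun d hd => ?_
        rw [Finset.mem_Ico] at hd
        have hcon := h (P.length - d) (by omega) (by omega)
        rw [(by omega : P.length - (P.length - d) = d)] at hcon
        exact if_neg hcon
      rw [hR0, add_zero]


end D

end St17

/-- For a fair coin, the expected waiting time for any pattern of length k ≥ 1 is at least
2^k, with equality iff no proper nonempty suffix of the pattern equals a prefix of it. -/
theorem stmt_17 {Ω : Type*} [MeasurableSpace Ω] (μ : Measure Ω) [IsProbabilityMeasure μ]
    (X : ℕ → Ω → Bool) (hmeas : ∀ n, Measurable (X n))
    (hindep : iIndepFun X μ)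
    (hfair : ∀ n, μ.map (X n) = fairCoin)
    (P : List Bool) (hP : 1 ≤ P.length) :
    (2 : ℝ≥0∞) ^ P.length ≤ ∫⁻ ω, hitTime P (fun n => X n ω) ∂μ ∧
    ((∫⁻ ω, hitTime P (fun n => X n ω) ∂μ = (2 : ℝ≥0∞) ^ P.length) ↔
      ∀ m, 0 < m → m < P.length → P.drop (P.length - m) ≠ P.take m) :=
  St17.stmt_17' μ X hmeas hindep hfair P hP
end

section
/- For a coin with P(H) = p ∈ (0,1) and pattern A = (A_1,...,A_k) over {H,T}, the expected waiting time for A equals sum over m in the set of self-overlap lengths of A of the product over i from 1 to m of 1/P(X = A_i), where m is a self-overlap length if the last m characters of A equal the first m characters of A. -/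
open MeasureTheory ProbabilityTheory
open scoped ENNReal

lemma solovev_take_map_prod {M : Type*} [CommMonoid M] (L : List Bool) (g : Bool → M) :
    ∀ m, m ≤ L.length → ((L.take m).map g).prod = ∏ i ∈ Finset.range m, g (L.getD i true)
  | 0, _ => by simp
  | (m+1), h => by
    have hm : m < L.length := h
    rw [List.take_succ, List.map_append, List.prod_append,
      solovev_take_map_prod L g m hm.le, Finset.prod_range_succ]
    simp [List.getElem?_eq_getElem hm, List.getD_eq_getElem L true hm]

lemma solovev_occursAt_iff (A : List Bool) (x : ℕ → Bool) (t : ℕ) :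
    occursAt A x t ↔ A.length ≤ t ∧ ∀ i, i < A.length → x (t - A.length + i) = A.getD i true := by
  unfold occursAt
  refine and_congr_right fun _ => ⟨fun h i hi => ?_, fun h i hi => ?_⟩
  · rw [h i hi, List.get_eq_getElem, List.getD_eq_getElem A true hi]
  · rw [h i hi, List.get_eq_getElem, List.getD_eq_getElem A true hi]

lemma solovev_hitTime_le {A : List Bool} {x : ℕ → Bool} {t : ℕ} (h : occursAt A x t) :
    hitTime A x ≤ t :=
  sInf_le ⟨t, h, rfl⟩

lemma solovev_hitTime_eq_top {A : List Bool} {x : ℕ → Bool} (h : ∀ t, ¬ occursAt A x t) :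
    hitTime A x = ⊤ := by
  have : {n | occursAt A x n} = ∅ := by ext t; simpa using h t
  rw [hitTime, this]
  simp

lemma solovev_hitTime_eq_find {A : List Bool} {x : ℕ → Bool} (h : ∃ t, occursAt A x t)
    [DecidablePred (occursAt A x)] :
    hitTime A x = Nat.find h := by
  refine le_antisymm (solovev_hitTime_le (Nat.find_spec h)) (le_sInf ?_)
  rintro b ⟨t, ht, rfl⟩
  show (Nat.find h : ℝ≥0∞) ≤ (t : ℝ≥0∞)
  exact_mod_cast Nat.find_min' h ht

lemma solovev_hitTime_eq_tsum (A : List Bool) (x : ℕ → Bool) :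
    hitTime A x = ∑' n : ℕ, Set.indicator {m : ℕ | ∀ t ≤ m, ¬ occursAt A x t} 1 n := by
  classical
  by_cases h : ∃ t, occursAt A x t
  · rw [solovev_hitTime_eq_find h]
    have hiff : ∀ n : ℕ, (∀ t ≤ n, ¬ occursAt A x t) ↔ n < Nat.find h := by
      intro n
      constructor
      · intro hn
        by_contra hlt
        push_neg at hlt
        exact hn _ hlt (Nat.find_spec h)
      · intro hn t ht
        exact Nat.find_min h (lt_of_le_of_lt ht hn)
    have hfun : ∀ n : ℕ, Set.indicator {m : ℕ | ∀ t ≤ m, ¬ occursAt A x t} 1 n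
        = if n ∈ Finset.range (Nat.find h) then (1:ℝ≥0∞) else 0 := by
      intro n
      by_cases hn : n < Nat.find h
      · have hmem : n ∈ {m : ℕ | ∀ t ≤ m, ¬ occursAt A x t} := (hiff n).mpr hn
        rw [Set.indicator_of_mem hmem, if_pos (Finset.mem_range.mpr hn)]
        rfl
      · have hmem : n ∉ {m : ℕ | ∀ t ≤ m, ¬ occursAt A x t} := fun hc => hn ((hiff n).mp hc)
        rw [Set.indicator_of_notMem hmem, if_neg (fun hc => hn (Finset.mem_range.mp hc))]
    rw [tsum_congr hfun, tsum_eq_sum (s := Finset.range (Nat.find h))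
      (fun n hn => if_neg hn), Finset.sum_congr rfl (fun n hn => if_pos hn),
      Finset.sum_const, Finset.card_range, nsmul_eq_mul, mul_one]
  · push_neg at h
    have hfun : ∀ n : ℕ, Set.indicator {m : ℕ | ∀ t ≤ m, ¬ occursAt A x t} 1 n = (1:ℝ≥0∞) := by
      intro n
      have hmem : n ∈ {m : ℕ | ∀ t ≤ m, ¬ occursAt A x t} := fun t _ => h t
      rw [Set.indicator_of_mem hmem]
      rfl
    calc hitTime A x = ⊤ := solovev_hitTime_eq_top h
      _ = ∑' _ : ℕ, (1:ℝ≥0∞) := (ENNReal.tsum_const_eq_top_of_ne_zero one_ne_zero).symm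
      _ = _ := (tsum_congr hfun).symm

lemma solovev_indep_blocks {Ω : Type*} [MeasurableSpace Ω] {μ : Measure Ω}
    {X : ℕ → Ω → Bool} (hmeas : ∀ n, Measurable (X n))
    (hindep : iIndepFun X μ)
    (S T : Finset ℕ) (hST : Disjoint S T) (E F : Set Ω)
    (hE : ∀ ω ω', (∀ i ∈ S, X i ω = X i ω') → ω ∈ E → ω' ∈ E)
    (hF : ∀ ω ω', (∀ i ∈ T, X i ω = X i ω') → ω ∈ F → ω' ∈ F) :
    μ (E ∩ F) = μ E * μ F := by
  have hind := hindep.indepFun_finset S T hST hmeas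
  have hES : E = (fun ω (i : S) => X i ω) ⁻¹' ((fun ω (i : S) => X i ω) '' E) := by
    refine Set.Subset.antisymm (Set.subset_preimage_image _ _) ?_
    rintro ω' ⟨ω, hω, hωeq⟩
    exact hE ω ω' (fun i hi => congrFun hωeq ⟨i, hi⟩) hω
  have hFT : F = (fun ω (i : T) => X i ω) ⁻¹' ((fun ω (i : T) => X i ω) '' F) := by
    refine Set.Subset.antisymm (Set.subset_preimage_image _ _) ?_
    rintro ω' ⟨ω, hω, hωeq⟩
    exact hF ω ω' (fun i hi => congrFun hωeq ⟨i, hi⟩) hω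
  rw [hES, hFT]
  exact hind.measure_inter_preimage_eq_mul _ _
    (Set.to_countable _).measurableSet (Set.to_countable _).measurableSet

lemma solovev_meas_cyl {Ω : Type*} [MeasurableSpace Ω] {μ : Measure Ω} {p : ℝ≥0∞} {hp : p.toNNReal ≤ 1}
    {X : ℕ → Ω → Bool} (hmeas : ∀ n, Measurable (X n))
    (hindep : iIndepFun X μ)
    (hlaw : ∀ n, μ.map (X n) = (PMF.bernoulli p.toNNReal hp).toMeasure) (hpt : p ≠ ⊤)
    (s : Finset ℕ) (b : ℕ → Bool) :
    μ {ω | ∀ i ∈ s, X i ω = b i} = ∏ i ∈ s, (if b i then p else 1 - p) := by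
  have h2 : {ω | ∀ i ∈ s, X i ω = b i} = ⋂ i ∈ s, X i ⁻¹' {b i} := by
    ext ω; simp
  rw [h2, hindep.measure_inter_preimage_eq_mul s (fun i _ => measurableSet_singleton _)]
  refine Finset.prod_congr rfl fun i _ => ?_
  rw [← Measure.map_apply (hmeas i) (measurableSet_singleton _), hlaw i,
    PMF.toMeasure_apply_singleton _ _ (measurableSet_singleton _), PMF.bernoulli_apply]
  cases b i <;> simp [ENNReal.coe_toNNReal hpt, ENNReal.coe_sub]

section SetLevel

variable {Ω : Type*} (A : List Bool) (X : ℕ → Ω → Bool)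

/-- The event that the pattern occurs at time `t`. -/
def sOcc (t : ℕ) : Set Ω := {ω | occursAt A (fun n => X n ω) t}

/-- The event that the pattern has not occurred up to and including time `n`. -/
def sG (n : ℕ) : Set Ω := {ω | ∀ t ≤ n, ω ∉ sOcc A X t}

/-- The event that the pattern occurs for the first time at time `t`. -/
def sF (t : ℕ) : Set Ω := {ω | ω ∈ sOcc A X t ∧ ∀ s < t, ω ∉ sOcc A X s}

lemma mem_sOcc {ω : Ω} {t : ℕ} :
    ω ∈ sOcc A X t ↔ A.length ≤ t ∧ ∀ i, i < A.length → X (t - A.length + i) ω = A.getD i true :=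
  solovev_occursAt_iff A (fun n => X n ω) t

lemma mem_sOcc_add {ω : Ω} {n : ℕ} :
    ω ∈ sOcc A X (n + A.length) ↔ ∀ i, i < A.length → X (n + i) ω = A.getD i true := by
  rw [mem_sOcc]
  constructor
  · rintro ⟨-, h⟩ i hi
    have := h i hi
    rwa [Nat.add_sub_cancel] at this
  · intro h
    refine ⟨Nat.le_add_left _ _, fun i hi => ?_⟩
    rw [Nat.add_sub_cancel]
    exact h i hi

lemma sOcc_det {ω ω' : Ω} {t N : ℕ} (htN : t ≤ N)
    (hag : ∀ i ∈ Finset.range N, X i ω = X i ω') :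
    ω ∈ sOcc A X t ↔ ω' ∈ sOcc A X t := by
  rw [mem_sOcc, mem_sOcc]
  constructor <;> (rintro ⟨hkt, hv⟩; refine ⟨hkt, fun i hi => ?_⟩)
  · rw [← hag _ (Finset.mem_range.mpr (by omega))]
    exact hv i hi
  · rw [hag _ (Finset.mem_range.mpr (by omega))]
    exact hv i hi

lemma sG_det {ω ω' : Ω} {n : ℕ} (hag : ∀ i ∈ Finset.range n, X i ω = X i ω') :
    ω ∈ sG A X n → ω' ∈ sG A X n := by
  intro h t ht hc
  exact h t ht ((sOcc_det A X ht hag).mpr hc)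

lemma sF_det {ω ω' : Ω} {t : ℕ} (hag : ∀ i ∈ Finset.range t, X i ω = X i ω') :
    ω ∈ sF A X t → ω' ∈ sF A X t := by
  rintro ⟨h1, h2⟩
  exact ⟨(sOcc_det A X le_rfl hag).mp h1,
    fun s hs hc => h2 s hs ((sOcc_det A X hs.le hag).mpr hc)⟩

lemma sOcc_det_block {ω ω' : Ω} {n : ℕ}
    (hag : ∀ i ∈ (Finset.range A.length).image (n + ·), X i ω = X i ω') :
    ω ∈ sOcc A X (n + A.length) → ω' ∈ sOcc A X (n + A.length) := by
  rw [mem_sOcc_add, mem_sOcc_add]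
  intro h i hi
  rw [← hag _ (Finset.mem_image.mpr ⟨i, Finset.mem_range.mpr hi, rfl⟩)]
  exact h i hi

lemma sC_det {ω ω' : Ω} {n m : ℕ}
    (hag : ∀ i ∈ (Finset.Ico m A.length).image (n + ·), X i ω = X i ω') :
    ω ∈ {ω : Ω | ∀ i ∈ Finset.Ico m A.length, X (n + i) ω = A.getD i true} →
    ω' ∈ {ω : Ω | ∀ i ∈ Finset.Ico m A.length, X (n + i) ω = A.getD i true} := by
  intro h i hi
  rw [← hag _ (Finset.mem_image.mpr ⟨i, hi, rfl⟩)]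
  exact h i hi

lemma sOcc_meas [MeasurableSpace Ω] (hmeas : ∀ n, Measurable (X n)) (t : ℕ) :
    MeasurableSet (sOcc A X t) := by
  by_cases h : A.length ≤ t
  · have heq : sOcc A X t
        = ⋂ i, ⋂ (_ : i < A.length), (X (t - A.length + i)) ⁻¹' {A.getD i true} := by
      ext ω
      simp only [Set.mem_iInter, Set.mem_preimage, Set.mem_singleton_iff, mem_sOcc]
      exact ⟨fun hx i hi => hx.2 i hi, fun hv => ⟨h, hv⟩⟩
    rw [heq]
    exact MeasurableSet.iInter fun i => MeasurableSet.iInter fun _ =>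
      (hmeas _) (measurableSet_singleton _)
  · have heq : sOcc A X t = ∅ := by
      ext ω
      simp only [Set.mem_empty_iff_false, iff_false, mem_sOcc]
      exact fun hx => h hx.1
    rw [heq]
    exact MeasurableSet.empty

lemma sG_meas [MeasurableSpace Ω] (hmeas : ∀ n, Measurable (X n)) (n : ℕ) :
    MeasurableSet (sG A X n) := by
  have heq : sG A X n = ⋂ t, ⋂ (_ : t ≤ n), (sOcc A X t)ᶜ := by
    ext ω
    simp only [Set.mem_iInter, Set.mem_compl_iff]
    exact Iff.rfl
  rw [heq]
  exact MeasurableSet.iInter fun t => MeasurableSet.iInter fun _ =>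
    (sOcc_meas A X hmeas t).compl

lemma sF_meas [MeasurableSpace Ω] (hmeas : ∀ n, Measurable (X n)) (t : ℕ) :
    MeasurableSet (sF A X t) := by
  have heq : sF A X t = sOcc A X t ∩ ⋂ s, ⋂ (_ : s < t), (sOcc A X s)ᶜ := by
    ext ω
    simp only [Set.mem_inter_iff, Set.mem_iInter, Set.mem_compl_iff]
    exact Iff.rfl
  rw [heq]
  exact (sOcc_meas A X hmeas t).inter
    (MeasurableSet.iInter fun s => MeasurableSet.iInter fun _ => (sOcc_meas A X hmeas s).compl)

lemma sF_empty {t : ℕ} (ht : t < A.length) : sF A X t = ∅ := by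
  ext ω
  simp only [Set.mem_empty_iff_false, iff_false]
  rintro ⟨h1, -⟩
  rw [mem_sOcc] at h1
  omega

lemma sF_disjoint {t t' : ℕ} (h : t < t') : Disjoint (sF A X t) (sF A X t') := by
  rw [Set.disjoint_left]
  rintro ω ⟨h1, -⟩ ⟨-, h2'⟩
  exact h2' t h h1

lemma sDecomp (hk : 0 < A.length) (n : ℕ) :
    sG A X n ∩ sOcc A X (n + A.length) =
      ⋃ m ∈ Finset.Icc 1 A.length, (sF A X (n + m) ∩ sOcc A X (n + A.length)) := by
  classical
  ext ω
  simp only [Set.mem_inter_iff, Set.mem_iUnion, exists_prop, Finset.mem_Icc]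
  constructor
  · rintro ⟨hG, hB⟩
    have hex : ∃ t, ω ∈ sOcc A X t := ⟨n + A.length, hB⟩
    have hspec := Nat.find_spec hex
    have ht0le : Nat.find hex ≤ n + A.length := Nat.find_min' hex hB
    have ht0gt : n < Nat.find hex := by
      by_contra hle
      push_neg at hle
      exact hG _ hle hspec
    refine ⟨Nat.find hex - n, ⟨by omega, by omega⟩, ⟨?_, ?_⟩, hB⟩
    · have harith : n + (Nat.find hex - n) = Nat.find hex := by omega
      rw [harith]
      exact hspec
    · intro s hs
      refine Nat.find_min hex ?_
      omega
  · rintro ⟨m, ⟨hm1, hmk⟩, ⟨h1, h2⟩, hB⟩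
    exact ⟨fun t ht hc => h2 t (by omega) hc, hB⟩

lemma sG_subset (n : ℕ) :
    sG A X (n + A.length) ⊆ sG A X n ∩ (sOcc A X (n + A.length))ᶜ :=
  fun ω h => ⟨fun t ht => h t (by omega), h _ le_rfl⟩

lemma sUnion_F : (⋃ t, sF A X t) = (⋂ n, sG A X n)ᶜ := by
  classical
  ext ω
  simp only [Set.mem_iUnion, Set.mem_compl_iff, Set.mem_iInter, not_forall]
  constructor
  · rintro ⟨t, h1, -⟩
    exact ⟨t, fun hG => hG t le_rfl h1⟩
  · rintro ⟨n, hn⟩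
    have hex : ∃ t, ω ∈ sOcc A X t := by
      by_contra hc
      push_neg at hc
      exact hn fun t _ => hc t
    exact ⟨Nat.find hex, Nat.find_spec hex, fun s hs => Nat.find_min hex hs⟩

lemma overlap_getD {m : ℕ} (hmk : m ≤ A.length)
    (heq : A.drop (A.length - m) = A.take m) {j : ℕ} (hj : j < m) :
    A.getD (A.length - m + j) true = A.getD j true := by
  have h := congrArg (fun L : List Bool => L[j]?) heq
  simp only [List.getElem?_drop, List.getElem?_take, if_pos hj] at h
  have h1 : A.length - m + j < A.length := by omega
  have h2 : j < A.length := by omega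
  rw [List.getD_eq_getElem A true h1, List.getD_eq_getElem A true h2]
  rw [List.getElem?_eq_getElem h1, List.getElem?_eq_getElem h2] at h
  exact Option.some_injective _ h

lemma overlap_exists_ne {m : ℕ} (hmk : m ≤ A.length)
    (hne : A.drop (A.length - m) ≠ A.take m) :
    ∃ j, j < m ∧ A.getD (A.length - m + j) true ≠ A.getD j true := by
  by_contra hcon
  push_neg at hcon
  apply hne
  have hl1 : (A.drop (A.length - m)).length = m := by
    rw [List.length_drop]; omega
  have hl2 : (A.take m).length = m := by
    rw [List.length_take]; omega
  refine List.ext_getElem (by rw [hl1, hl2]) ?_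
  intro i hi1 hi2
  have him : i < m := by rwa [hl1] at hi1
  have h1 : A.length - m + i < A.length := by omega
  have h2 : i < A.length := by omega
  have hci := hcon i him
  rw [List.getD_eq_getElem A true h1, List.getD_eq_getElem A true h2] at hci
  rw [List.getElem_drop, List.getElem_take]
  exact hci

lemma sEmpty {m : ℕ} (hm1 : 1 ≤ m) (hmk : m ≤ A.length)
    (hne : A.drop (A.length - m) ≠ A.take m) (n : ℕ) :
    sF A X (n + m) ∩ sOcc A X (n + A.length) = ∅ := by
  obtain ⟨j, hj, hne'⟩ := overlap_exists_ne A hmk hne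
  ext ω
  simp only [Set.mem_inter_iff, Set.mem_empty_iff_false, iff_false]
  rintro ⟨⟨h1, -⟩, hB⟩
  rw [mem_sOcc] at h1
  rw [mem_sOcc_add] at hB
  obtain ⟨hkt, hv⟩ := h1
  have e1 : X (n + j) ω = A.getD (A.length - m + j) true := by
    have hvj := hv (A.length - m + j) (by omega)
    have harith : n + m - A.length + (A.length - m + j) = n + j := by omega
    rwa [harith] at hvj
  have e2 : X (n + j) ω = A.getD j true := hB j (by omega)
  exact hne' (by rw [← e1, ← e2])

lemma sOverlap {m : ℕ} (hm1 : 1 ≤ m) (hmk : m ≤ A.length)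
    (heq : A.drop (A.length - m) = A.take m) (n : ℕ) :
    sF A X (n + m) ∩ sOcc A X (n + A.length) =
      sF A X (n + m) ∩ {ω | ∀ i ∈ Finset.Ico m A.length, X (n + i) ω = A.getD i true} := by
  ext ω
  simp only [Set.mem_inter_iff, Set.mem_setOf_eq, Finset.mem_Ico]
  constructor
  · rintro ⟨hF, hB⟩
    rw [mem_sOcc_add] at hB
    exact ⟨hF, fun i hi => hB i hi.2⟩
  · rintro ⟨hF, hC⟩
    refine ⟨hF, ?_⟩
    rw [mem_sOcc_add]
    intro i hi
    rcases lt_or_ge i m with him | him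
    · obtain ⟨h1, -⟩ := hF
      rw [mem_sOcc] at h1
      obtain ⟨hkt, hv⟩ := h1
      have e1 : X (n + i) ω = A.getD (A.length - m + i) true := by
        have hvi := hv (A.length - m + i) (by omega)
        have harith : n + m - A.length + (A.length - m + i) = n + i := by omega
        rwa [harith] at hvi
      rw [e1, overlap_getD A hmk heq him]
    · exact hC i ⟨him, hi⟩

end SetLevel

/-- Solovev's formula: for a coin with P(H) = p ∈ (0,1) and a pattern A over {H,T},
the expected waiting time for A equals the sum, over all self-overlap lengths m of A
(i.e. m such that the last m characters of A equal its first m characters), of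
∏_{i=1}^{m} 1/P(X = A_i). -/
theorem stmt_19 (p : ℝ≥0∞) (hp0 : 0 < p) (hp1 : p < 1)
    {Ω : Type*} [MeasurableSpace Ω] (μ : Measure Ω) [IsProbabilityMeasure μ]
    (X : ℕ → Ω → Bool) (hmeas : ∀ n, Measurable (X n))
    (hindep : iIndepFun X μ)
    (hlaw : ∀ n, μ.map (X n) = (PMF.bernoulli p.toNNReal
      (by simpa using ENNReal.toNNReal_mono ENNReal.one_ne_top hp1.le)).toMeasure)
    (A : List Bool) :
    ∫⁻ ω, hitTime A (fun n => X n ω) ∂μ =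
      ∑ m ∈ (Finset.Icc 1 A.length).filter
          (fun m => A.drop (A.length - m) = A.take m),
        ((A.take m).map fun a => (if a then p else 1 - p)⁻¹).prod := by
  classical
  by_cases hk0 : A.length = 0
  · -- trivial case : the empty pattern
    have hA : A = [] := List.length_eq_zero_iff.mp hk0
    subst hA
    have hzero : ∀ ω : Ω, hitTime ([] : List Bool) (fun n => X n ω) = 0 := by
      intro ω
      refine le_antisymm ?_ zero_le
      have h0 : occursAt ([] : List Bool) (fun n => X n ω) 0 :=
        ⟨le_rfl, fun i hi => absurd hi (Nat.not_lt_zero i)⟩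
      simpa using solovev_hitTime_le h0
    have hint : ∫⁻ ω, hitTime ([] : List Bool) (fun n => X n ω) ∂μ = ∫⁻ _, 0 ∂μ :=
      lintegral_congr hzero
    rw [hint, lintegral_zero,
      show Finset.Icc 1 ([] : List Bool).length = ∅ from Finset.Icc_eq_empty (by simp),
      Finset.filter_empty, Finset.sum_empty]
  -- main case
  have hk : 0 < A.length := Nat.pos_of_ne_zero hk0
  have hpbne : ∀ b : Bool, (if b then p else 1 - p) ≠ 0 := by
    intro b; cases b
    · simpa using (tsub_pos_of_lt hp1).ne'
    · simpa using hp0.ne'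
  have hpble : ∀ b : Bool, (if b then p else 1 - p) ≤ 1 := by
    intro b; cases b
    · simpa using tsub_le_self
    · simpa using hp1.le
  have hpbtop : ∀ b : Bool, (if b then p else 1 - p) ≠ ⊤ :=
    fun b => (lt_of_le_of_lt (hpble b) ENNReal.one_lt_top).ne
  set π := ∏ i ∈ Finset.range A.length, (if A.getD i true then p else 1 - p) with hπdef
  have hπne : π ≠ 0 := Finset.prod_ne_zero_iff.mpr fun i _ => hpbne _
  have hπle : π ≤ 1 := Finset.prod_le_one (fun _ _ => zero_le) (fun i _ => hpble _)
  have hπtop : π ≠ ⊤ := (lt_of_le_of_lt hπle ENNReal.one_lt_top).ne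
  -- measure of the occurrence block
  have hBmeasure : ∀ n : ℕ, μ (sOcc A X (n + A.length)) = π := by
    intro n
    have h1 : sOcc A X (n + A.length)
        = {ω | ∀ j ∈ (Finset.range A.length).image (n + ·), X j ω = A.getD (j - n) true} := by
      ext ω
      rw [mem_sOcc_add]
      constructor
      · intro h j hj
        obtain ⟨i, hi, rfl⟩ := Finset.mem_image.mp hj
        simpa using h i (Finset.mem_range.mp hi)
      · intro h i hi
        have h2 := h (n + i) (Finset.mem_image.mpr ⟨i, Finset.mem_range.mpr hi, rfl⟩)
        simpa using h2
    rw [h1, solovev_meas_cyl hmeas hindep hlaw (ne_top_of_lt hp1),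
      Finset.prod_image (fun x _ y _ hxy => by omega)]
    exact Finset.prod_congr rfl fun i _ => by simp
  -- measure of a partial block
  have hCmeasure : ∀ n m : ℕ,
      μ {ω | ∀ i ∈ Finset.Ico m A.length, X (n + i) ω = A.getD i true}
        = ∏ i ∈ Finset.Ico m A.length, (if A.getD i true then p else 1 - p) := by
    intro n m
    have h1 : {ω : Ω | ∀ i ∈ Finset.Ico m A.length, X (n + i) ω = A.getD i true}
        = {ω | ∀ j ∈ (Finset.Ico m A.length).image (n + ·), X j ω = A.getD (j - n) true} := by
      ext ω
      constructor
      · intro h j hj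
        obtain ⟨i, hi, rfl⟩ := Finset.mem_image.mp hj
        simpa using h i hi
      · intro h i hi
        have h2 := h (n + i) (Finset.mem_image.mpr ⟨i, hi, rfl⟩)
        simpa using h2
    rw [h1, solovev_meas_cyl hmeas hindep hlaw (ne_top_of_lt hp1),
      Finset.prod_image (fun x _ y _ hxy => by omega)]
    exact Finset.prod_congr rfl fun i _ => by simp
  -- independence : no-occurrence past and a fresh block
  have hdisjGB : ∀ n : ℕ, Disjoint (Finset.range n) ((Finset.range A.length).image (n + ·)) := by
    intro n
    rw [Finset.disjoint_left]
    intro x hx hximg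
    obtain ⟨i, -, rfl⟩ := Finset.mem_image.mp hximg
    exact absurd (Finset.mem_range.mp hx) (by omega)
  have hGB : ∀ n, μ (sG A X n ∩ sOcc A X (n + A.length)) = μ (sG A X n) * π := by
    intro n
    rw [← hBmeasure n]
    exact solovev_indep_blocks hmeas hindep _ _ (hdisjGB n) _ _
      (fun ω ω' hag => sG_det A X hag)
      (fun ω ω' hag => sOcc_det_block A X hag)
  have hGBc : ∀ n, μ (sG A X n ∩ (sOcc A X (n + A.length))ᶜ) = μ (sG A X n) * (1 - π) := by
    intro n
    have hcompl : μ ((sOcc A X (n + A.length))ᶜ) = 1 - π := by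
      rw [prob_compl_eq_one_sub (sOcc_meas A X hmeas _), hBmeasure n]
    rw [← hcompl]
    exact solovev_indep_blocks hmeas hindep _ _ (hdisjGB n) _ _
      (fun ω ω' hag => sG_det A X hag)
      (fun ω ω' hag h hc => h (sOcc_det_block A X (fun i hi => (hag i hi).symm) hc))
  have hFC : ∀ n m : ℕ,
      μ (sF A X (n + m) ∩ {ω | ∀ i ∈ Finset.Ico m A.length, X (n + i) ω = A.getD i true})
        = μ (sF A X (n + m)) * ∏ i ∈ Finset.Ico m A.length, (if A.getD i true then p else 1 - p) := by
    intro n m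
    rw [← hCmeasure n m]
    refine solovev_indep_blocks hmeas hindep (Finset.range (n + m))
      ((Finset.Ico m A.length).image (n + ·)) ?_ _ _
      (fun ω ω' hag => sF_det A X hag)
      (fun ω ω' hag => sC_det A X hag)
    rw [Finset.disjoint_left]
    intro x hx hximg
    obtain ⟨i, hi, rfl⟩ := Finset.mem_image.mp hximg
    have := Finset.mem_Ico.mp hi
    exact absurd (Finset.mem_range.mp hx) (by omega)
  -- the per-n identity
  have perN : ∀ n, μ (sG A X n) * π =
      ∑ m ∈ (Finset.Icc 1 A.length).filter (fun m => A.drop (A.length - m) = A.take m),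
        μ (sF A X (n + m)) * ∏ i ∈ Finset.Ico m A.length, (if A.getD i true then p else 1 - p) := by
    intro n
    rw [← hGB n, sDecomp A X hk n, measure_biUnion_finset ?_ ?_]
    · rw [Finset.sum_filter]
      refine Finset.sum_congr rfl fun m hm => ?_
      obtain ⟨hm1, hmk⟩ := Finset.mem_Icc.mp hm
      by_cases hov : A.drop (A.length - m) = A.take m
      · rw [if_pos hov, sOverlap A X hm1 hmk hov n, hFC n m]
      · rw [if_neg hov, sEmpty A X hm1 hmk hov n, measure_empty]
    · intro m hm m' hm' hne
      have hd : Disjoint (sF A X (n + m)) (sF A X (n + m')) := by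
        rcases Nat.lt_or_ge m m' with h | h
        · exact sF_disjoint A X (by omega)
        · exact (sF_disjoint A X (by omega : n + m' < n + m)).symm
      exact hd.mono Set.inter_subset_left Set.inter_subset_left
    · exact fun m _ => (sF_meas A X hmeas _).inter (sOcc_meas A X hmeas _)
  -- the pattern occurs almost surely
  have hnever : μ (⋂ n, sG A X n) = 0 := by
    have hstep : ∀ n, μ (sG A X (n + A.length)) ≤ μ (sG A X n) * (1 - π) := fun n =>
      le_trans (measure_mono (sG_subset A X n)) (le_of_eq (hGBc n))
    have hiter : ∀ j : ℕ, μ (sG A X (j * A.length)) ≤ (1 - π) ^ j := by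
      intro j
      induction j with
      | zero => simpa using prob_le_one
      | succ j ih =>
        have harith : (j + 1) * A.length = j * A.length + A.length := by ring
        rw [harith, pow_succ]
        exact le_trans (hstep _) (mul_le_mul_left ih _)
    have hlim : Filter.Tendsto (fun j : ℕ => (1 - π) ^ j) Filter.atTop (nhds 0) :=
      ENNReal.tendsto_pow_atTop_nhds_zero_of_lt_one
        (ENNReal.sub_lt_self ENNReal.one_ne_top one_ne_zero hπne)
    have hle : ∀ j : ℕ, μ (⋂ n, sG A X n) ≤ (1 - π) ^ j := fun j =>
      le_trans (measure_mono (Set.iInter_subset _ _)) (hiter j)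
    exact le_antisymm (ge_of_tendsto' hlim hle) zero_le
  -- total mass of the first-occurrence decomposition
  have hFtotal : ∑' t : ℕ, μ (sF A X t) = 1 := by
    have hdisj : Pairwise (Function.onFun Disjoint fun t => sF A X t) := by
      intro t t' hne
      rcases hne.lt_or_gt with h | h
      · exact sF_disjoint A X h
      · exact (sF_disjoint A X h).symm
    rw [← measure_iUnion hdisj (fun t => sF_meas A X hmeas t), sUnion_F A X,
      prob_compl_eq_one_sub (MeasurableSet.iInter fun n => sG_meas A X hmeas n), hnever,
      tsub_zero]
  have hFshift : ∀ m : ℕ, m ≤ A.length → ∑' n : ℕ, μ (sF A X (n + m)) = 1 := by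
    intro m hm
    have h0 : ∑ t ∈ Finset.range m, μ (sF A X t) = 0 := by
      refine Finset.sum_eq_zero fun t ht => ?_
      rw [sF_empty A X (show t < A.length by
        have := Finset.mem_range.mp ht; omega)]
      exact measure_empty
    calc ∑' n : ℕ, μ (sF A X (n + m))
        = (∑ t ∈ Finset.range m, μ (sF A X t)) + ∑' n : ℕ, μ (sF A X (n + m)) := by
          rw [h0, zero_add]
      _ = ∑' t : ℕ, μ (sF A X t) := ENNReal.summable.sum_add_tsum_nat_add'
      _ = 1 := hFtotal
  -- summing the per-n identity
  have hsum : (∑' n : ℕ, μ (sG A X n)) * π =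
      ∑ m ∈ (Finset.Icc 1 A.length).filter (fun m => A.drop (A.length - m) = A.take m),
        ∏ i ∈ Finset.Ico m A.length, (if A.getD i true then p else 1 - p) := by
    rw [← ENNReal.tsum_mul_right, tsum_congr perN, Summable.tsum_finsetSum (fun m _ => ENNReal.summable)]
    refine Finset.sum_congr rfl fun m hm => ?_
    have hmk : m ≤ A.length := (Finset.mem_Icc.mp (Finset.mem_filter.mp hm).1).2
    rw [ENNReal.tsum_mul_right, hFshift m hmk, one_mul]
  -- the integral equals the sum of tail probabilities
  have hInt : ∫⁻ ω, hitTime A (fun n => X n ω) ∂μ = ∑' n : ℕ, μ (sG A X n) := by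
    have hpt : ∀ ω : Ω, hitTime A (fun n => X n ω)
        = ∑' n : ℕ, Set.indicator (sG A X n) (fun _ => (1 : ℝ≥0∞)) ω := by
      intro ω
      rw [solovev_hitTime_eq_tsum]
      refine tsum_congr fun n => ?_
      by_cases hc : ∀ t ≤ n, ¬ occursAt A (fun i => X i ω) t
      · have h1 : n ∈ {m : ℕ | ∀ t ≤ m, ¬ occursAt A (fun i => X i ω) t} := hc
        have h2 : ω ∈ sG A X n := hc
        rw [Set.indicator_of_mem h1, Set.indicator_of_mem h2]
        rfl
      · have h1 : n ∉ {m : ℕ | ∀ t ≤ m, ¬ occursAt A (fun i => X i ω) t} := hc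
        have h2 : ω ∉ sG A X n := hc
        rw [Set.indicator_of_notMem h1, Set.indicator_of_notMem h2]
    rw [lintegral_congr hpt,
      lintegral_tsum (fun n => (measurable_const.indicator (sG_meas A X hmeas n)).aemeasurable)]
    exact tsum_congr fun n => by
      rw [lintegral_indicator_const (sG_meas A X hmeas n), one_mul]
  -- rewrite the target summands
  have hterm : ∀ m ∈ (Finset.Icc 1 A.length).filter
      (fun m => A.drop (A.length - m) = A.take m),
      (∏ i ∈ Finset.Ico m A.length, (if A.getD i true then p else 1 - p))
        = (((A.take m).map fun a => (if a then p else 1 - p)⁻¹).prod) * π := by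
    intro m hm
    obtain ⟨hmIcc, hov⟩ := Finset.mem_filter.mp hm
    obtain ⟨hm1, hmk⟩ := Finset.mem_Icc.mp hmIcc
    rw [solovev_take_map_prod A _ m hmk, hπdef,
      ← Finset.prod_range_mul_prod_Ico (fun i => if A.getD i true then p else 1 - p) hmk,
      ← mul_assoc, ← Finset.prod_mul_distrib]
    have hone : ∏ i ∈ Finset.range m,
        ((if A.getD i true then p else 1 - p)⁻¹ * (if A.getD i true then p else 1 - p)) = 1 :=
      Finset.prod_eq_one fun i _ => ENNReal.inv_mul_cancel (hpbne _) (hpbtop _)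
    rw [hone, one_mul]
  -- final assembly
  have hπinv : π * π⁻¹ = 1 := ENNReal.mul_inv_cancel hπne hπtop
  rw [hInt]
  calc (∑' n : ℕ, μ (sG A X n))
      = (∑' n : ℕ, μ (sG A X n)) * π * π⁻¹ := by rw [mul_assoc, hπinv, mul_one]
    _ = (∑ m ∈ (Finset.Icc 1 A.length).filter
          (fun m => A.drop (A.length - m) = A.take m),
          ∏ i ∈ Finset.Ico m A.length, (if A.getD i true then p else 1 - p)) * π⁻¹ := by
        rw [hsum]
    _ = (∑ m ∈ (Finset.Icc 1 A.length).filter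
          (fun m => A.drop (A.length - m) = A.take m),
          (((A.take m).map fun a => (if a then p else 1 - p)⁻¹).prod) * π) * π⁻¹ := by
        rw [Finset.sum_congr rfl hterm]
    _ = (∑ m ∈ (Finset.Icc 1 A.length).filter
          (fun m => A.drop (A.length - m) = A.take m),
          ((A.take m).map fun a => (if a then p else 1 - p)⁻¹).prod) * π * π⁻¹ := by
        rw [← Finset.sum_mul]
    _ = ∑ m ∈ (Finset.Icc 1 A.length).filter
          (fun m => A.drop (A.length - m) = A.take m),
          ((A.take m).map fun a => (if a then p else 1 - p)⁻¹).prod := by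
        rw [mul_assoc, hπinv, mul_one]
end
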